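/- arXiv:2410.21114 — 5 statements merged into one kernel-verified Lean document; each statement's English description precedes it below -/
import Mathlib

section
/- (Critical lifespan of a characteristic under power-law degeneracy and data behavior.) Let x₀, c ∈ ℝ and let constants α ≥ 0, N > 0, γ > 0, C₀ < 0 satisfy γ·(1+α) = 1. Assume the one-sided asymptotics: f''(u)/(u−c)^α → N as u → c from the right, and (φ(x₀+l) − c)/(sgn(l)·|l|^γ) → C₀ as l → 0 from the left (equivalently, (c − φ(x₀+l))/|l|^γ → C₀ as l → 0⁻). Set t̄ := (γ·N·|C₀|^{1+α})^{−1} ∈ (0,∞). Then: (a) for every t ∈ (0, t̄) there exists δ > 0 such that for all u ∈ (c, c+δ), ∫_{x₀}^{x₀ + t(f'(c) − f'(u))} (φ(ξ) − c) dξ > − t · ∫_c^u (s − c)·f''(s) ds; (b) for every t > t̄ there exists δ > 0 such that for all u ∈ (c, c+δ), ∫_{x₀}^{x₀ + t(f'(c) − f'(u))} (φ(ξ) − c) dξ < − t · ∫_c^u (s − c)·f''(s) ds. (All integrals are signed interval integrals; thus t̄ is the critical time at which the compression of characteristics emitting from the left of x₀ overtakes the ray x = x₀ + t·f'(c).) 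-/
open MeasureTheory Filter Set

set_option maxHeartbeats 1000000

private lemma my_int_mono (a b : ℝ) (hab : a ≤ b) (f g : ℝ → ℝ)
    (hf : IntervalIntegrable f volume a b) (hg : IntervalIntegrable g volume a b)
    (h : ∀ x ∈ Ioo a b, f x ≤ g x) : ∫ x in a..b, f x ≤ ∫ x in a..b, g x := by
  apply intervalIntegral.integral_mono_ae_restrict hab hf hg
  rw [← Measure.restrict_congr_set Ioo_ae_eq_Icc]
  exact (ae_restrict_mem measurableSet_Ioo).mono h

private lemma my_int_rpow_right (c u p : ℝ) (hp : -1 < p) :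
    ∫ s in c..u, (s - c) ^ p = (u - c) ^ (p + 1) / (p + 1) := by
  rw [intervalIntegral.integral_comp_sub_right (fun x => x ^ p) c,
    integral_rpow (Or.inl hp), sub_self, Real.zero_rpow (by linarith), sub_zero]

private lemma my_int_rpow_left (x₀ l p : ℝ) (hp : -1 < p) :
    ∫ ξ in (x₀ + l)..x₀, (x₀ - ξ) ^ p = (-l) ^ (p + 1) / (p + 1) := by
  rw [intervalIntegral.integral_comp_sub_left (fun x => x ^ p) x₀]
  rw [sub_self, show x₀ - (x₀ + l) = -l by ring,
    integral_rpow (Or.inl hp), Real.zero_rpow (by linarith), sub_zero]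

private lemma my_rpow_cont (c p : ℝ) (hp : 0 ≤ p) : Continuous (fun s : ℝ => (s - c) ^ p) := by
  rw [continuous_iff_continuousAt]
  intro s
  exact (Real.continuousAt_rpow_const _ _ (Or.inr hp)).comp
    ((continuous_id.sub continuous_const).continuousAt)

private lemma my_rpow_cont' (x₀ p : ℝ) (hp : 0 ≤ p) : Continuous (fun ξ : ℝ => (x₀ - ξ) ^ p) := by
  rw [continuous_iff_continuousAt]
  intro s
  exact (Real.continuousAt_rpow_const _ _ (Or.inr hp)).comp
    ((continuous_const.sub continuous_id).continuousAt)

/-- critical lifespan of a characteristic under power-law degeneracy of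
the flux and power-law behavior of the data from the left of `x₀`. -/
theorem stmt11_critical_lifespan
    (f φ : ℝ → ℝ) (M : ℝ)
    (hf : ContDiff ℝ 2 f)
    (hconv : ∀ u : ℝ, 0 ≤ deriv (deriv f) u)
    (hdeg : volume {u : ℝ | deriv (deriv f) u = 0} = 0)
    (hφmeas : Measurable φ)
    (hφbdd : ∀ x : ℝ, |φ x| ≤ M)
    (x₀ c α N γ C₀ : ℝ)
    (hα : 0 ≤ α) (hN : 0 < N) (hγ : 0 < γ) (hC₀ : C₀ < 0)
    (hγα : γ * (1 + α) = 1)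
    (hflux : Tendsto (fun u : ℝ => deriv (deriv f) u / (u - c) ^ α)
      (nhdsWithin c (Set.Ioi c)) (nhds N))
    (hdata : Tendsto (fun l : ℝ => (c - φ (x₀ + l)) / |l| ^ γ)
      (nhdsWithin 0 (Set.Iio 0)) (nhds C₀)) :
    (∀ t : ℝ, 0 < t → t < (γ * N * |C₀| ^ (1 + α))⁻¹ →
      ∃ δ : ℝ, 0 < δ ∧ ∀ u ∈ Set.Ioo c (c + δ),
        (∫ ξ in x₀..(x₀ + t * (deriv f c - deriv f u)), (φ ξ - c))
          > -(t * (∫ s in c..u, (s - c) * deriv (deriv f) s))) ∧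
    (∀ t : ℝ, (γ * N * |C₀| ^ (1 + α))⁻¹ < t →
      ∃ δ : ℝ, 0 < δ ∧ ∀ u ∈ Set.Ioo c (c + δ),
        (∫ ξ in x₀..(x₀ + t * (deriv f c - deriv f u)), (φ ξ - c))
          < -(t * (∫ s in c..u, (s - c) * deriv (deriv f) s))) := by
  rw [show (2 : WithTop ℕ∞) = 1 + 1 by norm_num] at hf
  have h1 : ContDiff ℝ 1 (deriv f) := (contDiff_succ_iff_deriv.mp hf).2.2
  have hdcont : Continuous (deriv (deriv f)) := (contDiff_one_iff_deriv.mp h1).2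
  have hddiff : Differentiable ℝ (deriv f) := h1.differentiable one_ne_zero
  have hφint : ∀ a b : ℝ, IntervalIntegrable (fun ξ => φ ξ - c) volume a b := by
    intro a b
    apply IntervalIntegrable.sub _ intervalIntegrable_const
    rw [intervalIntegrable_iff]
    exact Measure.integrableOn_of_bounded (measure_Ioc_lt_top.ne) hφmeas.aestronglyMeasurable
      (ae_of_all _ fun x => by simpa using hφbdd x)
  have hftc : ∀ u : ℝ, ∫ s in c..u, deriv (deriv f) s = deriv f u - deriv f c := fun u =>
    intervalIntegral.integral_deriv_eq_sub (fun x _ => hddiff x) (hdcont.intervalIntegrable _ _)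
  have habs : |C₀| = -C₀ := abs_of_neg hC₀
  have hC₀pos : 0 < |C₀| := abs_pos.mpr hC₀.ne
  have hα1 : (0:ℝ) < α + 1 := by linarith
  have hα1' : (-1:ℝ) < α := by linarith
  have hα2 : (0:ℝ) < α + 2 := by linarith
  have hγ1 : (0:ℝ) < γ + 1 := by linarith
  have hγeq : γ = 1 / (α + 1) := by field_simp; linear_combination hγα
  have hγ2 : γ * (α + 2) = γ + 1 := by linear_combination hγα
  have hCpow : 0 < |C₀| ^ (1 + α) := Real.rpow_pos_of_pos hC₀pos _
  -- flux eps-delta bounds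
  have hfluxb : ∀ ε : ℝ, 0 < ε → ∃ δ : ℝ, 0 < δ ∧ ∀ s ∈ Ioo c (c + δ),
      (N - ε) * (s - c) ^ α ≤ deriv (deriv f) s ∧ deriv (deriv f) s ≤ (N + ε) * (s - c) ^ α := by
    intro ε hε
    obtain ⟨δ, hδ, H⟩ := Metric.tendsto_nhdsWithin_nhds.mp hflux ε hε
    refine ⟨δ, hδ, fun s hs => ?_⟩
    have hsc : 0 < s - c := by linarith [hs.1]
    have hd : dist s c < δ := by rw [Real.dist_eq, abs_of_pos hsc]; linarith [hs.2]
    have hH := H hs.1 hd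
    rw [Real.dist_eq, abs_lt] at hH
    have hp : 0 < (s - c) ^ α := Real.rpow_pos_of_pos hsc α
    constructor
    · have h1 : N - ε < deriv (deriv f) s / (s - c) ^ α := by linarith [hH.1]
      have := (lt_div_iff₀ hp).mp h1
      linarith
    · have h1 : deriv (deriv f) s / (s - c) ^ α < N + ε := by linarith [hH.2]
      have := (div_lt_iff₀ hp).mp h1
      linarith
  -- data eps-delta bounds
  have hdatab : ∀ ε : ℝ, 0 < ε → ∃ δ : ℝ, 0 < δ ∧ ∀ l ∈ Ioo (-δ) (0:ℝ),
      (|C₀| - ε) * (-l) ^ γ ≤ φ (x₀ + l) - c ∧ φ (x₀ + l) - c ≤ (|C₀| + ε) * (-l) ^ γ := by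
    intro ε hε
    obtain ⟨δ, hδ, H⟩ := Metric.tendsto_nhdsWithin_nhds.mp hdata ε hε
    refine ⟨δ, hδ, fun l hl => ?_⟩
    have hl0 : l < 0 := hl.2
    have hd : dist l 0 < δ := by rw [Real.dist_eq, sub_zero, abs_of_neg hl0]; linarith [hl.1]
    have hH := H hl0 hd
    rw [Real.dist_eq, abs_lt, abs_of_neg hl0] at hH
    have hp : 0 < (-l) ^ γ := Real.rpow_pos_of_pos (by linarith) γ
    constructor
    · have h1 : (c - φ (x₀ + l)) / (-l) ^ γ < C₀ + ε := by linarith [hH.2]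
      have := (div_lt_iff₀ hp).mp h1
      nlinarith [habs]
    · have h1 : C₀ - ε < (c - φ (x₀ + l)) / (-l) ^ γ := by linarith [hH.1]
      have := (lt_div_iff₀ hp).mp h1
      nlinarith [habs]
  -- bounds for the A-integral and B-integral, given flux bounds up to δ₁
  have hABbounds : ∀ ε δ₁ : ℝ, 0 < ε → ε < N → 0 < δ₁ →
      (∀ s ∈ Ioo c (c + δ₁), (N - ε) * (s - c) ^ α ≤ deriv (deriv f) s ∧
        deriv (deriv f) s ≤ (N + ε) * (s - c) ^ α) →
      ∀ u ∈ Ioo c (c + δ₁),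
        ((N - ε) * ((u - c) ^ (α+1) / (α+1)) ≤ (∫ s in c..u, deriv (deriv f) s) ∧
         (∫ s in c..u, deriv (deriv f) s) ≤ (N + ε) * ((u - c) ^ (α+1) / (α+1))) ∧
        ((N - ε) * ((u - c) ^ (α+2) / (α+2)) ≤ (∫ s in c..u, (s - c) * deriv (deriv f) s) ∧
         (∫ s in c..u, (s - c) * deriv (deriv f) s) ≤ (N + ε) * ((u - c) ^ (α+2) / (α+2))) := by
    intro ε δ₁ hε hεN hδ₁ Hflux u hu
    have hx : 0 < u - c := by linarith [hu.1]
    have hcu : c ≤ u := by linarith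
    have hI1 : IntervalIntegrable (fun s => deriv (deriv f) s) volume c u :=
      hdcont.intervalIntegrable _ _
    have hI2 : ∀ K : ℝ, IntervalIntegrable (fun s => K * (s - c) ^ α) volume c u := fun K =>
      (continuous_const.mul (my_rpow_cont c α hα)).intervalIntegrable _ _
    have hI3 : IntervalIntegrable (fun s => (s - c) * deriv (deriv f) s) volume c u :=
      ((continuous_id.sub continuous_const).mul hdcont).intervalIntegrable _ _
    have hI4 : ∀ K : ℝ, IntervalIntegrable (fun s => K * (s - c) ^ (α+1)) volume c u := fun K =>
      (continuous_const.mul (my_rpow_cont c (α+1) (by linarith))).intervalIntegrable _ _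
    have hmem : ∀ s, s ∈ Ioo c u → s ∈ Ioo c (c + δ₁) := fun s hs =>
      ⟨hs.1, by linarith [hs.2, hu.2]⟩
    refine ⟨⟨?_, ?_⟩, ?_, ?_⟩
    · have := my_int_mono c u hcu _ _ (hI2 (N - ε)) hI1
        (fun s hs => (Hflux s (hmem s hs)).1)
      rwa [intervalIntegral.integral_const_mul, my_int_rpow_right c u α hα1'] at this
    · have := my_int_mono c u hcu _ _ hI1 (hI2 (N + ε))
        (fun s hs => (Hflux s (hmem s hs)).2)
      rwa [intervalIntegral.integral_const_mul, my_int_rpow_right c u α hα1'] at this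
    · have := my_int_mono c u hcu _ _ (hI4 (N - ε)) hI3 (fun s hs => ?_)
      · rwa [intervalIntegral.integral_const_mul, my_int_rpow_right c u (α+1) (by linarith),
          show α + 1 + 1 = α + 2 by ring] at this
      · have hsc : 0 < s - c := by linarith [hs.1]
        have h2 := (Hflux s (hmem s hs)).1
        rw [Real.rpow_add_one hsc.ne' α]
        nlinarith [h2, hsc]
    · have := my_int_mono c u hcu _ _ hI3 (hI4 (N + ε)) (fun s hs => ?_)
      · rwa [intervalIntegral.integral_const_mul, my_int_rpow_right c u (α+1) (by linarith),
          show α + 1 + 1 = α + 2 by ring] at this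
      · have hsc : 0 < s - c := by linarith [hs.1]
        have h2 := (Hflux s (hmem s hs)).2
        rw [Real.rpow_add_one hsc.ne' α]
        nlinarith [h2, hsc]
  -- bounds for the data integral
  have hDbounds : ∀ ε δ₂ : ℝ, 0 < ε →
      (∀ l ∈ Ioo (-δ₂) (0:ℝ), (|C₀| - ε) * (-l) ^ γ ≤ φ (x₀ + l) - c ∧
        φ (x₀ + l) - c ≤ (|C₀| + ε) * (-l) ^ γ) →
      ∀ r : ℝ, 0 < r → r < δ₂ →
        (-((|C₀| + ε) * (r ^ (γ+1) / (γ+1))) ≤ ∫ ξ in x₀..(x₀ + -r), (φ ξ - c)) ∧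
        ((∫ ξ in x₀..(x₀ + -r), (φ ξ - c)) ≤ -((|C₀| - ε) * (r ^ (γ+1) / (γ+1)))) := by
    intro ε δ₂ hε Hdata r hr hrδ
    have hIφ := hφint (x₀ + -r) x₀
    have hIγ : ∀ K : ℝ, IntervalIntegrable (fun ξ => K * (x₀ - ξ) ^ γ) volume (x₀ + -r) x₀ :=
      fun K => (continuous_const.mul (my_rpow_cont' x₀ γ hγ.le)).intervalIntegrable _ _
    have hab : x₀ + -r ≤ x₀ := by linarith
    have hptw : ∀ ξ ∈ Ioo (x₀ + -r) x₀,
        (|C₀| - ε) * (x₀ - ξ) ^ γ ≤ φ ξ - c ∧ φ ξ - c ≤ (|C₀| + ε) * (x₀ - ξ) ^ γ := by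
      intro ξ hξ
      have hmem : ξ - x₀ ∈ Ioo (-δ₂) (0:ℝ) := ⟨by linarith [hξ.1], by linarith [hξ.2]⟩
      have H := Hdata (ξ - x₀) hmem
      rw [show x₀ + (ξ - x₀) = ξ by ring, show -(ξ - x₀) = x₀ - ξ by ring] at H
      exact H
    constructor
    · rw [intervalIntegral.integral_symm]
      apply neg_le_neg
      have := my_int_mono (x₀ + -r) x₀ hab _ _ hIφ (hIγ (|C₀| + ε)) (fun ξ hξ => (hptw ξ hξ).2)
      rwa [intervalIntegral.integral_const_mul, my_int_rpow_left x₀ (-r) γ (by linarith),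
        neg_neg] at this
    · rw [intervalIntegral.integral_symm]
      apply neg_le_neg
      have := my_int_mono (x₀ + -r) x₀ hab _ _ (hIγ (|C₀| - ε)) hIφ (fun ξ hξ => (hptw ξ hξ).1)
      rwa [intervalIntegral.integral_const_mul, my_int_rpow_left x₀ (-r) γ (by linarith),
        neg_neg] at this
  constructor
  · -- part (a)
    intro t ht htc
    -- choose ε
    obtain ⟨ε, hε0, hεN, hεC, hεcond⟩ : ∃ ε : ℝ, 0 < ε ∧ ε < N ∧ ε < |C₀| ∧
        (|C₀| + ε) * (t * (N + ε) * γ) ^ (γ + 1) / (γ + 1) < t * (N - ε) / (α + 2) := by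
      have hP : 0 < t * N * γ := by positivity
      have hprod : t * N * γ * |C₀| ^ (1 + α) < 1 := by
        have h0 : 0 < γ * N * |C₀| ^ (1 + α) := by positivity
        calc t * N * γ * |C₀| ^ (1 + α) = t * (γ * N * |C₀| ^ (1+α)) := by ring
        _ < (γ * N * |C₀| ^ (1 + α))⁻¹ * (γ * N * |C₀| ^ (1+α)) := mul_lt_mul_of_pos_right htc h0
        _ = 1 := inv_mul_cancel₀ h0.ne'
      have hlt : t * N * γ < (|C₀| ^ (1 + α))⁻¹ := by
        rw [inv_eq_one_div]; exact (lt_div_iff₀ hCpow).mpr hprod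
      have hkey : (t * N * γ) ^ γ * |C₀| < 1 := by
        have h1 : (t * N * γ) ^ γ < ((|C₀| ^ (1 + α))⁻¹) ^ γ := Real.rpow_lt_rpow hP.le hlt hγ
        have h2 : ((|C₀| ^ (1 + α))⁻¹ : ℝ) ^ γ = (|C₀|)⁻¹ := by
          rw [Real.inv_rpow hCpow.le, ← Real.rpow_mul hC₀pos.le,
            show (1+α)*γ = 1 by linear_combination hγα, Real.rpow_one]
        rw [h2] at h1
        have := mul_lt_mul_of_pos_right h1 hC₀pos
        rwa [inv_mul_cancel₀ hC₀pos.ne'] at this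
      have hF0 : |C₀| * (t * N * γ) ^ (γ + 1) / (γ + 1) < t * N / (α + 2) := by
        have hQ : |C₀| * (t * N * γ) ^ (γ + 1) < t * N * γ := by
          rw [Real.rpow_add_one hP.ne' γ]
          nlinarith [Real.rpow_pos_of_pos hP γ]
        have heq : t * N / (α + 2) = t * N * γ / (γ + 1) := by
          rw [← hγ2]; field_simp
        rw [heq]
        exact div_lt_div_of_pos_right hQ hγ1
      set F : ℝ → ℝ := fun ε => (|C₀| + ε) * (t * (N + ε) * γ) ^ (γ + 1) / (γ + 1)
        - t * (N - ε) / (α + 2) with hFdef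
      have hFc : ContinuousAt F 0 := by
        apply ContinuousAt.sub
        · apply ContinuousAt.div_const
          apply ContinuousAt.mul (by fun_prop)
          exact ContinuousAt.rpow_const (by fun_prop) (Or.inr (by linarith))
        · fun_prop
      have hFneg : F 0 < 0 := by
        simp only [hFdef, add_zero, sub_zero]
        linarith [hF0]
      have hev : ∀ᶠ ε in nhdsWithin (0:ℝ) (Ioi 0), F ε < 0 ∧ ε < N ∧ ε < |C₀| :=
        eventually_nhdsWithin_of_eventually_nhds
          ((hFc.eventually_lt_const hFneg).and
            ((eventually_lt_nhds hN).and (eventually_lt_nhds hC₀pos)))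
      obtain ⟨ε, ⟨hε1, hε2, hε3⟩, hεm⟩ := (hev.and self_mem_nhdsWithin).exists
      simp only [hFdef, sub_neg] at hε1
      exact ⟨ε, hεm, hε2, hε3, hε1⟩
    obtain ⟨δ₁, hδ₁, Hflux⟩ := hfluxb ε hε0
    obtain ⟨δ₂, hδ₂, Hdata⟩ := hdatab ε hε0
    have hK : 0 < t * (N + ε) * γ := by positivity
    have hδr : 0 < (δ₂ / (t * (N + ε) * γ)) ^ γ :=
      Real.rpow_pos_of_pos (by positivity) γ
    refine ⟨min δ₁ ((δ₂ / (t * (N + ε) * γ)) ^ γ), lt_min hδ₁ hδr, fun u hu => ?_⟩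
    have hx : 0 < u - c := by linarith [hu.1]
    have hu1 : u ∈ Ioo c (c + δ₁) :=
      ⟨hu.1, by have := min_le_left δ₁ ((δ₂ / (t * (N + ε) * γ)) ^ γ); linarith [hu.2]⟩
    have hux : u - c < (δ₂ / (t * (N + ε) * γ)) ^ γ := by
      have := min_le_right δ₁ ((δ₂ / (t * (N + ε) * γ)) ^ γ); linarith [hu.2]
    obtain ⟨⟨hAlb, hAub⟩, ⟨hBlb, hBub⟩⟩ := hABbounds ε δ₁ hε0 hεN hδ₁ Hflux u hu1
    set A := ∫ s in c..u, deriv (deriv f) s with hAdef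
    have hApos : 0 < A :=
      lt_of_lt_of_le (mul_pos (by linarith) (div_pos (Real.rpow_pos_of_pos hx _) hα1)) hAlb
    have htA : 0 < t * A := mul_pos ht hApos
    have hlA : t * A ≤ (t * (N + ε) * γ) * (u - c) ^ (α+1) := by
      have h1 : t * A ≤ t * ((N + ε) * ((u - c) ^ (α+1) / (α+1))) :=
        mul_le_mul_of_nonneg_left hAub ht.le
      have h2 : t * ((N + ε) * ((u - c) ^ (α+1) / (α+1)))
          = (t * (N + ε) * γ) * (u - c) ^ (α+1) := by rw [hγeq]; ring
      linarith
    have hlA' : (t * (N + ε) * γ) * (u - c) ^ (α+1) < δ₂ := by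
      have h1 : (u - c) ^ (α+1) < ((δ₂ / (t * (N + ε) * γ)) ^ γ) ^ (α+1) :=
        Real.rpow_lt_rpow hx.le hux hα1
      have h2 : ((δ₂ / (t * (N + ε) * γ)) ^ γ) ^ (α+1) = δ₂ / (t * (N + ε) * γ) := by
        rw [← Real.rpow_mul (by positivity), show γ * (α+1) = 1 by linear_combination hγα,
          Real.rpow_one]
      rw [h2] at h1
      calc (t * (N + ε) * γ) * (u - c) ^ (α+1)
          < (t * (N + ε) * γ) * (δ₂ / (t * (N + ε) * γ)) := by
            exact mul_lt_mul_of_pos_left h1 hK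
      _ = δ₂ := by field_simp
    have hbnd : x₀ + t * (deriv f c - deriv f u) = x₀ + -(t * A) := by
      have hA' : A = deriv f u - deriv f c := hftc u
      rw [hA']; ring
    rw [hbnd]
    obtain ⟨hD, _⟩ := hDbounds ε δ₂ hε0 Hdata (t * A) htA (by linarith)
    -- combine
    have hxp2 : 0 < (u - c) ^ (α+2) := Real.rpow_pos_of_pos hx _
    have hpow : (t * A) ^ (γ+1) ≤ (t * (N + ε) * γ) ^ (γ+1) * (u - c) ^ (α+2) := by
      have h1 : (t * A) ^ (γ+1) ≤ ((t * (N + ε) * γ) * (u - c) ^ (α+1)) ^ (γ+1) :=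
        Real.rpow_le_rpow htA.le hlA (by linarith)
      have h2 : ((t * (N + ε) * γ) * (u - c) ^ (α+1)) ^ (γ+1)
          = (t * (N + ε) * γ) ^ (γ+1) * (u - c) ^ (α+2) := by
        rw [Real.mul_rpow hK.le (Real.rpow_pos_of_pos hx _).le, ← Real.rpow_mul hx.le,
          show (α+1)*(γ+1) = α+2 by linear_combination hγα]
      linarith
    have hc1 : 0 ≤ (|C₀| + ε) / (γ + 1) := by positivity
    have h₂ : (|C₀| + ε) / (γ+1) * ((t * A) ^ (γ+1))
        ≤ (|C₀| + ε) / (γ+1) * ((t * (N + ε) * γ) ^ (γ+1) * (u - c) ^ (α+2)) :=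
      mul_le_mul_of_nonneg_left hpow hc1
    have h₁ : (|C₀| + ε) * (t * (N + ε) * γ) ^ (γ + 1) / (γ + 1) * (u - c) ^ (α+2)
        < t * (N - ε) / (α + 2) * (u - c) ^ (α+2) :=
      mul_lt_mul_of_pos_right hεcond hxp2
    have h₃ : t * ((N - ε) * ((u - c) ^ (α+2) / (α+2)))
        ≤ t * (∫ s in c..u, (s - c) * deriv (deriv f) s) :=
      mul_le_mul_of_nonneg_left hBlb ht.le
    have e1 : (|C₀| + ε) * ((t * A) ^ (γ+1) / (γ+1))
        = (|C₀| + ε) / (γ+1) * ((t * A) ^ (γ+1)) := by ring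
    have e2 : (|C₀| + ε) / (γ+1) * ((t * (N + ε) * γ) ^ (γ+1) * (u - c) ^ (α+2))
        = (|C₀| + ε) * (t * (N + ε) * γ) ^ (γ + 1) / (γ + 1) * (u - c) ^ (α+2) := by ring
    have e3 : t * (N - ε) / (α + 2) * (u - c) ^ (α+2)
        = t * ((N - ε) * ((u - c) ^ (α+2) / (α+2))) := by ring
    linarith [hD]
  · -- part (b)
    intro t htc
    have ht : 0 < t := lt_trans (by positivity) htc
    obtain ⟨ε, hε0, hεN, hεC, hεcond⟩ : ∃ ε : ℝ, 0 < ε ∧ ε < N ∧ ε < |C₀| ∧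
        t * (N + ε) / (α + 2) < (|C₀| - ε) * (t * (N - ε) * γ) ^ (γ + 1) / (γ + 1) := by
      have hP : 0 < t * N * γ := by positivity
      have hprod : 1 < t * N * γ * |C₀| ^ (1 + α) := by
        have h0 : 0 < γ * N * |C₀| ^ (1 + α) := by positivity
        calc (1:ℝ) = (γ * N * |C₀| ^ (1 + α))⁻¹ * (γ * N * |C₀| ^ (1+α)) :=
              (inv_mul_cancel₀ h0.ne').symm
        _ < t * (γ * N * |C₀| ^ (1+α)) := mul_lt_mul_of_pos_right htc h0
        _ = t * N * γ * |C₀| ^ (1 + α) := by ring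
      have hlt : (|C₀| ^ (1 + α))⁻¹ < t * N * γ := by
        rw [inv_eq_one_div]; exact (div_lt_iff₀ hCpow).mpr (by linarith)
      have hkey : 1 < (t * N * γ) ^ γ * |C₀| := by
        have h1 : ((|C₀| ^ (1 + α))⁻¹) ^ γ < (t * N * γ) ^ γ :=
          Real.rpow_lt_rpow (by positivity) hlt hγ
        have h2 : ((|C₀| ^ (1 + α))⁻¹ : ℝ) ^ γ = (|C₀|)⁻¹ := by
          rw [Real.inv_rpow hCpow.le, ← Real.rpow_mul hC₀pos.le,
            show (1+α)*γ = 1 by linear_combination hγα, Real.rpow_one]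
        rw [h2] at h1
        have := mul_lt_mul_of_pos_right h1 hC₀pos
        rwa [inv_mul_cancel₀ hC₀pos.ne'] at this
      have hF0 : t * N / (α + 2) < |C₀| * (t * N * γ) ^ (γ + 1) / (γ + 1) := by
        have hQ : t * N * γ < |C₀| * (t * N * γ) ^ (γ + 1) := by
          rw [Real.rpow_add_one hP.ne' γ]
          nlinarith [Real.rpow_pos_of_pos hP γ]
        have heq : t * N / (α + 2) = t * N * γ / (γ + 1) := by
          rw [← hγ2]; field_simp
        rw [heq]
        exact div_lt_div_of_pos_right hQ hγ1
      set F : ℝ → ℝ := fun ε => t * (N + ε) / (α + 2)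
        - (|C₀| - ε) * (t * (N - ε) * γ) ^ (γ + 1) / (γ + 1) with hFdef
      have hFc : ContinuousAt F 0 := by
        apply ContinuousAt.sub
        · fun_prop
        · apply ContinuousAt.div_const
          apply ContinuousAt.mul (by fun_prop)
          exact ContinuousAt.rpow_const (by fun_prop) (Or.inr (by linarith))
      have hFneg : F 0 < 0 := by
        simp only [hFdef, add_zero, sub_zero]
        linarith [hF0]
      have hev : ∀ᶠ ε in nhdsWithin (0:ℝ) (Ioi 0), F ε < 0 ∧ ε < N ∧ ε < |C₀| :=
        eventually_nhdsWithin_of_eventually_nhds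
          ((hFc.eventually_lt_const hFneg).and
            ((eventually_lt_nhds hN).and (eventually_lt_nhds hC₀pos)))
      obtain ⟨ε, ⟨hε1, hε2, hε3⟩, hεm⟩ := (hev.and self_mem_nhdsWithin).exists
      simp only [hFdef, sub_neg] at hε1
      exact ⟨ε, hεm, hε2, hε3, hε1⟩
    obtain ⟨δ₁, hδ₁, Hflux⟩ := hfluxb ε hε0
    obtain ⟨δ₂, hδ₂, Hdata⟩ := hdatab ε hε0
    have hK : 0 < t * (N + ε) * γ := by positivity
    have hK' : 0 < t * (N - ε) * γ := by
      have : 0 < N - ε := by linarith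
      positivity
    have hδr : 0 < (δ₂ / (t * (N + ε) * γ)) ^ γ :=
      Real.rpow_pos_of_pos (by positivity) γ
    refine ⟨min δ₁ ((δ₂ / (t * (N + ε) * γ)) ^ γ), lt_min hδ₁ hδr, fun u hu => ?_⟩
    have hx : 0 < u - c := by linarith [hu.1]
    have hu1 : u ∈ Ioo c (c + δ₁) :=
      ⟨hu.1, by have := min_le_left δ₁ ((δ₂ / (t * (N + ε) * γ)) ^ γ); linarith [hu.2]⟩
    have hux : u - c < (δ₂ / (t * (N + ε) * γ)) ^ γ := by
      have := min_le_right δ₁ ((δ₂ / (t * (N + ε) * γ)) ^ γ); linarith [hu.2]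
    obtain ⟨⟨hAlb, hAub⟩, ⟨hBlb, hBub⟩⟩ := hABbounds ε δ₁ hε0 hεN hδ₁ Hflux u hu1
    set A := ∫ s in c..u, deriv (deriv f) s with hAdef
    have hApos : 0 < A :=
      lt_of_lt_of_le (mul_pos (by linarith) (div_pos (Real.rpow_pos_of_pos hx _) hα1)) hAlb
    have htA : 0 < t * A := mul_pos ht hApos
    have hlA : t * A ≤ (t * (N + ε) * γ) * (u - c) ^ (α+1) := by
      have h1 : t * A ≤ t * ((N + ε) * ((u - c) ^ (α+1) / (α+1))) :=
        mul_le_mul_of_nonneg_left hAub ht.le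
      have h2 : t * ((N + ε) * ((u - c) ^ (α+1) / (α+1)))
          = (t * (N + ε) * γ) * (u - c) ^ (α+1) := by rw [hγeq]; ring
      linarith
    have hlAlow : (t * (N - ε) * γ) * (u - c) ^ (α+1) ≤ t * A := by
      have h1 : t * ((N - ε) * ((u - c) ^ (α+1) / (α+1))) ≤ t * A :=
        mul_le_mul_of_nonneg_left hAlb ht.le
      have h2 : t * ((N - ε) * ((u - c) ^ (α+1) / (α+1)))
          = (t * (N - ε) * γ) * (u - c) ^ (α+1) := by rw [hγeq]; ring
      linarith
    have hlA' : (t * (N + ε) * γ) * (u - c) ^ (α+1) < δ₂ := by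
      have h1 : (u - c) ^ (α+1) < ((δ₂ / (t * (N + ε) * γ)) ^ γ) ^ (α+1) :=
        Real.rpow_lt_rpow hx.le hux hα1
      have h2 : ((δ₂ / (t * (N + ε) * γ)) ^ γ) ^ (α+1) = δ₂ / (t * (N + ε) * γ) := by
        rw [← Real.rpow_mul (by positivity), show γ * (α+1) = 1 by linear_combination hγα,
          Real.rpow_one]
      rw [h2] at h1
      calc (t * (N + ε) * γ) * (u - c) ^ (α+1)
          < (t * (N + ε) * γ) * (δ₂ / (t * (N + ε) * γ)) := mul_lt_mul_of_pos_left h1 hK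
      _ = δ₂ := by field_simp
    have hbnd : x₀ + t * (deriv f c - deriv f u) = x₀ + -(t * A) := by
      have hA' : A = deriv f u - deriv f c := hftc u
      rw [hA']; ring
    rw [hbnd]
    obtain ⟨_, hD⟩ := hDbounds ε δ₂ hε0 Hdata (t * A) htA (by linarith)
    have hxp2 : 0 < (u - c) ^ (α+2) := Real.rpow_pos_of_pos hx _
    have hpow : (t * (N - ε) * γ) ^ (γ+1) * (u - c) ^ (α+2) ≤ (t * A) ^ (γ+1) := by
      have h1 : ((t * (N - ε) * γ) * (u - c) ^ (α+1)) ^ (γ+1) ≤ (t * A) ^ (γ+1) :=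
        Real.rpow_le_rpow (by positivity) hlAlow (by linarith)
      have h2 : ((t * (N - ε) * γ) * (u - c) ^ (α+1)) ^ (γ+1)
          = (t * (N - ε) * γ) ^ (γ+1) * (u - c) ^ (α+2) := by
        rw [Real.mul_rpow hK'.le (Real.rpow_pos_of_pos hx _).le, ← Real.rpow_mul hx.le,
          show (α+1)*(γ+1) = α+2 by linear_combination hγα]
      linarith
    have hc1 : 0 ≤ (|C₀| - ε) / (γ + 1) := by
      have : 0 < |C₀| - ε := by linarith
      positivity
    have h₂ : (|C₀| - ε) / (γ+1) * ((t * (N - ε) * γ) ^ (γ+1) * (u - c) ^ (α+2))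
        ≤ (|C₀| - ε) / (γ+1) * ((t * A) ^ (γ+1)) :=
      mul_le_mul_of_nonneg_left hpow hc1
    have h₁ : t * (N + ε) / (α + 2) * (u - c) ^ (α+2)
        < (|C₀| - ε) * (t * (N - ε) * γ) ^ (γ + 1) / (γ + 1) * (u - c) ^ (α+2) :=
      mul_lt_mul_of_pos_right hεcond hxp2
    have h₃ : t * (∫ s in c..u, (s - c) * deriv (deriv f) s)
        ≤ t * ((N + ε) * ((u - c) ^ (α+2) / (α+2))) :=
      mul_le_mul_of_nonneg_left hBub ht.le
    have e1 : (|C₀| - ε) * ((t * A) ^ (γ+1) / (γ+1))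
        = (|C₀| - ε) / (γ+1) * ((t * A) ^ (γ+1)) := by ring
    have e2 : (|C₀| - ε) / (γ+1) * ((t * (N - ε) * γ) ^ (γ+1) * (u - c) ^ (α+2))
        = (|C₀| - ε) * (t * (N - ε) * γ) ^ (γ + 1) / (γ + 1) * (u - c) ^ (α+2) := by ring
    have e3 : t * (N + ε) / (α + 2) * (u - c) ^ (α+2)
        = t * ((N + ε) * ((u - c) ^ (α+2) / (α+2))) := by ring
    linarith [hD]
end

section
/- (Characterization of divides.) For all x₀, c ∈ ℝ, the following are equivalent: (i) 𝒰(x₀ + t·f'(c), t) = {c} for every t > 0, i.e., the line {(x₀ + t·f'(c), t) : t > 0} is a divide of the entropy solution emitting from x₀ with speed c; (ii) Φ(y) ≥ Φ(x₀) + c·(y − x₀) for every y ∈ ℝ. -/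
open MeasureTheory Filter Set

noncomputable def eFun (f φ : ℝ → ℝ) (u x t : ℝ) : ℝ :=
  t * (∫ s in (0:ℝ)..u, deriv (deriv f) s * (φ (x - t * deriv f s) - s))

def maxSet (f φ : ℝ → ℝ) (x t : ℝ) : Set ℝ :=
  {w : ℝ | ∀ v : ℝ, eFun f φ v x t ≤ eFun f φ w x t}

noncomputable def uPlus (f φ : ℝ → ℝ) (x t : ℝ) : ℝ := sInf (maxSet f φ x t)

noncomputable def uMinus (f φ : ℝ → ℝ) (x t : ℝ) : ℝ := sSup (maxSet f φ x t)

noncomputable def phiInt (φ : ℝ → ℝ) (x : ℝ) : ℝ := ∫ ξ in (0:ℝ)..x, φ ξ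

/-! ### Auxiliary lemmas -/

lemma aux_intervalIntegrable_of_bdd {g : ℝ → ℝ} {C : ℝ} (hm : Measurable g)
    (hC : ∀ s, |g s| ≤ C) (a b : ℝ) : IntervalIntegrable g volume a b := by
  rw [intervalIntegrable_iff]
  exact Measure.integrableOn_of_bounded (measure_Ioc_lt_top.ne) hm.aestronglyMeasurable
    (Eventually.of_forall fun s => by simpa [Real.norm_eq_abs] using hC s)

section aux

variable {p q φ : ℝ → ℝ} {M : ℝ}

lemma aux_phiInt_sub (hφm : Measurable φ) (hφb : ∀ x, |φ x| ≤ M) (a b : ℝ) :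
    phiInt φ a - phiInt φ b = ∫ ξ in b..a, φ ξ := by
  have h1 := intervalIntegral.integral_add_adjacent_intervals
    (aux_intervalIntegrable_of_bdd hφm hφb 0 b) (aux_intervalIntegrable_of_bdd hφm hφb b a)
  unfold phiInt
  linarith

lemma aux_subst (hpq : ∀ s, HasDerivAt p (q s) s) (hq0 : ∀ s, 0 ≤ q s)
    (hpm : Monotone p) (hpi : Function.Injective p)
    (x t : ℝ) (ht : 0 < t) {a b : ℝ} (hab : a ≤ b) :
    ∫ s in a..b, t * q s * φ (x - t * p s)
      = ∫ ξ in (x - t * p b)..(x - t * p a), φ ξ := by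
  set g : ℝ → ℝ := fun s => x - t * p s with hgdef
  have hpc : Continuous p :=
    continuous_iff_continuousAt.2 fun s => (hpq s).differentiableAt.continuousAt
  have hganti : ∀ ⦃s₁ s₂ : ℝ⦄, s₁ ≤ s₂ → g s₂ ≤ g s₁ := by
    intro s₁ s₂ h
    have := hpm h
    simp only [hgdef]
    nlinarith
  have hginj : InjOn g (Icc a b) := by
    intro s₁ _ s₂ _ h
    simp only [hgdef] at h
    have h' : t * p s₁ = t * p s₂ := by linarith
    exact hpi (mul_left_cancel₀ ht.ne' h')
  have hgd : ∀ s ∈ Icc a b, HasDerivWithinAt g (-(t * q s)) (Icc a b) s := by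
    intro s _
    have h1 : HasDerivAt g (0 - t * q s) s :=
      (hasDerivAt_const s x).sub ((hpq s).const_mul t)
    simpa using h1.hasDerivWithinAt
  have hgc : Continuous g := continuous_const.sub (continuous_const.mul hpc)
  have himg : g '' Icc a b = Icc (g b) (g a) := by
    apply Subset.antisymm
    · rintro ξ ⟨s, hs, rfl⟩
      exact ⟨hganti hs.2, hganti hs.1⟩
    · exact intermediate_value_Icc' hab hgc.continuousOn
  have hchg := integral_image_eq_integral_abs_deriv_smul measurableSet_Icc hgd hginj φ
  rw [himg] at hchg
  have hle : g b ≤ g a := hganti hab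
  calc ∫ s in a..b, t * q s * φ (x - t * p s)
      = ∫ s in Icc a b, |(-(t * q s))| • φ (g s) := by
        rw [intervalIntegral.integral_of_le hab, ← integral_Icc_eq_integral_Ioc]
        apply setIntegral_congr_fun measurableSet_Icc
        intro s _
        show t * q s * φ (x - t * p s) = |(-(t * q s))| • φ (g s)
        rw [abs_neg, abs_of_nonneg (mul_nonneg ht.le (hq0 s)), smul_eq_mul]
    _ = ∫ ξ in Icc (g b) (g a), φ ξ := hchg.symm
    _ = ∫ ξ in (g b)..(g a), φ ξ := by
        rw [intervalIntegral.integral_of_le hle, integral_Icc_eq_integral_Ioc]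

/-- The value of the entropy functional in terms of `phiInt`. -/
lemma aux_E_eq (hpq : ∀ s, HasDerivAt p (q s) s) (hqc : Continuous q) (hq0 : ∀ s, 0 ≤ q s)
    (hpm : Monotone p) (hpi : Function.Injective p)
    (hφm : Measurable φ) (hφb : ∀ x, |φ x| ≤ M)
    (x t u : ℝ) (ht : 0 < t) :
    t * (∫ s in (0:ℝ)..u, q s * (φ (x - t * p s) - s))
      = (phiInt φ (x - t * p 0) - phiInt φ (x - t * p u))
        - t * ∫ s in (0:ℝ)..u, s * q s := by
  have hpc : Continuous p :=
    continuous_iff_continuousAt.2 fun s => (hpq s).differentiableAt.continuousAt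
  have hφg : ∀ a b : ℝ, IntervalIntegrable (fun s => φ (x - t * p s)) volume a b := by
    intro a b
    exact aux_intervalIntegrable_of_bdd
      (hφm.comp (continuous_const.sub (continuous_const.mul hpc)).measurable)
      (fun s => hφb _) a b
  have hint2 : ∀ a b : ℝ, IntervalIntegrable (fun s => φ (x - t * p s) * q s) volume a b :=
    fun a b => (hφg a b).mul_continuousOn hqc.continuousOn
  have hint3 : ∀ a b : ℝ, IntervalIntegrable (fun s => s * q s) volume a b :=
    fun a b => (continuous_id.mul hqc).intervalIntegrable a b
  have hsplit : ∫ s in (0:ℝ)..u, q s * (φ (x - t * p s) - s)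
      = (∫ s in (0:ℝ)..u, φ (x - t * p s) * q s) - ∫ s in (0:ℝ)..u, s * q s := by
    rw [← intervalIntegral.integral_sub (hint2 0 u) (hint3 0 u)]
    apply intervalIntegral.integral_congr
    intro s _
    ring
  have hmul : ∀ a b : ℝ, ∫ s in a..b, t * q s * φ (x - t * p s)
      = t * ∫ s in a..b, φ (x - t * p s) * q s := by
    intro a b
    rw [← intervalIntegral.integral_const_mul]
    apply intervalIntegral.integral_congr
    intro s _
    ring
  have hsub : t * ∫ s in (0:ℝ)..u, φ (x - t * p s) * q s
      = phiInt φ (x - t * p 0) - phiInt φ (x - t * p u) := by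
    rcases le_total 0 u with h | h
    · rw [← hmul 0 u, aux_subst hpq hq0 hpm hpi x t ht h,
        ← aux_phiInt_sub hφm hφb (x - t * p 0) (x - t * p u)]
    · have h1 := aux_subst (φ := φ) hpq hq0 hpm hpi x t ht h
      have h2 : (∫ s in (0:ℝ)..u, φ (x - t * p s) * q s)
          = -∫ s in u..(0:ℝ), φ (x - t * p s) * q s :=
        intervalIntegral.integral_symm u 0
      have h3 := aux_phiInt_sub hφm hφb (x - t * p u) (x - t * p 0)
      have h4 : t * ∫ s in u..(0:ℝ), φ (x - t * p s) * q s
          = phiInt φ (x - t * p u) - phiInt φ (x - t * p 0) := by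
        rw [← hmul u 0, h1]
        exact h3.symm
      rw [h2, mul_neg, h4]
      ring
  rw [hsplit, mul_sub, hsub]

lemma aux_parts (hpq : ∀ s, HasDerivAt p (q s) s) (hqc : Continuous q) (c u : ℝ) :
    ∫ s in c..u, s * q s = u * p u - c * p c - ∫ s in c..u, p s := by
  have h := intervalIntegral.integral_mul_deriv_eq_deriv_mul
    (u := fun s : ℝ => s) (v := p) (u' := fun _ => (1:ℝ)) (v' := q) (a := c) (b := u)
    (fun s _ => hasDerivAt_id s) (fun s _ => hpq s)
    intervalIntegrable_const (hqc.intervalIntegrable c u)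
  simpa using h

/-- The master identity: difference of entropy values along the candidate divide. -/
lemma aux_master (hpq : ∀ s, HasDerivAt p (q s) s) (hqc : Continuous q) (hq0 : ∀ s, 0 ≤ q s)
    (hpm : Monotone p) (hpi : Function.Injective p)
    (hφm : Measurable φ) (hφb : ∀ x, |φ x| ≤ M)
    (x₀ c : ℝ) {t : ℝ} (ht : 0 < t) (u : ℝ) :
    t * (∫ s in (0:ℝ)..u, q s * (φ ((x₀ + t * p c) - t * p s) - s))
      - t * (∫ s in (0:ℝ)..c, q s * (φ ((x₀ + t * p c) - t * p s) - s))
      = (phiInt φ x₀ + c * ((x₀ + t * (p c - p u)) - x₀) - phiInt φ (x₀ + t * (p c - p u)))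
        - t * ((u - c) * p u - ∫ s in c..u, p s) := by
  have hqi : ∀ a b : ℝ, IntervalIntegrable (fun s => s * q s) volume a b :=
    fun a b => (continuous_id.mul hqc).intervalIntegrable a b
  rw [aux_E_eq hpq hqc hq0 hpm hpi hφm hφb _ t u ht,
    aux_E_eq hpq hqc hq0 hpm hpi hφm hφb _ t c ht]
  have hK : (∫ s in (0:ℝ)..u, s * q s) - (∫ s in (0:ℝ)..c, s * q s)
      = ∫ s in c..u, s * q s := by
    have := intervalIntegral.integral_add_adjacent_intervals (hqi 0 c) (hqi c u)
    linarith
  have hparts := aux_parts hpq hqc c u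
  have hgc : (x₀ + t * p c) - t * p c = x₀ := by ring
  have hgu : (x₀ + t * p c) - t * p u = x₀ + t * (p c - p u) := by ring
  rw [hgc, hgu]
  have e1 : (∫ s in (0:ℝ)..u, s * q s) - (∫ s in (0:ℝ)..c, s * q s)
      = u * p u - c * p c - ∫ s in c..u, p s := by rw [hK]; exact hparts
  linear_combination (-t) * e1

lemma aux_G_eq (hpc : Continuous p) (c u : ℝ) :
    (u - c) * p u - ∫ s in c..u, p s = ∫ s in c..u, (p u - p s) := by
  rw [intervalIntegral.integral_sub intervalIntegrable_const (hpc.intervalIntegrable c u),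
    intervalIntegral.integral_const, smul_eq_mul]

lemma aux_G_nonneg (hpc : Continuous p) (hpm : Monotone p) (c u : ℝ) :
    0 ≤ ∫ s in c..u, (p u - p s) := by
  rcases le_total c u with h | h
  · exact intervalIntegral.integral_nonneg h (fun s hs => sub_nonneg.2 (hpm hs.2))
  · rw [intervalIntegral.integral_symm]
    have h2 : ∫ s in u..c, (p u - p s) ≤ ∫ s in u..c, (0:ℝ) := by
      apply intervalIntegral.integral_mono_on h
        ((continuous_const.sub hpc).intervalIntegrable u c) intervalIntegrable_const
      intro s hs
      exact sub_nonpos.2 (hpm hs.1)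
    simp only [intervalIntegral.integral_zero] at h2
    linarith

lemma aux_G_le (hpm : Monotone p) (c u : ℝ) :
    ∫ s in c..u, (p u - p s) ≤ |u - c| * |p u - p c| := by
  have hbd : ∀ s ∈ Set.uIoc c u, ‖p u - p s‖ ≤ |p u - p c| := by
    intro s hs
    rw [Real.norm_eq_abs]
    rcases le_total c u with h' | h'
    · rw [uIoc_of_le h'] at hs
      have h1 := hpm hs.2
      have h2 := hpm hs.1.le
      rw [abs_of_nonneg (by linarith)]
      calc p u - p s ≤ p u - p c := by linarith
        _ ≤ |p u - p c| := le_abs_self _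
    · rw [uIoc_comm, uIoc_of_le h'] at hs
      have h1 := hpm hs.1.le
      have h2 := hpm hs.2
      rw [abs_of_nonpos (by linarith)]
      calc -(p u - p s) = p s - p u := by ring
        _ ≤ p c - p u := by linarith
        _ ≤ |p u - p c| := by rw [abs_sub_comm]; exact le_abs_self _
  have h := intervalIntegral.norm_integral_le_of_norm_le_const hbd
  calc ∫ s in c..u, (p u - p s) ≤ |∫ s in c..u, (p u - p s)| := le_abs_self _
    _ ≤ |p u - p c| * |u - c| := by simpa [Real.norm_eq_abs] using h
    _ = |u - c| * |p u - p c| := mul_comm _ _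

lemma aux_G_pos (hpc : Continuous p) (hsm : StrictMono p) {c u : ℝ} (h : u ≠ c) :
    0 < ∫ s in c..u, (p u - p s) := by
  have hpint : ∀ a b : ℝ, IntervalIntegrable (fun s => p u - p s) volume a b :=
    fun a b => (continuous_const.sub hpc).intervalIntegrable a b
  rcases h.lt_or_gt with h | h
  · -- u < c
    set m := (u + c) / 2 with hm
    have hum : u < m := by rw [hm]; linarith
    have hmc : m < c := by rw [hm]; linarith
    have hadj := intervalIntegral.integral_add_adjacent_intervals (hpint u m) (hpint m c)
    have hsym : ∫ s in c..u, (p u - p s) = -∫ s in u..c, (p u - p s) :=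
      intervalIntegral.integral_symm u c
    have h1 : ∫ s in u..m, (p u - p s) ≤ 0 := by
      have h := intervalIntegral.integral_mono_on (g := fun _ => (0:ℝ)) hum.le
        (hpint u m) intervalIntegrable_const
        (fun s hs => by show p u - p s ≤ 0; have := hsm.monotone hs.1; linarith)
      rwa [intervalIntegral.integral_const, smul_zero] at h
    have h2 : ∫ s in m..c, (p u - p s) ≤ (c - m) * (p u - p m) := by
      have h := intervalIntegral.integral_mono_on (g := fun _ => p u - p m) hmc.le
        (hpint m c) intervalIntegrable_const
        (fun s hs => by show p u - p s ≤ p u - p m; have := hsm.monotone hs.1; linarith)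
      rwa [intervalIntegral.integral_const, smul_eq_mul] at h
    have h3 : (c - m) * (p u - p m) < 0 :=
      mul_neg_of_pos_of_neg (by linarith) (sub_neg.2 (hsm hum))
    rw [hsym]
    linarith
  · -- c < u
    set m := (c + u) / 2 with hm
    have hcm : c < m := by rw [hm]; linarith
    have hmu : m < u := by rw [hm]; linarith
    have hadj := intervalIntegral.integral_add_adjacent_intervals (hpint c m) (hpint m u)
    have h1 : (m - c) * (p u - p m) ≤ ∫ s in c..m, (p u - p s) := by
      have h := intervalIntegral.integral_mono_on (f := fun _ => p u - p m) hcm.le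
        intervalIntegrable_const (hpint c m)
        (fun s hs => by show p u - p m ≤ p u - p s; have := hsm.monotone hs.2; linarith)
      rwa [intervalIntegral.integral_const, smul_eq_mul] at h
    have h2 : 0 ≤ ∫ s in m..u, (p u - p s) :=
      intervalIntegral.integral_nonneg hmu.le (fun s hs => sub_nonneg.2 (hsm.monotone hs.2))
    have h3 : 0 < (m - c) * (p u - p m) :=
      mul_pos (by linarith) (sub_pos.2 (hsm hmu))
    linarith

end aux

/-- a ray is a divide iff `Φ` lies above the corresponding affine
function. -/
theorem stmt12_divide_characterization
    (f φ : ℝ → ℝ) (M : ℝ)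
    (hf : ContDiff ℝ 2 f)
    (hconv : ∀ u : ℝ, 0 ≤ deriv (deriv f) u)
    (hdeg : volume {u : ℝ | deriv (deriv f) u = 0} = 0)
    (hφmeas : Measurable φ)
    (hφbdd : ∀ x : ℝ, |φ x| ≤ M) :
    ∀ x₀ c : ℝ,
      (∀ t : ℝ, 0 < t → maxSet f φ (x₀ + t * deriv f c) t = {c}) ↔
      (∀ y : ℝ, phiInt φ x₀ + c * (y - x₀) ≤ phiInt φ y) := by
  -- Basic consequences of smoothness
  have hf2 : ContDiff ℝ ((1 : WithTop ℕ∞) + 1) f := by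
    have : ((1 : WithTop ℕ∞) + 1) = 2 := by norm_num
    rw [this]
    exact hf
  obtain ⟨hfd, -, hf1⟩ := contDiff_succ_iff_deriv.mp hf2
  obtain ⟨hpd, hqc⟩ := contDiff_one_iff_deriv.mp hf1
  set p := deriv f with hpdef
  set q := deriv (deriv f) with hqdef
  have hpq : ∀ s, HasDerivAt p (q s) s := fun s => (hpd s).hasDerivAt
  have hpc : Continuous p := hpd.continuous
  have hpm : Monotone p := monotone_of_deriv_nonneg hpd hconv
  have hpi : Function.Injective p := by
    intro a b hab
    by_contra hne
    wlog h : a < b generalizing a b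
    · exact this hab.symm (Ne.symm hne) ((Ne.lt_or_gt hne).resolve_left h)
    have hconst : ∀ s ∈ Ioo a b, p s = p a := by
      intro s hs
      exact le_antisymm ((hpm hs.2.le).trans_eq hab.symm) (hpm hs.1.le)
    have hsub : Ioo a b ⊆ {u | deriv (deriv f) u = 0} := by
      intro s hs
      have hev : p =ᶠ[nhds s] fun _ => p a :=
        Filter.eventuallyEq_of_mem (isOpen_Ioo.mem_nhds hs) hconst
      have hds : deriv p s = deriv (fun _ => p a) s := hev.deriv_eq
      simp only [deriv_const] at hds
      simpa [hqdef] using hds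
    have h0 : volume (Ioo a b) = 0 :=
      le_antisymm (hdeg ▸ measure_mono hsub) zero_le
    rw [Real.volume_Ioo] at h0
    have := ENNReal.ofReal_eq_zero.mp h0
    linarith
  have hsm : StrictMono p := hpm.strictMono_of_injective hpi
  intro x₀ c
  constructor
  · -- (i) ⇒ (ii)
    intro hdiv y
    apply le_of_forall_pos_le_add
    intro ε hε
    set δ : ℝ := min 1 (ε / (|y - x₀| + 1)) with hδdef
    have hya : (0:ℝ) ≤ |y - x₀| := abs_nonneg _
    have hδpos : 0 < δ := lt_min one_pos (div_pos hε (by positivity))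
    have hδle : δ ≤ ε / (|y - x₀| + 1) := min_le_right _ _
    have hgap1 : 0 < p c - p (c - δ) := sub_pos.2 (hsm (by linarith))
    have hgap2 : 0 < p (c + δ) - p c := sub_pos.2 (hsm (by linarith))
    set m : ℝ := min (p c - p (c - δ)) (p (c + δ) - p c) with hmdef
    have hm : 0 < m := lt_min hgap1 hgap2
    set t : ℝ := (|y - x₀| + 1) / m with htdef
    have ht : 0 < t := div_pos (by positivity) hm
    have htm : m * t = |y - x₀| + 1 := by
      rw [htdef]; field_simp
    have habs : |(y - x₀) / t| < m := by
      rw [abs_div, abs_of_pos ht, div_lt_iff₀ ht]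
      calc |y - x₀| < |y - x₀| + 1 := by linarith
        _ = m * t := htm.symm
    have hivt : p c - (y - x₀) / t ∈ Icc (p (c - δ)) (p (c + δ)) := by
      obtain ⟨hl, hr⟩ := abs_lt.1 habs
      have hm1 : m ≤ p c - p (c - δ) := min_le_left _ _
      have hm2 : m ≤ p (c + δ) - p c := min_le_right _ _
      constructor <;> [linarith; linarith]
    obtain ⟨u, hu, hpu⟩ := intermediate_value_Icc (by linarith : c - δ ≤ c + δ)
      hpc.continuousOn hivt
    have hmem : c ∈ maxSet f φ (x₀ + t * p c) t := by
      rw [hdiv t ht]; rfl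
    have hle : eFun f φ u (x₀ + t * p c) t ≤ eFun f φ c (x₀ + t * p c) t := hmem u
    have hmaster := aux_master hpq hqc hconv hpm hpi hφmeas hφbdd x₀ c ht u
    have hY : x₀ + t * (p c - p u) = y := by
      rw [hpu]; field_simp; ring
    rw [hY] at hmaster
    have hEu : eFun f φ u (x₀ + t * p c) t
        = t * (∫ s in (0:ℝ)..u, q s * (φ ((x₀ + t * p c) - t * p s) - s)) := rfl
    have hEc : eFun f φ c (x₀ + t * p c) t
        = t * (∫ s in (0:ℝ)..c, q s * (φ ((x₀ + t * p c) - t * p s) - s)) := rfl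
    rw [hEu, hEc] at hle
    -- bound the G term
    have hG1 : (u - c) * p u - ∫ s in c..u, p s ≤ |u - c| * |p u - p c| := by
      rw [aux_G_eq hpc]; exact aux_G_le hpm c u
    have hpuc : |p u - p c| = |y - x₀| / t := by
      rw [hpu]
      have : p c - (y - x₀) / t - p c = -((y - x₀) / t) := by ring
      rw [this, abs_neg, abs_div, abs_of_pos ht]
    have huc : |u - c| ≤ δ := by
      rw [abs_le]
      exact ⟨by linarith [hu.1], by linarith [hu.2]⟩
    have hfinal : t * ((u - c) * p u - ∫ s in c..u, p s) ≤ δ * |y - x₀| := by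
      calc t * ((u - c) * p u - ∫ s in c..u, p s)
          ≤ t * (|u - c| * |p u - p c|) := by
            apply mul_le_mul_of_nonneg_left hG1 ht.le
        _ = |u - c| * (t * (|y - x₀| / t)) := by rw [hpuc]; ring
        _ = |u - c| * |y - x₀| := by rw [mul_div_cancel₀ _ ht.ne']
        _ ≤ δ * |y - x₀| := mul_le_mul_of_nonneg_right huc hya
    have hδε : δ * |y - x₀| ≤ ε := by
      have h1 : δ * (|y - x₀| + 1) ≤ ε := (le_div_iff₀ (by positivity)).mp hδle
      nlinarith
    linarith [hmaster, hle, hfinal, hδε]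
  · -- (ii) ⇒ (i)
    intro hineq t ht
    have hcmax : c ∈ maxSet f φ (x₀ + t * p c) t := by
      intro v
      have hmv := aux_master hpq hqc hconv hpm hpi hφmeas hφbdd x₀ c ht v
      have hD : phiInt φ x₀ + c * ((x₀ + t * (p c - p v)) - x₀)
          - phiInt φ (x₀ + t * (p c - p v)) ≤ 0 :=
        sub_nonpos.2 (hineq _)
      have hGnn : 0 ≤ (v - c) * p v - ∫ s in c..v, p s := by
        rw [aux_G_eq hpc]; exact aux_G_nonneg hpc hpm c v
      have hEv : eFun f φ v (x₀ + t * p c) t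
          = t * (∫ s in (0:ℝ)..v, q s * (φ ((x₀ + t * p c) - t * p s) - s)) := rfl
      have hEc : eFun f φ c (x₀ + t * p c) t
          = t * (∫ s in (0:ℝ)..c, q s * (φ ((x₀ + t * p c) - t * p s) - s)) := rfl
      rw [hEv, hEc]
      nlinarith [mul_nonneg ht.le hGnn]
    ext w
    simp only [mem_singleton_iff]
    constructor
    · intro hw
      by_contra hne
      have h1 : eFun f φ c (x₀ + t * p c) t ≤ eFun f φ w (x₀ + t * p c) t := hw c
      have h2 : eFun f φ w (x₀ + t * p c) t ≤ eFun f φ c (x₀ + t * p c) t := hcmax w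
      have heq : eFun f φ w (x₀ + t * p c) t = eFun f φ c (x₀ + t * p c) t :=
        le_antisymm h2 h1
      have hmw := aux_master hpq hqc hconv hpm hpi hφmeas hφbdd x₀ c ht w
      have hD : phiInt φ x₀ + c * ((x₀ + t * (p c - p w)) - x₀)
          - phiInt φ (x₀ + t * (p c - p w)) ≤ 0 :=
        sub_nonpos.2 (hineq _)
      have hGpos : 0 < (w - c) * p w - ∫ s in c..w, p s := by
        rw [aux_G_eq hpc]; exact aux_G_pos hpc hsm hne
      have hEw : eFun f φ w (x₀ + t * p c) t
          = t * (∫ s in (0:ℝ)..w, q s * (φ ((x₀ + t * p c) - t * p s) - s)) := rfl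
      have hEc : eFun f φ c (x₀ + t * p c) t
          = t * (∫ s in (0:ℝ)..c, q s * (φ ((x₀ + t * p c) - t * p s) - s)) := rfl
      rw [hEw, hEc] at heq
      nlinarith [mul_pos ht hGpos]
    · rintro rfl
      exact hcmax
end

section
/- (Existence and nonexistence of divides governed by the invariants.) Let ū_l := limsup_{x→−∞} Φ(x)/x and u̲_r := liminf_{x→+∞} Φ(x)/x. (i) If ū_l < u̲_r, then the entropy solution possesses a divide: there exist x₀, c ∈ ℝ such that 𝒰(x₀ + t·f'(c), t) = {c} for every t > 0. (ii) If ū_l > u̲_r, then there is no divide: for all x₀, c ∈ ℝ there exists t > 0 with 𝒰(x₀ + t·f'(c), t) ≠ {c}. -/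
open MeasureTheory Filter Set

/-! ### Auxiliary lemmas -/

lemma stmt13aux_smooth {f : ℝ → ℝ} (hf : ContDiff ℝ 2 f) :
    Differentiable ℝ f ∧ Differentiable ℝ (deriv f) ∧ Continuous (deriv (deriv f)) := by
  have h2 : ContDiff ℝ (1 + 1) f := by
    rw [one_add_one_eq_two]; exact hf
  obtain ⟨hd, -, hc1⟩ := contDiff_succ_iff_deriv.mp h2
  obtain ⟨hd1, hcont2⟩ := contDiff_one_iff_deriv.mp hc1
  exact ⟨hd, hd1, hcont2⟩

lemma stmt13aux_sm {f : ℝ → ℝ} (hd1 : Differentiable ℝ (deriv f))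
    (hconv : ∀ u : ℝ, 0 ≤ deriv (deriv f) u)
    (hdeg : volume {u : ℝ | deriv (deriv f) u = 0} = 0) :
    StrictMono (deriv f) := by
  have hmono : Monotone (deriv f) :=
    monotone_of_deriv_nonneg hd1 hconv
  intro a b hab
  rcases lt_or_eq_of_le (hmono hab.le) with h | h
  · exact h
  exfalso
  have hconst : ∀ x ∈ Icc a b, deriv f x = deriv f a := fun x hx =>
    le_antisymm (h ▸ hmono hx.2) (hmono hx.1)
  have hsub : Ioo a b ⊆ {u : ℝ | deriv (deriv f) u = 0} := by
    intro z hz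
    have hev : deriv f =ᶠ[nhds z] fun _ => deriv f a := by
      filter_upwards [Ioo_mem_nhds hz.1 hz.2] with y hy
      exact hconst y (Ioo_subset_Icc_self hy)
    simpa using hev.deriv_eq
  have hle : volume (Ioo a b) ≤ volume {u : ℝ | deriv (deriv f) u = 0} :=
    measure_mono hsub
  rw [hdeg, Real.volume_Ioo, nonpos_iff_eq_zero, ENNReal.ofReal_eq_zero] at hle
  linarith

lemma stmt13aux_convkey {f : ℝ → ℝ} (hfd : Differentiable ℝ f) (hsm : StrictMono (deriv f))
    {u c : ℝ} (h : u ≠ c) : f u + deriv f u * (c - u) < f c := by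
  rcases h.lt_or_gt with h | h
  · obtain ⟨ξ, hξ, hs⟩ := exists_hasDerivAt_eq_slope f (deriv f) h
      hfd.continuous.continuousOn (fun x _ => (hfd x).hasDerivAt)
    have h1 : deriv f u < deriv f ξ := hsm hξ.1
    have h2 : deriv f ξ * (c - u) = f c - f u := by
      rw [hs, div_mul_cancel₀ _ (by linarith : c - u ≠ 0)]
    nlinarith
  · obtain ⟨ξ, hξ, hs⟩ := exists_hasDerivAt_eq_slope f (deriv f) h
      hfd.continuous.continuousOn (fun x _ => (hfd x).hasDerivAt)
    have h1 : deriv f ξ < deriv f u := hsm hξ.2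
    have h2 : deriv f ξ * (u - c) = f u - f c := by
      rw [hs, div_mul_cancel₀ _ (by linarith : u - c ≠ 0)]
    nlinarith

lemma stmt13aux_phi_ii {φ : ℝ → ℝ} {M : ℝ} (hφmeas : Measurable φ)
    (hφbdd : ∀ x : ℝ, |φ x| ≤ M) (a b : ℝ) : IntervalIntegrable φ volume a b := by
  rw [intervalIntegrable_iff]
  exact Measure.integrableOn_of_bounded
    (by rw [uIoc_eq_union]; exact ((measure_union_le _ _).trans_lt (by simp [measure_Ioc_lt_top])).ne)
    hφmeas.aestronglyMeasurable (ae_of_all _ fun x => by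
      rw [Real.norm_eq_abs]; exact hφbdd x)

lemma stmt13aux_subst_ordered {f φ : ℝ → ℝ}
    (hd1 : Differentiable ℝ (deriv f))
    (hsm : StrictMono (deriv f))
    (hconv : ∀ u : ℝ, 0 ≤ deriv (deriv f) u)
    {t : ℝ} (ht : 0 < t) (x : ℝ) {a b : ℝ} (hab : a ≤ b) :
    ∫ s in a..b, t * deriv (deriv f) s * φ (x - t * deriv f s)
      = ∫ y in (x - t * deriv f b)..(x - t * deriv f a), φ y := by
  set g : ℝ → ℝ := fun s => x - t * deriv f s with hg
  have hganti : StrictAnti g := fun p q hpq => by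
    have := hsm hpq
    simp only [hg, sub_lt_sub_iff_left]
    nlinarith
  have hgderiv : ∀ s : ℝ, HasDerivAt g (-(t * deriv (deriv f) s)) s := fun s =>
    ((hd1 s).hasDerivAt.const_mul t).const_sub x
  have hgcont : Continuous g := continuous_const.sub (continuous_const.mul hd1.continuous)
  have hgba : g b ≤ g a := hganti.antitone hab
  have hcv : ∫ y in g '' (Ioc a b), φ y
      = ∫ s in Ioc a b, |(-(t * deriv (deriv f) s))| • φ (g s) :=
    integral_image_eq_integral_abs_deriv_smul measurableSet_Ioc
      (fun s _ => (hgderiv s).hasDerivWithinAt) hganti.injective.injOn φ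
  have him1 : Ioo (g b) (g a) ⊆ g '' (Ioc a b) :=
    (intermediate_value_Ioo' hab hgcont.continuousOn).trans
      (image_mono (f := g) Ioo_subset_Ioc_self)
  have him2 : g '' (Ioc a b) ⊆ Icc (g b) (g a) := by
    rintro y ⟨s, hs, rfl⟩
    exact ⟨hganti.antitone hs.2, hganti.antitone hs.1.le⟩
  have hae : g '' (Ioc a b) =ᵐ[volume] Ioc (g b) (g a) := by
    rw [ae_eq_set]
    constructor
    · refine measure_mono_null (fun y hy => ?_) (measure_singleton (g b))
      obtain ⟨hyIcc, hyn⟩ := hy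
      have h1 := him2 hyIcc
      simp only [mem_Ioc, not_and_or, not_lt, not_le, mem_singleton_iff] at hyn ⊢
      rcases hyn with h | h
      · exact le_antisymm h h1.1
      · exact absurd h1.2 (not_le.mpr h)
    · refine measure_mono_null (fun y hy => ?_) (measure_singleton (g a))
      obtain ⟨hyIoc, hyn⟩ := hy
      have : y ∉ Ioo (g b) (g a) := fun hm => hyn (him1 hm)
      simp only [mem_Ioo, not_and_or, not_lt, mem_singleton_iff] at this
      rcases this with h | h
      · exact absurd hyIoc.1 (not_lt.mpr h)
      · exact le_antisymm hyIoc.2 h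
  calc ∫ s in a..b, t * deriv (deriv f) s * φ (x - t * deriv f s)
      = ∫ s in Ioc a b, t * deriv (deriv f) s * φ (g s) :=
        intervalIntegral.integral_of_le hab
    _ = ∫ s in Ioc a b, |(-(t * deriv (deriv f) s))| • φ (g s) := by
        refine setIntegral_congr_fun measurableSet_Ioc fun s _ => ?_
        rw [abs_neg, abs_of_nonneg (mul_nonneg ht.le (hconv s)), smul_eq_mul]
    _ = ∫ y in g '' (Ioc a b), φ y := hcv.symm
    _ = ∫ y in Ioc (g b) (g a), φ y := setIntegral_congr_set hae
    _ = ∫ y in (g b)..(g a), φ y := (intervalIntegral.integral_of_le hgba).symm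

lemma stmt13aux_ftc_f2 {f : ℝ → ℝ} (hd1 : Differentiable ℝ (deriv f))
    (hc2 : Continuous (deriv (deriv f))) (u c : ℝ) :
    ∫ s in u..c, deriv (deriv f) s = deriv f c - deriv f u :=
  intervalIntegral.integral_deriv_eq_sub (fun s _ => hd1 s)
    (hc2.intervalIntegrable u c)

lemma stmt13aux_ftc_sf2 {f : ℝ → ℝ} (hd0 : Differentiable ℝ f)
    (hd1 : Differentiable ℝ (deriv f))
    (hc2 : Continuous (deriv (deriv f))) (u c : ℝ) :
    ∫ s in u..c, s * deriv (deriv f) s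
      = (c * deriv f c - f c) - (u * deriv f u - f u) := by
  have hder : ∀ s ∈ uIcc u c,
      HasDerivAt (fun s => s * deriv f s - f s) (s * deriv (deriv f) s) s := by
    intro s _
    have h1 : HasDerivAt (fun s => s * deriv f s)
        (1 * deriv f s + s * deriv (deriv f) s) s :=
      (hasDerivAt_id s).mul (hd1 s).hasDerivAt
    have h2 : HasDerivAt f (deriv f s) s := (hd0 s).hasDerivAt
    have := h1.sub h2
    refine this.congr_deriv ?_
    ring
  exact intervalIntegral.integral_eq_sub_of_hasDerivAt hder
    ((continuous_id.mul hc2).intervalIntegrable u c)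

lemma stmt13aux_eFun_eq {f φ : ℝ → ℝ} {M : ℝ}
    (hφmeas : Measurable φ) (hφbdd : ∀ x : ℝ, |φ x| ≤ M)
    (hd0 : Differentiable ℝ f) (hd1 : Differentiable ℝ (deriv f))
    (hc2 : Continuous (deriv (deriv f)))
    (hsm : StrictMono (deriv f))
    (hconv : ∀ u : ℝ, 0 ≤ deriv (deriv f) u)
    {t : ℝ} (ht : 0 < t) (x u : ℝ) :
    eFun f φ u x t
      = (phiInt φ (x - t * deriv f 0) - phiInt φ (x - t * deriv f u))
        - t * ((u * deriv f u - f u) - (0 * deriv f 0 - f 0)) := by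
  have hgcont : Continuous (fun s => x - t * deriv f s) :=
    continuous_const.sub (continuous_const.mul hd1.continuous)
  have hint1 : ∀ a b : ℝ, IntervalIntegrable
      (fun s => deriv (deriv f) s * φ (x - t * deriv f s)) volume a b := by
    intro a b
    rw [intervalIntegrable_iff]
    obtain ⟨C, hC⟩ := (isCompact_uIcc (a := a) (b := b)).exists_bound_of_continuousOn
      hc2.continuousOn
    refine Measure.integrableOn_of_bounded
      (by rw [uIoc_eq_union]; exact ((measure_union_le _ _).trans_lt (by simp [measure_Ioc_lt_top])).ne)
      ((hc2.measurable.mul (hφmeas.comp hgcont.measurable)).aestronglyMeasurable)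
      (M := C * M) ?_
    refine (ae_restrict_iff' measurableSet_uIoc).2 (ae_of_all _ fun s hs => ?_)
    have h1 : |deriv (deriv f) s| ≤ C := by
      have := hC s (uIoc_subset_uIcc hs)
      simpa [Real.norm_eq_abs] using this
    rw [Real.norm_eq_abs, abs_mul]
    exact mul_le_mul h1 (hφbdd _) (abs_nonneg _) (le_trans (abs_nonneg _) h1)
  have hint2 : ∀ a b : ℝ, IntervalIntegrable
      (fun s => deriv (deriv f) s * s) volume a b := fun a b =>
    (hc2.mul continuous_id).intervalIntegrable a b
  unfold eFun
  have hsplit : ∫ s in (0:ℝ)..u, deriv (deriv f) s * (φ (x - t * deriv f s) - s)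
      = (∫ s in (0:ℝ)..u, deriv (deriv f) s * φ (x - t * deriv f s))
        - ∫ s in (0:ℝ)..u, deriv (deriv f) s * s := by
    rw [← intervalIntegral.integral_sub (hint1 0 u) (hint2 0 u)]
    congr 1; funext s; ring
  rw [hsplit, mul_sub]
  congr 1
  · have hpull : t * (∫ s in (0:ℝ)..u, deriv (deriv f) s * φ (x - t * deriv f s))
        = ∫ s in (0:ℝ)..u, t * deriv (deriv f) s * φ (x - t * deriv f s) := by
      rw [← intervalIntegral.integral_const_mul]
      congr 1; funext s; ring
    have key : ∫ s in (0:ℝ)..u, t * deriv (deriv f) s * φ (x - t * deriv f s)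
        = ∫ y in (x - t * deriv f u)..(x - t * deriv f 0), φ y := by
      rcases le_total (0:ℝ) u with h | h
      · exact stmt13aux_subst_ordered hd1 hsm hconv ht x h
      · rw [intervalIntegral.integral_symm,
          intervalIntegral.integral_symm (x - t * deriv f 0) (x - t * deriv f u),
          stmt13aux_subst_ordered hd1 hsm hconv ht x h]
    rw [hpull, key]
    simp only [phiInt]
    rw [intervalIntegral.integral_interval_sub_left (stmt13aux_phi_ii hφmeas hφbdd 0 _)
      (stmt13aux_phi_ii hφmeas hφbdd 0 _)]
  · have hcomm : ∫ s in (0:ℝ)..u, deriv (deriv f) s * s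
        = ∫ s in (0:ℝ)..u, s * deriv (deriv f) s := by
      congr 1; funext s; ring
    rw [hcomm, stmt13aux_ftc_sf2 hd0 hd1 hc2 0 u]

lemma stmt13aux_err_bound {f : ℝ → ℝ} (hd1 : Differentiable ℝ (deriv f))
    (hc2 : Continuous (deriv (deriv f)))
    (hconv : ∀ u : ℝ, 0 ≤ deriv (deriv f) u)
    (hmono : Monotone (deriv f)) (u c : ℝ) :
    |(∫ s in u..c, s * deriv (deriv f) s) - c * (deriv f c - deriv f u)|
      ≤ |u - c| * |deriv f c - deriv f u| := by
  have hi1 : ∀ a b : ℝ, IntervalIntegrable (fun s => s * deriv (deriv f) s) volume a b :=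
    fun a b => (continuous_id.mul hc2).intervalIntegrable a b
  have hi2 : ∀ a b : ℝ, IntervalIntegrable (fun s => c * deriv (deriv f) s) volume a b :=
    fun a b => (continuous_const.mul hc2).intervalIntegrable a b
  have hi3 : ∀ a b : ℝ, IntervalIntegrable (fun s => (s - c) * deriv (deriv f) s) volume a b :=
    fun a b => ((continuous_id.sub continuous_const).mul hc2).intervalIntegrable a b
  have hi4 : ∀ a b : ℝ, IntervalIntegrable (fun s => (u - c) * deriv (deriv f) s) volume a b :=
    fun a b => (continuous_const.mul hc2).intervalIntegrable a b
  have hrw : (∫ s in u..c, s * deriv (deriv f) s) - c * (deriv f c - deriv f u)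
      = ∫ s in u..c, (s - c) * deriv (deriv f) s := by
    have e1 : ∫ s in u..c, (s - c) * deriv (deriv f) s
        = (∫ s in u..c, s * deriv (deriv f) s) - ∫ s in u..c, c * deriv (deriv f) s := by
      rw [← intervalIntegral.integral_sub (hi1 u c) (hi2 u c)]
      congr 1; funext s; ring
    rw [e1, intervalIntegral.integral_const_mul, stmt13aux_ftc_f2 hd1 hc2 u c]
  rw [hrw]
  rcases le_total u c with h | h
  · have habs1 : |u - c| = c - u := by rw [abs_sub_comm]; exact abs_of_nonneg (by linarith)
    have habs2 : |deriv f c - deriv f u| = deriv f c - deriv f u :=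
      abs_of_nonneg (by linarith [hmono h])
    rw [habs1, habs2, abs_le]
    constructor
    · have hlow : ∫ s in u..c, (-(c - u)) * deriv (deriv f) s
          ≤ ∫ s in u..c, (s - c) * deriv (deriv f) s := by
        refine intervalIntegral.integral_mono_on h
          ((continuous_const.mul hc2).intervalIntegrable u c) (hi3 u c) fun s hs => ?_
        exact mul_le_mul_of_nonneg_right (by linarith [hs.1]) (hconv s)
      rw [intervalIntegral.integral_const_mul, stmt13aux_ftc_f2 hd1 hc2 u c] at hlow
      linarith
    · have hup : ∫ s in u..c, (s - c) * deriv (deriv f) s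
          ≤ ∫ s in u..c, (0:ℝ) * deriv (deriv f) s := by
        refine intervalIntegral.integral_mono_on h (hi3 u c)
          ((continuous_const.mul hc2).intervalIntegrable u c) fun s hs => ?_
        exact mul_le_mul_of_nonneg_right (by linarith [hs.2]) (hconv s)
      rw [intervalIntegral.integral_const_mul, stmt13aux_ftc_f2 hd1 hc2 u c] at hup
      nlinarith [hmono h]
  · have habs1 : |u - c| = u - c := abs_of_nonneg (by linarith)
    have habs2 : |deriv f c - deriv f u| = deriv f u - deriv f c := by
      rw [abs_sub_comm]; exact abs_of_nonneg (by linarith [hmono h])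
    rw [intervalIntegral.integral_symm, habs1, habs2, abs_neg, abs_le]
    constructor
    · have hlow : (0:ℝ) ≤ ∫ s in c..u, (s - c) * deriv (deriv f) s :=
        intervalIntegral.integral_nonneg h fun s hs =>
          mul_nonneg (by linarith [hs.1]) (hconv s)
      nlinarith [hmono h]
    · have hup : ∫ s in c..u, (s - c) * deriv (deriv f) s
          ≤ ∫ s in c..u, (u - c) * deriv (deriv f) s := by
        refine intervalIntegral.integral_mono_on h (hi3 c u) (hi4 c u) fun s hs => ?_
        exact mul_le_mul_of_nonneg_right (by linarith [hs.2]) (hconv s)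
      rw [intervalIntegral.integral_const_mul, stmt13aux_ftc_f2 hd1 hc2 c u] at hup
      linarith

lemma stmt13aux_eFun_diff {f φ : ℝ → ℝ} {M : ℝ}
    (hφmeas : Measurable φ) (hφbdd : ∀ x : ℝ, |φ x| ≤ M)
    (hd0 : Differentiable ℝ f) (hd1 : Differentiable ℝ (deriv f))
    (hc2 : Continuous (deriv (deriv f)))
    (hsm : StrictMono (deriv f))
    (hconv : ∀ u : ℝ, 0 ≤ deriv (deriv f) u)
    {t : ℝ} (ht : 0 < t) (x₀ c u : ℝ) :
    eFun f φ c (x₀ + t * deriv f c) t - eFun f φ u (x₀ + t * deriv f c) t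
      = (phiInt φ (x₀ + t * deriv f c - t * deriv f u) - phiInt φ x₀)
        - t * ((c * deriv f c - f c) - (u * deriv f u - f u)) := by
  rw [stmt13aux_eFun_eq hφmeas hφbdd hd0 hd1 hc2 hsm hconv ht _ c,
    stmt13aux_eFun_eq hφmeas hφbdd hd0 hd1 hc2 hsm hconv ht _ u]
  have hx : x₀ + t * deriv f c - t * deriv f c = x₀ := by ring
  rw [hx]
  ring

lemma stmt13aux_part1 {f φ : ℝ → ℝ} {M : ℝ}
    (hφmeas : Measurable φ) (hφbdd : ∀ x : ℝ, |φ x| ≤ M)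
    (hd0 : Differentiable ℝ f) (hd1 : Differentiable ℝ (deriv f))
    (hc2 : Continuous (deriv (deriv f)))
    (hsm : StrictMono (deriv f))
    (hconv : ∀ u : ℝ, 0 ≤ deriv (deriv f) u)
    {c x₀ : ℝ} (hmin : ∀ y : ℝ, phiInt φ x₀ - c * x₀ ≤ phiInt φ y - c * y)
    {t : ℝ} (ht : 0 < t) : maxSet f φ (x₀ + t * deriv f c) t = {c} := by
  have key : ∀ u : ℝ, u ≠ c →
      eFun f φ u (x₀ + t * deriv f c) t < eFun f φ c (x₀ + t * deriv f c) t := by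
    intro u hu
    have hdiff := stmt13aux_eFun_diff hφmeas hφbdd hd0 hd1 hc2 hsm hconv ht x₀ c u
    have hphi := hmin (x₀ + t * deriv f c - t * deriv f u)
    have hconvk := stmt13aux_convkey hd0 hsm hu
    nlinarith
  have key2 : ∀ u : ℝ,
      eFun f φ u (x₀ + t * deriv f c) t ≤ eFun f φ c (x₀ + t * deriv f c) t := by
    intro u
    rcases eq_or_ne u c with rfl | hu
    · exact le_rfl
    · exact (key u hu).le
  ext w
  simp only [maxSet, mem_setOf_eq, mem_singleton_iff]
  constructor
  · intro hw
    by_contra hne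
    exact absurd (hw c) (not_le.mpr (key w hne))
  · rintro rfl
    exact key2

/-- existence and nonexistence of divides governed by the invariants
`ū_l` and `u̲_r`. -/
theorem stmt13_divides_and_invariants
    (f φ : ℝ → ℝ) (M : ℝ)
    (hf : ContDiff ℝ 2 f)
    (hconv : ∀ u : ℝ, 0 ≤ deriv (deriv f) u)
    (hdeg : volume {u : ℝ | deriv (deriv f) u = 0} = 0)
    (hφmeas : Measurable φ)
    (hφbdd : ∀ x : ℝ, |φ x| ≤ M) :
    (Filter.limsup (fun x : ℝ => phiInt φ x / x) Filter.atBot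
        < Filter.liminf (fun x : ℝ => phiInt φ x / x) Filter.atTop →
      ∃ x₀ c : ℝ, ∀ t : ℝ, 0 < t → maxSet f φ (x₀ + t * deriv f c) t = {c}) ∧
    (Filter.liminf (fun x : ℝ => phiInt φ x / x) Filter.atTop
        < Filter.limsup (fun x : ℝ => phiInt φ x / x) Filter.atBot →
      ∀ x₀ c : ℝ, ∃ t : ℝ, 0 < t ∧ maxSet f φ (x₀ + t * deriv f c) t ≠ {c}) := by
  obtain ⟨hd0, hd1, hc2⟩ := stmt13aux_smooth hf
  have hsm : StrictMono (deriv f) := stmt13aux_sm hd1 hconv hdeg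
  have hmono : Monotone (deriv f) := hsm.monotone
  set L := Filter.limsup (fun x : ℝ => phiInt φ x / x) Filter.atBot with hL
  set R := Filter.liminf (fun x : ℝ => phiInt φ x / x) Filter.atTop with hR
  -- basic bound on phiInt
  have hphibdd : ∀ x : ℝ, |phiInt φ x| ≤ M * |x| := by
    intro x
    have := intervalIntegral.norm_integral_le_of_norm_le_const
      (C := M) (f := φ) (a := (0:ℝ)) (b := x) (fun y _ => by
        rw [Real.norm_eq_abs]; exact hφbdd y)
    simpa [phiInt, Real.norm_eq_abs] using this
  have hbddTop : ∀ᶠ x : ℝ in atTop, |phiInt φ x / x| ≤ M := by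
    filter_upwards [eventually_ge_atTop (1:ℝ)] with x hx
    rw [abs_div]
    rw [div_le_iff₀ (by linarith [abs_of_pos (by linarith : (0:ℝ) < x)] : (0:ℝ) < |x|)]
    calc |phiInt φ x| ≤ M * |x| := hphibdd x
      _ = M * |x| := rfl
  have hbddBot : ∀ᶠ x : ℝ in atBot, |phiInt φ x / x| ≤ M := by
    filter_upwards [eventually_le_atBot (-1:ℝ)] with x hx
    rw [abs_div]
    rw [div_le_iff₀ (by rw [abs_of_neg (by linarith : x < 0)]; linarith : (0:ℝ) < |x|)]
    exact hphibdd x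
  have hphicont : Continuous (phiInt φ) :=
    intervalIntegral.continuous_primitive (stmt13aux_phi_ii hφmeas hφbdd) 0
  have hphi0 : phiInt φ 0 = 0 := intervalIntegral.integral_same
  constructor
  · -- Part (i)
    intro hlt
    set c := (L + R) / 2 with hc
    set c1 := (3 * L + R) / 4 with hc1
    set c2 := (L + 3 * R) / 4 with hc2'
    have hev1 : ∀ᶠ x : ℝ in atBot, phiInt φ x / x < c1 := by
      refine eventually_lt_of_limsup_lt (by rw [← hL]; rw [hc1]; linarith) ?_
      exact isBoundedUnder_of_eventually_le (hbddBot.mono fun x hx => (abs_le.mp hx).2)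
    have hev2 : ∀ᶠ x : ℝ in atTop, c2 < phiInt φ x / x := by
      refine eventually_lt_of_lt_liminf (by rw [← hR]; rw [hc2']; linarith) ?_
      exact isBoundedUnder_of_eventually_ge (hbddTop.mono fun x hx => (abs_le.mp hx).1)
    obtain ⟨A, hA⟩ := eventually_atBot.mp hev1
    obtain ⟨B, hB⟩ := eventually_atTop.mp hev2
    set F : ℝ → ℝ := fun y => phiInt φ y - c * y with hF
    have hFcont : Continuous F := hphicont.sub (continuous_const.mul continuous_id)
    set a0 := min A (-1) with ha0
    set b0 := max B 1 with hb0
    have h0mem : (0:ℝ) ∈ Icc a0 b0 :=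
      ⟨le_trans (min_le_right _ _) (by norm_num), le_trans (by norm_num) (le_max_right _ _)⟩
    obtain ⟨x₀, hx₀mem, hx₀min⟩ := isCompact_Icc.exists_isMinOn ⟨0, h0mem⟩ hFcont.continuousOn
    have hglobal : ∀ y : ℝ, F x₀ ≤ F y := by
      intro y
      rcases le_or_gt y a0 with hy | hy
      · rcases eq_or_lt_of_le hy with rfl | hy'
        · exact hx₀min ⟨le_rfl, le_trans (le_trans hy h0mem.1) h0mem.2⟩
        have hyA : y ≤ A := le_trans hy'.le (min_le_left _ _)
        have hyneg : y < 0 := lt_of_lt_of_le hy' (le_trans (min_le_right _ _) (by norm_num))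
        have h1 : phiInt φ y / y < c1 := hA y hyA
        have h2 : c1 * y < phiInt φ y := by
          rwa [div_lt_iff_of_neg hyneg] at h1
        have hF0 : F x₀ ≤ F 0 := hx₀min h0mem
        have hF0' : F 0 = 0 := by simp [hF, hphi0]
        have hc1c : c1 < c := by rw [hc1, hc]; linarith
        have : (0:ℝ) ≤ F y := by
          have : (c1 - c) * y > 0 := mul_pos_of_neg_of_neg (by linarith) hyneg
          simp only [hF]
          nlinarith
        linarith
      · rcases le_or_gt y b0 with hy2 | hy2
        · exact hx₀min ⟨hy.le, hy2⟩
        have hyB : B ≤ y := le_trans (le_max_left _ _) hy2.le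
        have hypos : 0 < y := lt_of_lt_of_le (by norm_num) (le_trans (le_max_right _ _) hy2.le)
        have h1 : c2 < phiInt φ y / y := hB y hyB
        have h2 : c2 * y < phiInt φ y := by
          rwa [lt_div_iff₀ hypos] at h1
        have hF0 : F x₀ ≤ F 0 := hx₀min h0mem
        have hF0' : F 0 = 0 := by simp [hF, hphi0]
        have hcc2 : c < c2 := by rw [hc2', hc]; linarith
        have : (0:ℝ) ≤ F y := by
          simp only [hF]
          nlinarith
        linarith
    refine ⟨x₀, c, fun t ht => ?_⟩
    exact stmt13aux_part1 hφmeas hφbdd hd0 hd1 hc2 hsm hconv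
      (fun y => hglobal y) ht
  · -- Part (ii)
    intro hgt x₀ c
    by_contra hcon
    push_neg at hcon
    have hdiv : ∀ t : ℝ, 0 < t → maxSet f φ (x₀ + t * deriv f c) t = {c} := by
      intro t ht
      exact hcon t ht
    have hE : ∀ t : ℝ, 0 < t → ∀ u : ℝ,
        eFun f φ u (x₀ + t * deriv f c) t ≤ eFun f φ c (x₀ + t * deriv f c) t := by
      intro t ht u
      have : c ∈ maxSet f φ (x₀ + t * deriv f c) t := by
        rw [hdiv t ht]; exact mem_singleton c
      exact this u
    -- key claim: x₀ is a global minimizer of Φ(y) - c y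
    have hclaim : ∀ y : ℝ, c * (y - x₀) ≤ phiInt φ y - phiInt φ x₀ := by
      intro y
      refine le_of_forall_pos_le_add fun ε hε => ?_
      set ε' := ε / (|y - x₀| + 1) with hε'
      have hε'pos : 0 < ε' := div_pos hε (by positivity)
      set ρ := min (deriv f c - deriv f (c - ε')) (deriv f (c + ε') - deriv f c) with hρdef
      have hρ : 0 < ρ :=
        lt_min (sub_pos.2 (hsm (by linarith))) (sub_pos.2 (hsm (by linarith)))
      set t := (|x₀ - y| + 1) / ρ with htdef
      have ht : 0 < t := div_pos (by positivity) hρ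
      have hρt : ρ * t = |x₀ - y| + 1 := by
        rw [htdef, mul_div_cancel₀ _ (ne_of_gt hρ)]
      have hsmall : |(x₀ - y) / t| < ρ := by
        rw [abs_div, abs_of_pos ht, div_lt_iff₀ ht, hρt]
        linarith
      have habs := abs_lt.mp hsmall
      have hiv : deriv f c + (x₀ - y) / t ∈ Ioo (deriv f (c - ε')) (deriv f (c + ε')) := by
        constructor
        · have := min_le_left (deriv f c - deriv f (c - ε')) (deriv f (c + ε') - deriv f c)
          rw [← hρdef] at this
          linarith [habs.1]
        · have := min_le_right (deriv f c - deriv f (c - ε')) (deriv f (c + ε') - deriv f c)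
          rw [← hρdef] at this
          linarith [habs.2]
      obtain ⟨u, hu, hfu⟩ := intermediate_value_Ioo (by linarith : c - ε' ≤ c + ε')
        hd1.continuous.continuousOn hiv
      have hXtu : x₀ + t * deriv f c - t * deriv f u = y := by
        rw [hfu]; field_simp; ring
      have hdiff := stmt13aux_eFun_diff hφmeas hφbdd hd0 hd1 hc2 hsm hconv ht x₀ c u
      have hE' := hE t ht u
      rw [hXtu] at hdiff
      have hD : 0 ≤ (phiInt φ y - phiInt φ x₀)
          - t * ((c * deriv f c - f c) - (u * deriv f u - f u)) := by linarith
      have hftc : (c * deriv f c - f c) - (u * deriv f u - f u)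
          = ∫ s in u..c, s * deriv (deriv f) s :=
        (stmt13aux_ftc_sf2 hd0 hd1 hc2 u c).symm
      have herr := stmt13aux_err_bound hd1 hc2 hconv hmono u c
      have hfc : deriv f c - deriv f u = (y - x₀) / t := by
        rw [hfu]; ring_nf
      have huc : |u - c| ≤ ε' := by
        have := hu.1; have := hu.2
        rw [abs_le]; constructor <;> linarith
      -- lower bound for the integral
      have hkey : c * (y - x₀) / t - ε' * (|y - x₀| / t)
          ≤ ∫ s in u..c, s * deriv (deriv f) s := by
        have h1 : |(∫ s in u..c, s * deriv (deriv f) s) - c * ((y - x₀) / t)|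
            ≤ ε' * (|y - x₀| / t) := by
          rw [← hfc]
          refine le_trans herr ?_
          rw [hfc, abs_div, abs_of_pos ht]
          exact mul_le_mul_of_nonneg_right huc (by positivity)
        have h2 := (abs_le.mp h1).1
        have : c * (y - x₀) / t = c * ((y - x₀) / t) := by ring
        linarith [this ▸ h2]
      have hεbound : ε' * |y - x₀| ≤ ε := by
        rw [hε']
        rw [div_mul_eq_mul_div, div_le_iff₀ (by positivity : (0:ℝ) < |y - x₀| + 1)]
        nlinarith [abs_nonneg (y - x₀)]
      -- multiply hkey by t
      have hmul : c * (y - x₀) - ε' * |y - x₀|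
          ≤ t * ((c * deriv f c - f c) - (u * deriv f u - f u)) := by
        rw [hftc]
        have := mul_le_mul_of_nonneg_left hkey ht.le
        calc c * (y - x₀) - ε' * |y - x₀|
            = t * (c * (y - x₀) / t - ε' * (|y - x₀| / t)) := by
              field_simp
          _ ≤ t * ∫ s in u..c, s * deriv (deriv f) s := this
      linarith
    -- conclude: c ≤ R and L ≤ c
    set K := phiInt φ x₀ - c * x₀ with hK
    have hcR : c ≤ R := by
      have h1 : ∀ᶠ x : ℝ in atTop, c + K / x ≤ phiInt φ x / x := by
        filter_upwards [eventually_ge_atTop (1:ℝ)] with x hx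
        have hx0 : (0:ℝ) < x := by linarith
        rw [show c + K / x = (c * x + K) / x by field_simp, div_le_div_iff₀ hx0 hx0]
        have := hclaim x
        nlinarith
      have h2 : Tendsto (fun x : ℝ => c + K / x) atTop (nhds c) := by
        have : Tendsto (fun x : ℝ => K / x) atTop (nhds 0) :=
          Tendsto.div_atTop tendsto_const_nhds tendsto_id
        simpa using tendsto_const_nhds.add this
      have h3 : Filter.liminf (fun x : ℝ => c + K / x) atTop = c := h2.liminf_eq
      rw [hR, ← h3]
      refine liminf_le_liminf h1 ?_ ?_
      · exact h2.isBoundedUnder_ge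
      · exact isCoboundedUnder_ge_of_eventually_le _
          (hbddTop.mono fun x hx => (abs_le.mp hx).2)
    have hLc : L ≤ c := by
      have h1 : ∀ᶠ x : ℝ in atBot, phiInt φ x / x ≤ c + K / x := by
        filter_upwards [eventually_le_atBot (-1:ℝ)] with x hx
        have hx0 : x < 0 := by linarith
        have hxne : x ≠ 0 := ne_of_lt hx0
        rw [show c + K / x = (c * x + K) / x by field_simp,
          div_le_div_right_of_neg hx0]
        have := hclaim x
        nlinarith
      have h2 : Tendsto (fun x : ℝ => c + K / x) atBot (nhds c) := by
        have h0 : Tendsto (fun x : ℝ => (-K) / (-x)) atBot (nhds 0) :=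
          Tendsto.div_atTop tendsto_const_nhds tendsto_neg_atBot_atTop
        have h0' : Tendsto (fun x : ℝ => K / x) atBot (nhds 0) :=
          h0.congr fun x => neg_div_neg_eq K x
        have h2' := (tendsto_const_nhds : Tendsto (fun _ : ℝ => c) atBot (nhds c)).add h0'
        rwa [add_zero] at h2'
      have h3 : Filter.limsup (fun x : ℝ => c + K / x) atBot = c := h2.limsup_eq
      rw [hL, ← h3]
      refine limsup_le_limsup h1 ?_ ?_
      · exact isCoboundedUnder_le_of_eventually_le _
          (hbddBot.mono fun x hx => (abs_le.mp hx).1)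
      · exact h2.isBoundedUnder_le
    linarith
end

section
/- (Existence, uniqueness and continuity of the forward generalized characteristic.) Let (x₀,t₀) ∈ ℝ × (0,∞). For each t₁ > t₀ there exists exactly one point x₁ ∈ ℝ satisfying x₁ + (t₀ − t₁)·f'(u⁻(x₁,t₁)) ≤ x₀ ≤ x₁ + (t₀ − t₁)·f'(u⁺(x₁,t₁)). Writing x(t₁) for this point and setting x(t₀) := x₀, the resulting function x : [t₀, ∞) → ℝ is continuous, and the backward characteristic triangles along it are nested: for all t₀ ≤ t₁ ≤ t₂, x(t₂) − t₂·f'(u⁻(x(t₂),t₂)) ≤ x(t₁) − t₁·f'(u⁻(x(t₁),t₁)) and x(t₁) − t₁·f'(u⁺(x(t₁),t₁)) ≤ x(t₂) − t₂·f'(u⁺(x(t₂),t₂)). -/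
open MeasureTheory Filter Set

namespace S16

set_option linter.deprecated false
set_option linter.unusedVariables false
set_option maxHeartbeats 1000000

noncomputable def Phi (φ : ℝ → ℝ) (y : ℝ) : ℝ := ∫ s in (0:ℝ)..y, φ s

noncomputable def Th (f : ℝ → ℝ) (u : ℝ) : ℝ := ∫ s in (0:ℝ)..u, s * deriv (deriv f) s

variable {f φ : ℝ → ℝ} {M : ℝ}


section Basic

lemma diff2 (hf : ContDiff ℝ 2 f) : Differentiable ℝ (deriv f) := by
  rw [show (2 : WithTop ℕ∞) = 1 + 1 from rfl, contDiff_succ_iff_deriv] at hf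
  exact hf.2.2.differentiable one_ne_zero

lemma cont1 (hf : ContDiff ℝ 2 f) : Continuous (deriv f) :=
  (diff2 hf).continuous

lemma cont2 (hf : ContDiff ℝ 2 f) : Continuous (deriv (deriv f)) := by
  rw [show (2 : WithTop ℕ∞) = 1 + 1 from rfl, contDiff_succ_iff_deriv] at hf
  exact (contDiff_one_iff_deriv.mp hf.2.2).2

lemma f'_mono (hf : ContDiff ℝ 2 f) (hconv : ∀ u : ℝ, 0 ≤ deriv (deriv f) u) :
    Monotone (deriv f) :=
  monotone_of_deriv_nonneg (diff2 hf) hconv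

lemma f'_strictMono (hf : ContDiff ℝ 2 f) (hconv : ∀ u : ℝ, 0 ≤ deriv (deriv f) u)
    (hdeg : volume {u : ℝ | deriv (deriv f) u = 0} = 0) : StrictMono (deriv f) := by
  intro a b hab
  rcases lt_or_eq_of_le ((f'_mono hf hconv) hab.le) with h | h
  · exact h
  · exfalso
    have hconst : ∀ x ∈ Icc a b, deriv f x = deriv f a := by
      intro x hx
      exact le_antisymm (h ▸ (f'_mono hf hconv) hx.2) ((f'_mono hf hconv) hx.1)
    have hzero : Ioo a b ⊆ {u : ℝ | deriv (deriv f) u = 0} := by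
      intro x hx
      have hev : deriv f =ᶠ[nhds x] fun _ => deriv f a := by
        filter_upwards [Ioo_mem_nhds hx.1 hx.2] with y hy
        exact hconst y (Ioo_subset_Icc_self hy)
      have : deriv (deriv f) x = deriv (fun _ : ℝ => deriv f a) x := hev.deriv_eq
      simpa [deriv_const] using this
    have hpos : (0 : ENNReal) < volume (Ioo a b) := by
      simp [Real.volume_Ioo, hab, sub_pos.2 hab]
    exact absurd (le_trans (measure_mono hzero) hdeg.le) (not_le.2 hpos)

lemma M_nonneg (hφbdd : ∀ x : ℝ, |φ x| ≤ M) : 0 ≤ M :=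
  le_trans (abs_nonneg _) (hφbdd 0)

lemma phi_ii (hφmeas : Measurable φ) (hφbdd : ∀ x : ℝ, |φ x| ≤ M) (a b : ℝ) :
    IntervalIntegrable φ volume a b := by
  constructor <;>
  · apply Measure.integrableOn_of_bounded measure_Ioc_lt_top.ne
      hφmeas.aestronglyMeasurable (M := M)
    filter_upwards with x using (by simpa [Real.norm_eq_abs] using hφbdd x)

lemma ii_of_bdd {g : ℝ → ℝ} (hg : Measurable g) (C : ℝ) {a b : ℝ}
    (h : ∀ s ∈ Set.uIcc a b, |g s| ≤ C) : IntervalIntegrable g volume a b := by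
  constructor <;>
  · apply Measure.integrableOn_of_bounded measure_Ioc_lt_top.ne
      hg.aestronglyMeasurable (M := C)
    rw [ae_restrict_iff' measurableSet_Ioc]
    filter_upwards with x hx
    rw [Real.norm_eq_abs]
    apply h
    first
    | exact Set.Ioc_subset_Icc_self.trans Set.Icc_subset_uIcc hx
    | exact Set.Ioc_subset_Icc_self.trans Set.Icc_subset_uIcc' hx

lemma phi_sub (hφmeas : Measurable φ) (hφbdd : ∀ x : ℝ, |φ x| ≤ M) (y z : ℝ) :
    Phi φ y - Phi φ z = ∫ s in z..y, φ s :=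
  intervalIntegral.integral_interval_sub_left (phi_ii hφmeas hφbdd 0 y)
    (phi_ii hφmeas hφbdd 0 z)

lemma phi_lip (hφmeas : Measurable φ) (hφbdd : ∀ x : ℝ, |φ x| ≤ M) (y z : ℝ) :
    |Phi φ y - Phi φ z| ≤ M * |y - z| := by
  rw [phi_sub hφmeas hφbdd y z]
  have := intervalIntegral.norm_integral_le_of_norm_le_const (a := z) (b := y) (C := M)
    (f := φ) (fun x _ => by simpa [Real.norm_eq_abs] using hφbdd x)
  simpa [Real.norm_eq_abs] using this

lemma phi_cont (hφmeas : Measurable φ) (hφbdd : ∀ x : ℝ, |φ x| ≤ M) :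
    Continuous (Phi φ) :=
  intervalIntegral.continuous_primitive (phi_ii hφmeas hφbdd) 0

lemma th_cont (hf : ContDiff ℝ 2 f) : Continuous (Th f) :=
  intervalIntegral.continuous_primitive
    (fun a b => ((continuous_id.mul (cont2 hf)).intervalIntegrable a b)) 0

lemma th_sub (hf : ContDiff ℝ 2 f) (a b : ℝ) :
    Th f a - Th f b = ∫ s in b..a, s * deriv (deriv f) s :=
  intervalIntegral.integral_interval_sub_left
    ((continuous_id.mul (cont2 hf)).intervalIntegrable 0 a)
    ((continuous_id.mul (cont2 hf)).intervalIntegrable 0 b)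

lemma integral_f'' (hf : ContDiff ℝ 2 f) (a b : ℝ) :
    ∫ s in a..b, deriv (deriv f) s = deriv f b - deriv f a :=
  intervalIntegral.integral_deriv_eq_sub (fun x _ => (diff2 hf).differentiableAt)
    ((cont2 hf).intervalIntegrable a b)

end Basic



-- subgradient inequality
lemma th_subgrad (hf : ContDiff ℝ 2 f) (hconv : ∀ u : ℝ, 0 ≤ deriv (deriv f) u)
    (a b : ℝ) : Th f b + b * (deriv f a - deriv f b) ≤ Th f a := by
  have key : ∀ c d : ℝ, c ≤ d →
      c * (deriv f d - deriv f c) ≤ ∫ s in c..d, s * deriv (deriv f) s ∧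
      (∫ s in c..d, s * deriv (deriv f) s) ≤ d * (deriv f d - deriv f c) := by
    intro c d hcd
    constructor
    · have : ∫ s in c..d, c * deriv (deriv f) s ≤ ∫ s in c..d, s * deriv (deriv f) s := by
        apply intervalIntegral.integral_mono_on hcd
          ((continuous_const.mul (cont2 hf)).intervalIntegrable c d)
          ((continuous_id.mul (cont2 hf)).intervalIntegrable c d)
        intro x hx
        exact mul_le_mul_of_nonneg_right hx.1 (hconv x)
      calc c * (deriv f d - deriv f c) = ∫ s in c..d, c * deriv (deriv f) s := by
            rw [intervalIntegral.integral_const_mul, integral_f'' hf]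
        _ ≤ _ := this
    · have : ∫ s in c..d, s * deriv (deriv f) s ≤ ∫ s in c..d, d * deriv (deriv f) s := by
        apply intervalIntegral.integral_mono_on hcd
          ((continuous_id.mul (cont2 hf)).intervalIntegrable c d)
          ((continuous_const.mul (cont2 hf)).intervalIntegrable c d)
        intro x hx
        exact mul_le_mul_of_nonneg_right hx.2 (hconv x)
      calc (∫ s in c..d, s * deriv (deriv f) s) ≤ ∫ s in c..d, d * deriv (deriv f) s := this
        _ = d * (deriv f d - deriv f c) := by
            rw [intervalIntegral.integral_const_mul, integral_f'' hf]
  rcases le_total b a with h | h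
  · have := (key b a h).1
    have h2 : Th f a - Th f b = ∫ s in b..a, s * deriv (deriv f) s := th_sub hf a b
    linarith
  · have := (key a b h).2
    have h2 : Th f b - Th f a = ∫ s in a..b, s * deriv (deriv f) s := th_sub hf b a
    linarith

lemma th_subgrad_strict (hf : ContDiff ℝ 2 f) (hconv : ∀ u : ℝ, 0 ≤ deriv (deriv f) u)
    (hdeg : volume {u : ℝ | deriv (deriv f) u = 0} = 0)
    {a b : ℝ} (hab : a ≠ b) : Th f b + b * (deriv f a - deriv f b) < Th f a := by
  have hsm := f'_strictMono hf hconv hdeg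
  -- key: for c < d, strict lower bound using midpoint
  have key : ∀ c d : ℝ, c < d →
      c * (deriv f d - deriv f c) < ∫ s in c..d, s * deriv (deriv f) s := by
    intro c d hcd
    set m := (c + d) / 2 with hm
    have hcm : c < m := by simp [hm]; linarith
    have hmd : m < d := by simp [hm]; linarith
    have split : (∫ s in c..d, s * deriv (deriv f) s)
        = (∫ s in c..m, s * deriv (deriv f) s) + ∫ s in m..d, s * deriv (deriv f) s :=
      (intervalIntegral.integral_add_adjacent_intervals
        ((continuous_id.mul (cont2 hf)).intervalIntegrable c m)
        ((continuous_id.mul (cont2 hf)).intervalIntegrable m d)).symm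
    have h1 : c * (deriv f m - deriv f c) ≤ ∫ s in c..m, s * deriv (deriv f) s := by
      have : ∫ s in c..m, c * deriv (deriv f) s ≤ ∫ s in c..m, s * deriv (deriv f) s := by
        apply intervalIntegral.integral_mono_on hcm.le
          ((continuous_const.mul (cont2 hf)).intervalIntegrable c m)
          ((continuous_id.mul (cont2 hf)).intervalIntegrable c m)
        intro x hx; exact mul_le_mul_of_nonneg_right hx.1 (hconv x)
      calc c * (deriv f m - deriv f c) = ∫ s in c..m, c * deriv (deriv f) s := by
            rw [intervalIntegral.integral_const_mul, integral_f'' hf]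
        _ ≤ _ := this
    have h2 : m * (deriv f d - deriv f m) ≤ ∫ s in m..d, s * deriv (deriv f) s := by
      have : ∫ s in m..d, m * deriv (deriv f) s ≤ ∫ s in m..d, s * deriv (deriv f) s := by
        apply intervalIntegral.integral_mono_on hmd.le
          ((continuous_const.mul (cont2 hf)).intervalIntegrable m d)
          ((continuous_id.mul (cont2 hf)).intervalIntegrable m d)
        intro x hx; exact mul_le_mul_of_nonneg_right hx.1 (hconv x)
      calc m * (deriv f d - deriv f m) = ∫ s in m..d, m * deriv (deriv f) s := by
            rw [intervalIntegral.integral_const_mul, integral_f'' hf]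
        _ ≤ _ := this
    have hstrict : c * (deriv f d - deriv f m) < m * (deriv f d - deriv f m) :=
      mul_lt_mul_of_pos_right hcm (sub_pos.2 (hsm hmd))
    nlinarith [hsm hcm, hsm hmd]
  rcases lt_or_gt_of_ne hab with h | h
  · -- a < b : Th a - Th b = -∫_a^b s f'' > -b(f'b - f'a)... need upper strict bound
    have key2 : ∀ c d : ℝ, c < d →
        (∫ s in c..d, s * deriv (deriv f) s) < d * (deriv f d - deriv f c) := by
      intro c d hcd
      set m := (c + d) / 2 with hm
      have hcm : c < m := by simp [hm]; linarith
      have hmd : m < d := by simp [hm]; linarith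
      have split : (∫ s in c..d, s * deriv (deriv f) s)
          = (∫ s in c..m, s * deriv (deriv f) s) + ∫ s in m..d, s * deriv (deriv f) s :=
        (intervalIntegral.integral_add_adjacent_intervals
          ((continuous_id.mul (cont2 hf)).intervalIntegrable c m)
          ((continuous_id.mul (cont2 hf)).intervalIntegrable m d)).symm
      have h1 : (∫ s in c..m, s * deriv (deriv f) s) ≤ m * (deriv f m - deriv f c) := by
        have : ∫ s in c..m, s * deriv (deriv f) s ≤ ∫ s in c..m, m * deriv (deriv f) s := by
          apply intervalIntegral.integral_mono_on hcm.le
            ((continuous_id.mul (cont2 hf)).intervalIntegrable c m)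
            ((continuous_const.mul (cont2 hf)).intervalIntegrable c m)
          intro x hx; exact mul_le_mul_of_nonneg_right hx.2 (hconv x)
        calc (∫ s in c..m, s * deriv (deriv f) s) ≤ ∫ s in c..m, m * deriv (deriv f) s := this
          _ = m * (deriv f m - deriv f c) := by
              rw [intervalIntegral.integral_const_mul, integral_f'' hf]
      have h2 : (∫ s in m..d, s * deriv (deriv f) s) ≤ d * (deriv f d - deriv f m) := by
        have : ∫ s in m..d, s * deriv (deriv f) s ≤ ∫ s in m..d, d * deriv (deriv f) s := by
          apply intervalIntegral.integral_mono_on hmd.le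
            ((continuous_id.mul (cont2 hf)).intervalIntegrable m d)
            ((continuous_const.mul (cont2 hf)).intervalIntegrable m d)
          intro x hx; exact mul_le_mul_of_nonneg_right hx.2 (hconv x)
        calc (∫ s in m..d, s * deriv (deriv f) s) ≤ ∫ s in m..d, d * deriv (deriv f) s := this
          _ = d * (deriv f d - deriv f m) := by
              rw [intervalIntegral.integral_const_mul, integral_f'' hf]
      nlinarith [hsm hcm, hsm hmd]
    have := key2 a b h
    have h2 : Th f b - Th f a = ∫ s in a..b, s * deriv (deriv f) s := th_sub hf b a
    linarith
  · have := key b a h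
    have h2 : Th f a - Th f b = ∫ s in b..a, s * deriv (deriv f) s := th_sub hf a b
    linarith


lemma key_subst (hf : ContDiff ℝ 2 f) (hconv : ∀ u : ℝ, 0 ≤ deriv (deriv f) u)
    (hdeg : volume {u : ℝ | deriv (deriv f) u = 0} = 0)
    (hφmeas : Measurable φ) (hφbdd : ∀ x : ℝ, |φ x| ≤ M)
    {t : ℝ} (ht : 0 < t) {a b : ℝ} (hab : a ≤ b) (x : ℝ) :
    t * ∫ s in a..b, deriv (deriv f) s * φ (x - t * deriv f s)
      = Phi φ (x - t * deriv f a) - Phi φ (x - t * deriv f b) := by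
  set ψ : ℝ → ℝ := fun s => x - t * deriv f s with hψ
  have hψcont : Continuous ψ := continuous_const.sub (continuous_const.mul (diff2 hf).continuous)
  have hψba : ψ b ≤ ψ a := by
    have := f'_mono hf hconv hab
    simp only [hψ]
    nlinarith
  have hderiv : ∀ s ∈ Icc a b, HasDerivWithinAt ψ (-(t * deriv (deriv f) s)) (Icc a b) s := by
    intro s _
    exact (((diff2 hf).differentiableAt.hasDerivAt.const_mul t).const_sub x).hasDerivWithinAt
  have hinj : InjOn ψ (Icc a b) := by
    intro s1 _ s2 _ h
    have : deriv f s1 = deriv f s2 := by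
      have := (f'_strictMono hf hconv hdeg).injective
      simp only [hψ, sub_right_inj, mul_eq_mul_left_iff] at h
      rcases h with h | h
      · exact h
      · linarith
    exact (f'_strictMono hf hconv hdeg).injective this
  have himg : ψ '' Icc a b = Icc (ψ b) (ψ a) := by
    apply Subset.antisymm
    · rintro y ⟨s, hs, rfl⟩
      have h1 := f'_mono hf hconv hs.1
      have h2 := f'_mono hf hconv hs.2
      constructor <;> (simp only [hψ]; nlinarith)
    · exact intermediate_value_Icc' hab hψcont.continuousOn
  have hchg := integral_image_eq_integral_abs_deriv_smul (f' := fun s => -(t * deriv (deriv f) s))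
    measurableSet_Icc hderiv hinj φ
  rw [himg] at hchg
  have habs : ∀ s ∈ Icc a b, |(-(t * deriv (deriv f) s))| • φ (ψ s)
      = t * (deriv (deriv f) s * φ (ψ s)) := by
    intro s _
    rw [abs_neg, abs_of_nonneg (mul_nonneg ht.le (hconv s))]
    simp [smul_eq_mul]; ring
  rw [setIntegral_congr_fun measurableSet_Icc habs] at hchg
  have hIcc1 : ∫ y in Icc (ψ b) (ψ a), φ y = ∫ y in (ψ b)..(ψ a), φ y := by
    rw [intervalIntegral.integral_of_le hψba, integral_Icc_eq_integral_Ioc]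
  have hIcc2 : ∫ s in Icc a b, t * (deriv (deriv f) s * φ (ψ s))
      = ∫ s in a..b, t * (deriv (deriv f) s * φ (ψ s)) := by
    rw [intervalIntegral.integral_of_le hab, integral_Icc_eq_integral_Ioc]
  rw [hIcc1, hIcc2] at hchg
  rw [phi_sub hφmeas hφbdd (x - t * deriv f a) (x - t * deriv f b)]
  calc t * ∫ s in a..b, deriv (deriv f) s * φ (x - t * deriv f s)
      = ∫ s in a..b, t * (deriv (deriv f) s * φ (ψ s)) := by
        rw [intervalIntegral.integral_const_mul]
    _ = ∫ y in (ψ b)..(ψ a), φ y := hchg.symm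
    _ = ∫ s in (x - t * deriv f b)..(x - t * deriv f a), φ s := rfl

lemma eFun_closed (hf : ContDiff ℝ 2 f) (hconv : ∀ u : ℝ, 0 ≤ deriv (deriv f) u)
    (hdeg : volume {u : ℝ | deriv (deriv f) u = 0} = 0)
    (hφmeas : Measurable φ) (hφbdd : ∀ x : ℝ, |φ x| ≤ M)
    {t : ℝ} (ht : 0 < t) (u x : ℝ) :
    eFun f φ u x t = Phi φ (x - t * deriv f 0) - Phi φ (x - t * deriv f u) - t * Th f u := by
  have hii1 : ∀ a b : ℝ, IntervalIntegrable
      (fun s => deriv (deriv f) s * φ (x - t * deriv f s)) volume a b := by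
    intro a b
    obtain ⟨C, hC⟩ := (isCompact_uIcc (a := a) (b := b)).exists_bound_of_continuousOn
      (cont2 hf).continuousOn
    apply ii_of_bdd (show Measurable fun s => deriv (deriv f) s * φ (x - t * deriv f s) from
      (cont2 hf).measurable.mul (hφmeas.comp
      (continuous_const.sub (continuous_const.mul (diff2 hf).continuous)).measurable)) (C * M)
    intro s hs
    rw [abs_mul]
    have h1 : |deriv (deriv f) s| ≤ C := by simpa [Real.norm_eq_abs] using hC s hs
    have h2 : |φ (x - t * deriv f s)| ≤ M := hφbdd _
    have h0 : (0:ℝ) ≤ |deriv (deriv f) s| := abs_nonneg _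
    show |deriv (deriv f) s| * |φ (x - t * deriv f s)| ≤ C * M
    exact mul_le_mul h1 h2 (abs_nonneg _) (le_trans h0 h1)
  have hii2 : IntervalIntegrable (fun s => s * deriv (deriv f) s) volume 0 u :=
    (continuous_id.mul (cont2 hf)).intervalIntegrable 0 u
  have hsplit : (∫ s in (0:ℝ)..u, deriv (deriv f) s * (φ (x - t * deriv f s) - s))
      = (∫ s in (0:ℝ)..u, deriv (deriv f) s * φ (x - t * deriv f s))
        - ∫ s in (0:ℝ)..u, s * deriv (deriv f) s := by
    rw [← intervalIntegral.integral_sub (hii1 0 u) hii2]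
    congr 1
    ext s
    ring
  unfold eFun Th
  have hmain : t * ∫ s in (0:ℝ)..u, deriv (deriv f) s * φ (x - t * deriv f s)
      = Phi φ (x - t * deriv f 0) - Phi φ (x - t * deriv f u) := by
    rcases le_total 0 u with h | h
    · exact key_subst hf hconv hdeg hφmeas hφbdd ht h x
    · have := key_subst hf hconv hdeg hφmeas hφbdd ht h x
      rw [intervalIntegral.integral_symm 0 u, mul_neg] at this
      linarith
  rw [hsplit, mul_sub, hmain]


section MaxSet

variable (hf : ContDiff ℝ 2 f) (hconv : ∀ u : ℝ, 0 ≤ deriv (deriv f) u)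
    (hdeg : volume {u : ℝ | deriv (deriv f) u = 0} = 0)
    (hφmeas : Measurable φ) (hφbdd : ∀ x : ℝ, |φ x| ≤ M)

include hf hconv hdeg hφmeas hφbdd

lemma eFun_cont {t : ℝ} (ht : 0 < t) (x : ℝ) :
    Continuous (fun u => eFun f φ u x t) := by
  have : Continuous (fun u => Phi φ (x - t * deriv f 0) - Phi φ (x - t * deriv f u)
      - t * Th f u) := by
    apply Continuous.sub
    · exact continuous_const.sub ((phi_cont hφmeas hφbdd).comp
        (continuous_const.sub (continuous_const.mul (cont1 hf))))
    · exact continuous_const.mul (th_cont hf)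
  exact this.congr (fun u => (eFun_closed hf hconv hdeg hφmeas hφbdd ht u x).symm)

lemma tail_top {t : ℝ} (ht : 0 < t) (x : ℝ) {w : ℝ} (hw : M < w) :
    eFun f φ w x t < eFun f φ M x t := by
  rw [eFun_closed hf hconv hdeg hφmeas hφbdd ht w x,
    eFun_closed hf hconv hdeg hφmeas hφbdd ht M x]
  have h1 := phi_lip hφmeas hφbdd (x - t * deriv f M) (x - t * deriv f w)
  have habs : |(x - t * deriv f M) - (x - t * deriv f w)| = t * (deriv f w - deriv f M) := by
    have := f'_mono hf hconv hw.le
    rw [abs_of_nonneg] <;> nlinarith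
  rw [habs] at h1
  have h3 := th_subgrad_strict hf hconv hdeg (a := w) (b := M) (ne_of_gt hw)
  have habs' := abs_le.1 h1
  nlinarith [habs'.1, habs'.2]

lemma tail_bot {t : ℝ} (ht : 0 < t) (x : ℝ) {w : ℝ} (hw : w < -M) :
    eFun f φ w x t < eFun f φ (-M) x t := by
  rw [eFun_closed hf hconv hdeg hφmeas hφbdd ht w x,
    eFun_closed hf hconv hdeg hφmeas hφbdd ht (-M) x]
  have h1 := phi_lip hφmeas hφbdd (x - t * deriv f (-M)) (x - t * deriv f w)
  have habs : |(x - t * deriv f (-M)) - (x - t * deriv f w)|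
      = t * (deriv f (-M) - deriv f w) := by
    have := f'_mono hf hconv hw.le
    rw [abs_of_nonpos] <;> nlinarith
  rw [habs] at h1
  have h3 := th_subgrad_strict hf hconv hdeg (a := w) (b := -M) (ne_of_lt hw)
  have habs' := abs_le.1 h1
  nlinarith [habs'.1, habs'.2]

lemma maxSet_subset {t : ℝ} (ht : 0 < t) (x : ℝ) :
    maxSet f φ x t ⊆ Icc (-M) M := by
  intro w hw
  by_contra h
  rw [mem_Icc, not_and_or] at h
  rcases h with h | h
  · push_neg at h
    exact absurd (hw (-M)) (not_le.2 (tail_bot hf hconv hdeg hφmeas hφbdd ht x h))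
  · push_neg at h
    exact absurd (hw M) (not_le.2 (tail_top hf hconv hdeg hφmeas hφbdd ht x h))

lemma maxSet_nonempty {t : ℝ} (ht : 0 < t) (x : ℝ) : (maxSet f φ x t).Nonempty := by
  obtain ⟨w₀, hw₀mem, hw₀'⟩ := isCompact_Icc.exists_isMaxOn
    (nonempty_Icc.2 (neg_le_self (M_nonneg hφbdd)))
    (eFun_cont hf hconv hdeg hφmeas hφbdd ht x).continuousOn
  have hw₀ : ∀ v ∈ Icc (-M) M, eFun f φ v x t ≤ eFun f φ w₀ x t := fun v hv => hw₀' hv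
  refine ⟨w₀, fun v => ?_⟩
  rcases le_or_gt v M with h1 | h1
  · rcases le_or_gt (-M) v with h2 | h2
    · exact hw₀ v ⟨h2, h1⟩
    · exact le_trans (tail_bot hf hconv hdeg hφmeas hφbdd ht x h2).le
        (hw₀ (-M) ⟨le_refl _, neg_le_self (M_nonneg hφbdd)⟩)
  · exact le_trans (tail_top hf hconv hdeg hφmeas hφbdd ht x h1).le
      (hw₀ M ⟨neg_le_self (M_nonneg hφbdd), le_refl _⟩)

lemma maxSet_isClosed {t : ℝ} (ht : 0 < t) (x : ℝ) : IsClosed (maxSet f φ x t) := by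
  have : maxSet f φ x t = ⋂ v : ℝ, {w : ℝ | eFun f φ v x t ≤ eFun f φ w x t} := by
    ext w; simp [maxSet, mem_iInter]
  rw [this]
  exact isClosed_iInter fun v => isClosed_le continuous_const
    (eFun_cont hf hconv hdeg hφmeas hφbdd ht x)

lemma uMinus_mem {t : ℝ} (ht : 0 < t) (x : ℝ) : uMinus f φ x t ∈ maxSet f φ x t :=
  (maxSet_isClosed hf hconv hdeg hφmeas hφbdd ht x).csSup_mem
    (maxSet_nonempty hf hconv hdeg hφmeas hφbdd ht x)
    (BddAbove.mono (maxSet_subset hf hconv hdeg hφmeas hφbdd ht x) (bddAbove_Icc))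

lemma uPlus_mem {t : ℝ} (ht : 0 < t) (x : ℝ) : uPlus f φ x t ∈ maxSet f φ x t :=
  (maxSet_isClosed hf hconv hdeg hφmeas hφbdd ht x).csInf_mem
    (maxSet_nonempty hf hconv hdeg hφmeas hφbdd ht x)
    (BddBelow.mono (maxSet_subset hf hconv hdeg hφmeas hφbdd ht x) (bddBelow_Icc))

lemma le_uMinus {t : ℝ} (ht : 0 < t) {x w : ℝ} (hw : w ∈ maxSet f φ x t) :
    w ≤ uMinus f φ x t :=
  le_csSup (BddAbove.mono (maxSet_subset hf hconv hdeg hφmeas hφbdd ht x) bddAbove_Icc) hw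

lemma uPlus_le {t : ℝ} (ht : 0 < t) {x w : ℝ} (hw : w ∈ maxSet f φ x t) :
    uPlus f φ x t ≤ w :=
  csInf_le (BddBelow.mono (maxSet_subset hf hconv hdeg hφmeas hφbdd ht x) bddBelow_Icc) hw

end MaxSet

lemma th_subst (hf : ContDiff ℝ 2 f) (hconv : ∀ u : ℝ, 0 ≤ deriv (deriv f) u)
    (hdeg : volume {u : ℝ | deriv (deriv f) u = 0} = 0)
    {a b : ℝ} (hab : a ≤ b) (g : ℝ → ℝ)
    (hgid : ∀ s ∈ Icc a b, g (deriv f s) = s) :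
    Th f b - Th f a = ∫ y in (deriv f a)..(deriv f b), g y := by
  have hderiv : ∀ s ∈ Icc a b,
      HasDerivWithinAt (deriv f) (deriv (deriv f) s) (Icc a b) s := fun s _ =>
    (diff2 hf).differentiableAt.hasDerivAt.hasDerivWithinAt
  have hinj : InjOn (deriv f) (Icc a b) := fun s1 _ s2 _ h =>
    (f'_strictMono hf hconv hdeg).injective h
  have himg : deriv f '' Icc a b = Icc (deriv f a) (deriv f b) := by
    apply Subset.antisymm
    · rintro y ⟨s, hs, rfl⟩
      exact ⟨f'_mono hf hconv hs.1, f'_mono hf hconv hs.2⟩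
    · exact intermediate_value_Icc hab (cont1 hf).continuousOn
  have hchg := integral_image_eq_integral_abs_deriv_smul
    (f' := fun s => deriv (deriv f) s) measurableSet_Icc hderiv hinj g
  rw [himg] at hchg
  have habs : ∀ s ∈ Icc a b, |deriv (deriv f) s| • g (deriv f s) = s * deriv (deriv f) s := by
    intro s hs
    rw [abs_of_nonneg (hconv s), smul_eq_mul, hgid s hs]
    ring
  rw [setIntegral_congr_fun measurableSet_Icc habs] at hchg
  rw [th_sub hf b a, intervalIntegral.integral_of_le hab,
    intervalIntegral.integral_of_le (f'_mono hf hconv hab),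
    ← integral_Icc_eq_integral_Ioc, ← integral_Icc_eq_integral_Ioc, hchg]

set_option maxHeartbeats 1000000 in
theorem cross (hf : ContDiff ℝ 2 f) (hconv : ∀ u : ℝ, 0 ≤ deriv (deriv f) u)
    (hdeg : volume {u : ℝ | deriv (deriv f) u = 0} = 0)
    (hφmeas : Measurable φ) (hφbdd : ∀ x : ℝ, |φ x| ≤ M)
    {t x1 x2 w1 w2 : ℝ} (ht : 0 < t) (hx : x1 < x2)
    (hw1 : w1 ∈ maxSet f φ x1 t) (hw2 : w2 ∈ maxSet f φ x2 t) :
    x1 - t * deriv f w1 ≤ x2 - t * deriv f w2 := by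
  by_contra hcon
  push_neg at hcon
  have hsm := f'_strictMono hf hconv hdeg
  have hmono := f'_mono hf hconv
  set p := deriv f w1 with hp
  set q := deriv f w2 with hq
  have hδ : 0 < x2 - x1 := by linarith
  set h : ℝ := (x2 - x1) / t with hh
  have hhpos : 0 < h := div_pos hδ ht
  have hpq : p + h < q := by
    have h2 : (x2 - x1) / t < q - p := by
      rw [div_lt_iff₀ ht]; nlinarith
    rw [hh]; linarith
  have hw12 : w1 < w2 := by
    by_contra hh2
    push_neg at hh2
    have := hmono hh2
    rw [← hq, ← hp] at this
    linarith
  -- IVT points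
  have hivt1 : p + h ∈ Ioo (deriv f w1) (deriv f w2) := ⟨by linarith [hhpos], hpq⟩
  have hivt2 : q - h ∈ Ioo (deriv f w1) (deriv f w2) := ⟨by linarith, by linarith [hhpos]⟩
  obtain ⟨w1', hw1'mem, hw1'⟩ := intermediate_value_Ioo hw12.le (cont1 hf).continuousOn hivt1
  obtain ⟨w2', hw2'mem, hw2'⟩ := intermediate_value_Ioo hw12.le (cont1 hf).continuousOn hivt2
  -- optimality inequalities via closed form
  have hopt1 := hw1 w2'   -- eFun w2' x1 ≤ eFun w1 x1
  have hopt2 := hw2 w1'   -- eFun w1' x2 ≤ eFun w2 x2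
  rw [eFun_closed hf hconv hdeg hφmeas hφbdd ht w2' x1,
      eFun_closed hf hconv hdeg hφmeas hφbdd ht w1 x1] at hopt1
  rw [eFun_closed hf hconv hdeg hφmeas hφbdd ht w1' x2,
      eFun_closed hf hconv hdeg hφmeas hφbdd ht w2 x2] at hopt2
  have hmul : t * ((x2 - x1) / t) = x2 - x1 := mul_div_cancel₀ _ (ne_of_gt ht)
  have hkey1 : x1 - t * deriv f w2' = x2 - t * q := by
    rw [hw2', hh]; linear_combination hmul
  have hkey2 : x2 - t * deriv f w1' = x1 - t * p := by
    rw [hw1', hh]; linear_combination -hmul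
  rw [hkey1] at hopt1
  rw [hkey2] at hopt2
  rw [← hp] at hopt1
  rw [← hq] at hopt2
  -- star inequality
  have hstar : Th f w2 + Th f w1 ≤ Th f w1' + Th f w2' := by
    have h2 : t * (Th f w2 + Th f w1) ≤ t * (Th f w1' + Th f w2') := by linarith
    exact le_of_mul_le_mul_left h2 ht
  -- monotone inverse g
  set g : ℝ → ℝ := fun r => sInf ({s : ℝ | s ∈ Icc w1 w2 ∧ r ≤ deriv f s} ∪ {w2}) with hg
  have hsetbdd : ∀ r : ℝ, BddBelow ({s : ℝ | s ∈ Icc w1 w2 ∧ r ≤ deriv f s} ∪ {w2}) := by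
    intro r
    refine ⟨w1, ?_⟩
    rintro s (⟨hs, _⟩ | rfl)
    · exact hs.1
    · exact hw12.le
  have hsetne : ∀ r : ℝ, ({s : ℝ | s ∈ Icc w1 w2 ∧ r ≤ deriv f s} ∪ {w2}).Nonempty :=
    fun r => ⟨w2, Or.inr rfl⟩
  have hgmono : Monotone g := by
    intro r1 r2 h12
    apply csInf_le_csInf (hsetbdd r1) (hsetne r2)
    rintro s (⟨hs, hr⟩ | rfl)
    · exact Or.inl ⟨hs, le_trans h12 hr⟩
    · exact Or.inr rfl
  have hgid : ∀ s ∈ Icc w1 w2, g (deriv f s) = s := by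
    intro s hs
    have : ({s' : ℝ | s' ∈ Icc w1 w2 ∧ deriv f s ≤ deriv f s'} ∪ {w2}) = Icc s w2 := by
      ext s'
      simp only [mem_union, mem_setOf_eq, mem_singleton_iff, mem_Icc]
      constructor
      · rintro (⟨hs', hr⟩ | rfl)
        · exact ⟨(hsm.le_iff_le).1 hr, hs'.2⟩
        · exact ⟨hs.2, le_refl _⟩
      · rintro ⟨h1, h2⟩
        exact Or.inl ⟨⟨le_trans hs.1 h1, h2⟩, hmono h1⟩
    rw [hg]
    simp only [this]
    exact csInf_Icc hs.2
  have hgbd : ∀ r : ℝ, w1 ≤ g r ∧ g r ≤ w2 := by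
    intro r
    constructor
    · apply le_csInf (hsetne r)
      rintro s (⟨hs, _⟩ | rfl)
      · exact hs.1
      · exact hw12.le
    · exact csInf_le (hsetbdd r) (Or.inr rfl)
  -- strict monotonicity of g on [p, q]
  have hgstrict : ∀ r1 r2 : ℝ, p ≤ r1 → r1 < r2 → r2 ≤ q → g r1 < g r2 := by
    intro r1 r2 ha hb hc
    obtain ⟨s1, hs1mem, hs1⟩ := intermediate_value_Icc hw12.le (cont1 hf).continuousOn
      (show r1 ∈ Icc (deriv f w1) (deriv f w2) from ⟨ha, le_trans hb.le hc⟩)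
    obtain ⟨s2, hs2mem, hs2⟩ := intermediate_value_Icc hw12.le (cont1 hf).continuousOn
      (show r2 ∈ Icc (deriv f w1) (deriv f w2) from ⟨le_trans ha hb.le, hc⟩)
    rw [← hs1, ← hs2, hgid s1 hs1mem, hgid s2 hs2mem]
    have : deriv f s1 < deriv f s2 := by rw [hs1, hs2]; exact hb
    exact hsm.lt_iff_lt.1 this
  -- order facts
  have hw1le1' : w1 ≤ w1' := hw1'mem.1.le
  have hw2'le2 : w2' ≤ w2 := hw2'mem.2.le
  -- Th differences as integrals of g
  have hth1 : Th f w1' - Th f w1 = ∫ y in p..(p+h), g y := by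
    have := th_subst hf hconv hdeg hw1le1' g
      (fun s hs => hgid s ⟨hs.1, le_trans hs.2 hw1'mem.2.le⟩)
    rw [this, hw1']
  have hth2 : Th f w2 - Th f w2' = ∫ y in (q-h)..q, g y := by
    have := th_subst hf hconv hdeg hw2'le2 g
      (fun s hs => hgid s ⟨le_trans hw2'mem.1.le hs.1, hs.2⟩)
    rw [this, hw2']
  -- shift comparison
  set c : ℝ := q - p - h with hc
  have hcpos : 0 < c := by rw [hc]; linarith
  have hshift : ∫ y in (q-h)..q, g y = ∫ y in p..(p+h), g (y + c) := by
    have hpc : p + c = q - h := by rw [hc]; ring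
    have hpc2 : p + h + c = q := by rw [hc]; ring
    rw [intervalIntegral.integral_comp_add_right g c, hpc, hpc2]
  have hii : ∀ d : ℝ, IntervalIntegrable (fun y => g (y + d)) volume p (p+h) := by
    intro d
    apply ii_of_bdd (show Measurable fun y => g (y + d) from
      (hgmono.measurable).comp (measurable_id.add_const d)) (|w1| + |w2|)
    intro s _
    have h1 := (hgbd (s + d)).1
    have h2 := (hgbd (s + d)).2
    rw [abs_le]
    constructor <;> linarith [neg_abs_le w1, le_abs_self w2, abs_nonneg w1, abs_nonneg w2]
  have hii0 : IntervalIntegrable g volume p (p+h) := by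
    have := hii 0
    simpa using this
  have hpos : 0 < ∫ y in p..(p+h), (g (y + c) - g y) := by
    apply intervalIntegral.intervalIntegral_pos_of_pos_on ((hii c).sub hii0)
    · intro y hy
      have : g y < g (y + c) := by
        apply hgstrict y (y + c) hy.1.le (by linarith) (by rw [hc]; linarith [hy.2])
      linarith
    · linarith
  have hsub : (∫ y in p..(p+h), (g (y + c) - g y))
      = (∫ y in p..(p+h), g (y + c)) - ∫ y in p..(p+h), g y :=
    intervalIntegral.integral_sub (hii c) hii0
  -- contradiction
  rw [hsub] at hpos
  rw [hshift] at hth2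
  linarith


section Char

variable (hf : ContDiff ℝ 2 f) (hconv : ∀ u : ℝ, 0 ≤ deriv (deriv f) u)
    (hdeg : volume {u : ℝ | deriv (deriv f) u = 0} = 0)
    (hφmeas : Measurable φ) (hφbdd : ∀ x : ℝ, |φ x| ≤ M)

include hf hconv hdeg hφmeas hφbdd

-- the combined core lemma: on the backward characteristic at an earlier time,
-- w is still a maximizer, and it beats every v ≠ w strictly.
lemma char_core {t1 t2 x2 w : ℝ} (ht1 : 0 < t1) (ht12 : t1 < t2)
    (hw : w ∈ maxSet f φ x2 t2) (v : ℝ) :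
    eFun f φ v (x2 - (t2 - t1) * deriv f w) t1
      ≤ eFun f φ w (x2 - (t2 - t1) * deriv f w) t1
    ∧ (v ≠ w → eFun f φ v (x2 - (t2 - t1) * deriv f w) t1
      < eFun f φ w (x2 - (t2 - t1) * deriv f w) t1) := by
  have ht2 : 0 < t2 := lt_trans ht1 ht12
  have hsm := f'_strictMono hf hconv hdeg
  set x1 : ℝ := x2 - (t2 - t1) * deriv f w with hx1
  set r : ℝ := (t1 * deriv f v + (t2 - t1) * deriv f w) / t2 with hr0
  have hrmem : r ∈ uIcc (deriv f v) (deriv f w) := by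
    rw [Set.mem_uIcc]
    rcases le_total (deriv f v) (deriv f w) with hvw | hvw
    · left
      constructor
      · rw [hr0, le_div_iff₀ ht2]; nlinarith
      · rw [hr0, div_le_iff₀ ht2]; nlinarith
    · right
      constructor
      · rw [hr0, le_div_iff₀ ht2]; nlinarith
      · rw [hr0, div_le_iff₀ ht2]; nlinarith
  obtain ⟨vt, hvtmem, hvt⟩ := intermediate_value_uIcc (cont1 hf).continuousOn hrmem
  have hr : t2 * deriv f vt = t1 * deriv f v + (t2 - t1) * deriv f w := by
    rw [hvt, hr0]; exact mul_div_cancel₀ _ (ne_of_gt ht2)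
  -- coordinates
  have hco1 : x2 - t2 * deriv f vt = x1 - t1 * deriv f v := by
    rw [hr, hx1]; ring
  have hco2 : x1 - t1 * deriv f w = x2 - t2 * deriv f w := by
    rw [hx1]; ring
  -- optimality at (x2, t2)
  have hopt := hw vt
  rw [eFun_closed hf hconv hdeg hφmeas hφbdd ht2 vt x2,
      eFun_closed hf hconv hdeg hφmeas hφbdd ht2 w x2, hco1] at hopt
  -- subgradient inequalities
  have c1 := th_subgrad hf hconv v vt
  have c2 := th_subgrad hf hconv w vt
  have c1' : t1 * (Th f vt + vt * (deriv f v - deriv f vt)) ≤ t1 * Th f v :=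
    mul_le_mul_of_nonneg_left c1 ht1.le
  have c2' : (t2 - t1) * (Th f vt + vt * (deriv f w - deriv f vt)) ≤ (t2 - t1) * Th f w :=
    mul_le_mul_of_nonneg_left c2 (by linarith)
  have e0 : t1 * (vt * (deriv f v - deriv f vt)) + (t2 - t1) * (vt * (deriv f w - deriv f vt))
      = 0 := by linear_combination -vt * hr
  have conv : t2 * Th f vt ≤ t1 * Th f v + (t2 - t1) * Th f w := by nlinarith [c1', c2', e0]
  constructor
  · rw [eFun_closed hf hconv hdeg hφmeas hφbdd ht1 v x1,
        eFun_closed hf hconv hdeg hφmeas hφbdd ht1 w x1, hco2]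
    linarith
  · intro hvw
    have hfvw : deriv f v ≠ deriv f w := fun h => hvw (hsm.injective h)
    have hrv : r ≠ deriv f v := by
      intro h
      apply hfvw
      have : t2 * r = t1 * deriv f v + (t2 - t1) * deriv f w := by
        rw [hr0]; exact mul_div_cancel₀ _ (ne_of_gt ht2)
      rw [h] at this
      have h2 : (t2 - t1) * deriv f v = (t2 - t1) * deriv f w := by linarith
      exact mul_left_cancel₀ (by linarith : t2 - t1 ≠ 0) h2
    have hrw : r ≠ deriv f w := by
      intro h
      apply hfvw
      have : t2 * r = t1 * deriv f v + (t2 - t1) * deriv f w := by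
        rw [hr0]; exact mul_div_cancel₀ _ (ne_of_gt ht2)
      rw [h] at this
      have h2 : t1 * deriv f v = t1 * deriv f w := by linarith
      exact mul_left_cancel₀ (ne_of_gt ht1) h2
    have hvtv : v ≠ vt := fun h => hrv (by rw [← hvt, h])
    have hvtw : w ≠ vt := fun h => hrw (by rw [← hvt, h])
    have c1s := th_subgrad_strict hf hconv hdeg hvtv
    have c2s := th_subgrad_strict hf hconv hdeg hvtw
    have c1s' : t1 * (Th f vt + vt * (deriv f v - deriv f vt)) < t1 * Th f v :=
      (mul_lt_mul_iff_right₀ ht1).2 c1s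
    have c2s' : (t2 - t1) * (Th f vt + vt * (deriv f w - deriv f vt)) < (t2 - t1) * Th f w :=
      (mul_lt_mul_iff_right₀ (by linarith)).2 c2s
    have convs : t2 * Th f vt < t1 * Th f v + (t2 - t1) * Th f w := by
      nlinarith [c1s', c2s', e0]
    rw [eFun_closed hf hconv hdeg hφmeas hφbdd ht1 v x1,
        eFun_closed hf hconv hdeg hφmeas hφbdd ht1 w x1, hco2]
    linarith

lemma char_maxSet {t1 t2 x2 w : ℝ} (ht1 : 0 < t1) (ht12 : t1 ≤ t2)
    (hw : w ∈ maxSet f φ x2 t2) :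
    w ∈ maxSet f φ (x2 - (t2 - t1) * deriv f w) t1 := by
  rcases eq_or_lt_of_le ht12 with rfl | hlt
  · simpa using hw
  · exact fun v => (char_core hf hconv hdeg hφmeas hφbdd ht1 hlt hw v).1

lemma char_unique {t1 t2 x2 w v : ℝ} (ht1 : 0 < t1) (ht12 : t1 < t2)
    (hw : w ∈ maxSet f φ x2 t2)
    (hv : v ∈ maxSet f φ (x2 - (t2 - t1) * deriv f w) t1) : v = w := by
  by_contra hvw
  have hstrict := (char_core hf hconv hdeg hφmeas hφbdd ht1 ht12 hw v).2 hvw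
  exact absurd (hv w) (not_le.2 hstrict)

end Char

section Seq

variable (hf : ContDiff ℝ 2 f) (hconv : ∀ u : ℝ, 0 ≤ deriv (deriv f) u)
    (hdeg : volume {u : ℝ | deriv (deriv f) u = 0} = 0)
    (hφmeas : Measurable φ) (hφbdd : ∀ x : ℝ, |φ x| ≤ M)

include hf hconv hdeg hφmeas hφbdd

lemma maxSet_limit {y t w : ℝ} (ht : 0 < t)
    {yn tn wn : ℕ → ℝ} (hyn : Tendsto yn atTop (nhds y)) (htn : Tendsto tn atTop (nhds t))
    (htn' : ∀ n, 0 < tn n) (hwnmem : ∀ n, wn n ∈ maxSet f φ (yn n) (tn n))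
    (hwn : Tendsto wn atTop (nhds w)) : w ∈ maxSet f φ y t := by
  intro v
  rw [eFun_closed hf hconv hdeg hφmeas hφbdd ht v y,
      eFun_closed hf hconv hdeg hφmeas hφbdd ht w y]
  have hPhi := (phi_cont hφmeas hφbdd).tendsto
  have hf' := (cont1 hf).tendsto
  have hTh := (th_cont hf).tendsto
  -- limit of the v-side
  have h0 : Tendsto (fun n => yn n - tn n * deriv f 0) atTop (nhds (y - t * deriv f 0)) :=
    hyn.sub (htn.mul_const _)
  have hv : Tendsto (fun n => yn n - tn n * deriv f v) atTop (nhds (y - t * deriv f v)) :=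
    hyn.sub (htn.mul_const _)
  have hw' : Tendsto (fun n => yn n - tn n * deriv f (wn n)) atTop
      (nhds (y - t * deriv f w)) :=
    hyn.sub (htn.mul ((hf' w).comp hwn))
  have hF : Tendsto (fun n => eFun f φ v (yn n) (tn n)) atTop
      (nhds (Phi φ (y - t * deriv f 0) - Phi φ (y - t * deriv f v) - t * Th f v)) := by
    apply Tendsto.congr (fun n =>
      (eFun_closed hf hconv hdeg hφmeas hφbdd (htn' n) v (yn n)).symm)
    exact (((hPhi _).comp h0).sub ((hPhi _).comp hv)).sub (htn.mul_const _)
  have hG : Tendsto (fun n => eFun f φ (wn n) (yn n) (tn n)) atTop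
      (nhds (Phi φ (y - t * deriv f 0) - Phi φ (y - t * deriv f w) - t * Th f w)) := by
    apply Tendsto.congr (fun n =>
      (eFun_closed hf hconv hdeg hφmeas hφbdd (htn' n) (wn n) (yn n)).symm)
    exact (((hPhi _).comp h0).sub ((hPhi _).comp hw')).sub
      (htn.mul ((hTh w).comp hwn))
  exact le_of_tendsto_of_tendsto' hF hG (fun n => hwnmem n v)

lemma cross_strict {t₀ t₁ y1 y2 w1 w2 : ℝ} (ht₀ : 0 < t₀) (ht01 : t₀ < t₁)
    (hy : y1 < y2) (hw1 : w1 ∈ maxSet f φ y1 t₁) (hw2 : w2 ∈ maxSet f φ y2 t₁) :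
    y1 - (t₁ - t₀) * deriv f w1 < y2 - (t₁ - t₀) * deriv f w2 := by
  have h1 := cross hf hconv hdeg hφmeas hφbdd (lt_trans ht₀ ht01) hy hw1 hw2
  nlinarith [mul_pos ht₀ (sub_pos.2 hy), sub_nonneg.2 ht01.le]

theorem exists_unique_forward {x₀ t₀ t₁ : ℝ} (ht₀ : 0 < t₀) (ht01 : t₀ < t₁) :
    ∃! y : ℝ, y + (t₀ - t₁) * deriv f (uMinus f φ y t₁) ≤ x₀ ∧
      x₀ ≤ y + (t₀ - t₁) * deriv f (uPlus f φ y t₁) := by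
  have ht₁ : 0 < t₁ := lt_trans ht₀ ht01
  have hΔ : 0 < t₁ - t₀ := by linarith
  have hmono := f'_mono hf hconv
  set S : Set ℝ := {y : ℝ | y + (t₀ - t₁) * deriv f (uMinus f φ y t₁) ≤ x₀} with hS
  -- bounds on f' of maximizers
  have hbd : ∀ y : ℝ, ∀ w ∈ maxSet f φ y t₁,
      deriv f (-M) ≤ deriv f w ∧ deriv f w ≤ deriv f M := by
    intro y w hw
    have := maxSet_subset hf hconv hdeg hφmeas hφbdd ht₁ y hw
    exact ⟨hmono this.1, hmono this.2⟩
  have hSne : S.Nonempty := by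
    refine ⟨x₀ + (t₁ - t₀) * deriv f (-M), ?_⟩
    have := (hbd _ _ (uMinus_mem hf hconv hdeg hφmeas hφbdd ht₁
      (x₀ + (t₁ - t₀) * deriv f (-M)))).1
    simp only [hS, mem_setOf_eq]
    nlinarith
  have hSbdd : BddAbove S := by
    refine ⟨x₀ + (t₁ - t₀) * deriv f M, ?_⟩
    intro y hy
    have := (hbd _ _ (uMinus_mem hf hconv hdeg hφmeas hφbdd ht₁ y)).2
    simp only [hS, mem_setOf_eq] at hy
    nlinarith
  set ystar : ℝ := sSup S with hystar
  -- every y < ystar satisfies the "plus" bound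
  have claim1 : ∀ y : ℝ, y < ystar → y + (t₀ - t₁) * deriv f (uPlus f φ y t₁) ≤ x₀ := by
    intro y hy
    obtain ⟨z, hzS, hyz⟩ := exists_lt_of_lt_csSup hSne hy
    have hstrict := cross_strict hf hconv hdeg hφmeas hφbdd ht₀ ht01 hyz
      (uPlus_mem hf hconv hdeg hφmeas hφbdd ht₁ y)
      (uMinus_mem hf hconv hdeg hφmeas hφbdd ht₁ z)
    simp only [hS, mem_setOf_eq] at hzS
    nlinarith
  have claim2 : ∀ y : ℝ, ystar < y → x₀ < y + (t₀ - t₁) * deriv f (uMinus f φ y t₁) := by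
    intro y hy
    by_contra hcon
    push_neg at hcon
    exact absurd (le_csSup hSbdd (show y ∈ S from hcon)) (not_le.2 hy)
  have hseq : Tendsto (fun n : ℕ => (1 : ℝ) / (n + 1)) atTop (nhds 0) :=
    tendsto_one_div_add_atTop_nhds_zero_nat
  have hIccBdd : Bornology.IsBounded (Icc (-M) M) := Metric.isBounded_Icc _ _
  -- (a)  the minus bound at ystar
  have ha : ystar + (t₀ - t₁) * deriv f (uMinus f φ ystar t₁) ≤ x₀ := by
    set yn : ℕ → ℝ := fun n => ystar - 1 / (n + 1) with hyn
    have hynlt : ∀ n, yn n < ystar := by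
      intro n
      have : (0:ℝ) < 1 / (n + 1) := by positivity
      simp only [hyn]; linarith
    have hyntend : Tendsto yn atTop (nhds ystar) := by
      have h : Tendsto (fun n : ℕ => ystar - 1 / (n + 1)) atTop (nhds (ystar - 0)) :=
        tendsto_const_nhds.sub hseq
      rw [sub_zero] at h
      exact h
    set wn : ℕ → ℝ := fun n => uMinus f φ (yn n) t₁ with hwn
    have hwnmem : ∀ n, wn n ∈ maxSet f φ (yn n) t₁ := fun n =>
      uMinus_mem hf hconv hdeg hφmeas hφbdd ht₁ (yn n)
    obtain ⟨w, _, ψ, hψ, hwtend⟩ := tendsto_subseq_of_bounded hIccBdd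
      (fun n => maxSet_subset hf hconv hdeg hφmeas hφbdd ht₁ (yn n) (hwnmem n))
    have hwmax : w ∈ maxSet f φ ystar t₁ :=
      maxSet_limit hf hconv hdeg hφmeas hφbdd ht₁
        (hyntend.comp hψ.tendsto_atTop) tendsto_const_nhds (fun _ => ht₁)
        (fun n => hwnmem (ψ n)) hwtend
    have hineq : ∀ n, yn (ψ n) + (t₀ - t₁) * deriv f (wn (ψ n)) ≤ x₀ := by
      intro n
      have h1 := claim1 (yn (ψ n)) (hynlt (ψ n))
      have h2 : uPlus f φ (yn (ψ n)) t₁ ≤ wn (ψ n) :=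
        uPlus_le hf hconv hdeg hφmeas hφbdd ht₁ (hwnmem (ψ n))
      have h3 := hmono h2
      nlinarith
    have hFtend : Tendsto (fun n => yn (ψ n) + (t₀ - t₁) * deriv f (wn (ψ n))) atTop
        (nhds (ystar + (t₀ - t₁) * deriv f w)) :=
      (hyntend.comp hψ.tendsto_atTop).add
        (Tendsto.const_mul (t₀ - t₁) (((cont1 hf).tendsto w).comp hwtend))
    have hlim : ystar + (t₀ - t₁) * deriv f w ≤ x₀ :=
      le_of_tendsto_of_tendsto' hFtend tendsto_const_nhds hineq
    have h4 : w ≤ uMinus f φ ystar t₁ := le_uMinus hf hconv hdeg hφmeas hφbdd ht₁ hwmax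
    have h5 := hmono h4
    nlinarith
  -- (b)  the plus bound at ystar
  have hb : x₀ ≤ ystar + (t₀ - t₁) * deriv f (uPlus f φ ystar t₁) := by
    set yn : ℕ → ℝ := fun n => ystar + 1 / (n + 1) with hyn
    have hynlt : ∀ n, ystar < yn n := by
      intro n
      have : (0:ℝ) < 1 / (n + 1) := by positivity
      simp only [hyn]; linarith
    have hyntend : Tendsto yn atTop (nhds ystar) := by
      have h : Tendsto (fun n : ℕ => ystar + 1 / (n + 1)) atTop (nhds (ystar + 0)) :=
        tendsto_const_nhds.add hseq
      rw [add_zero] at h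
      exact h
    set wn : ℕ → ℝ := fun n => uMinus f φ (yn n) t₁ with hwn
    have hwnmem : ∀ n, wn n ∈ maxSet f φ (yn n) t₁ := fun n =>
      uMinus_mem hf hconv hdeg hφmeas hφbdd ht₁ (yn n)
    obtain ⟨w, _, ψ, hψ, hwtend⟩ := tendsto_subseq_of_bounded hIccBdd
      (fun n => maxSet_subset hf hconv hdeg hφmeas hφbdd ht₁ (yn n) (hwnmem n))
    have hwmax : w ∈ maxSet f φ ystar t₁ :=
      maxSet_limit hf hconv hdeg hφmeas hφbdd ht₁
        (hyntend.comp hψ.tendsto_atTop) tendsto_const_nhds (fun _ => ht₁)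
        (fun n => hwnmem (ψ n)) hwtend
    have hineq : ∀ n, x₀ ≤ yn (ψ n) + (t₀ - t₁) * deriv f (wn (ψ n)) :=
      fun n => (claim2 (yn (ψ n)) (hynlt (ψ n))).le
    have hGtend : Tendsto (fun n => yn (ψ n) + (t₀ - t₁) * deriv f (wn (ψ n))) atTop
        (nhds (ystar + (t₀ - t₁) * deriv f w)) :=
      (hyntend.comp hψ.tendsto_atTop).add
        (Tendsto.const_mul (t₀ - t₁) (((cont1 hf).tendsto w).comp hwtend))
    have hlim : x₀ ≤ ystar + (t₀ - t₁) * deriv f w :=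
      le_of_tendsto_of_tendsto' tendsto_const_nhds hGtend hineq
    have h4 : uPlus f φ ystar t₁ ≤ w := uPlus_le hf hconv hdeg hφmeas hφbdd ht₁ hwmax
    have h5 := hmono h4
    nlinarith
  refine ⟨ystar, ⟨ha, hb⟩, ?_⟩
  -- uniqueness
  intro y hy
  by_contra hne
  rcases lt_or_gt_of_ne hne with h | h
  · -- y < ystar
    have hstrict := cross_strict hf hconv hdeg hφmeas hφbdd ht₀ ht01 h
      (uPlus_mem hf hconv hdeg hφmeas hφbdd ht₁ y)
      (uMinus_mem hf hconv hdeg hφmeas hφbdd ht₁ ystar)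
    nlinarith [hy.2, ha]
  · have hstrict := cross_strict hf hconv hdeg hφmeas hφbdd ht₀ ht01 h
      (uPlus_mem hf hconv hdeg hφmeas hφbdd ht₁ ystar)
      (uMinus_mem hf hconv hdeg hφmeas hφbdd ht₁ y)
    nlinarith [hy.1, hb]

end Seq

section Nest

variable (hf : ContDiff ℝ 2 f) (hconv : ∀ u : ℝ, 0 ≤ deriv (deriv f) u)
    (hdeg : volume {u : ℝ | deriv (deriv f) u = 0} = 0)
    (hφmeas : Measurable φ) (hφbdd : ∀ x : ℝ, |φ x| ≤ M)

include hf hconv hdeg hφmeas hφbdd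

theorem nesting {x₀ t₀ : ℝ} (ht₀ : 0 < t₀) (X : ℝ → ℝ) (hX0 : X t₀ = x₀)
    (hXs : ∀ t₁ : ℝ, t₀ < t₁ →
      X t₁ + (t₀ - t₁) * deriv f (uMinus f φ (X t₁) t₁) ≤ x₀ ∧
      x₀ ≤ X t₁ + (t₀ - t₁) * deriv f (uPlus f φ (X t₁) t₁))
    {t₁ t₂ : ℝ} (h01 : t₀ ≤ t₁) (h12 : t₁ ≤ t₂) :
    (X t₂ - t₂ * deriv f (uMinus f φ (X t₂) t₂)
        ≤ X t₁ - t₁ * deriv f (uMinus f φ (X t₁) t₁)) ∧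
    (X t₁ - t₁ * deriv f (uPlus f φ (X t₁) t₁)
        ≤ X t₂ - t₂ * deriv f (uPlus f φ (X t₂) t₂)) := by
  rcases eq_or_lt_of_le h12 with rfl | hlt
  · exact ⟨le_refl _, le_refl _⟩
  have ht₁ : 0 < t₁ := lt_of_lt_of_le ht₀ h01
  have ht₂ : 0 < t₂ := lt_trans ht₁ hlt
  have ht₀₂ : t₀ < t₂ := lt_of_le_of_lt h01 hlt
  have hmono := f'_mono hf hconv
  constructor
  · -- minus side
    set w2 : ℝ := uMinus f φ (X t₂) t₂ with hw2def
    have hw2 : w2 ∈ maxSet f φ (X t₂) t₂ := uMinus_mem hf hconv hdeg hφmeas hφbdd ht₂ (X t₂)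
    set z : ℝ := X t₂ - (t₂ - t₁) * deriv f w2 with hzdef
    have hz : w2 ∈ maxSet f φ z t₁ := char_maxSet hf hconv hdeg hφmeas hφbdd ht₁ h12 hw2
    have hsand2 := (hXs t₂ ht₀₂).1
    rw [← hw2def] at hsand2
    -- z at time t₀ :  z - (t₁ - t₀) f' w2 = X t₂ - (t₂ - t₀) f' w2 ≤ x₀
    have hzt0 : z - (t₁ - t₀) * deriv f w2 ≤ x₀ := by
      rw [hzdef]; nlinarith [hsand2]
    have hzle : z ≤ X t₁ := by
      by_contra hcon
      push_neg at hcon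
      rcases eq_or_lt_of_le h01 with rfl | h01'
      · rw [hX0] at hcon
        simp only [sub_self, zero_mul, sub_zero] at hzt0
        linarith
      · have hsand1 := (hXs t₁ h01').2
        have hstrict := cross_strict hf hconv hdeg hφmeas hφbdd ht₀ h01' hcon
          (uPlus_mem hf hconv hdeg hφmeas hφbdd ht₁ (X t₁)) hz
        nlinarith [hsand1, hzt0, hstrict]
    rcases eq_or_lt_of_le hzle with heq | hltz
    · -- z = X t₁ : unique maximizer
      have huniq : uMinus f φ (X t₁) t₁ = w2 := by
        apply char_unique hf hconv hdeg hφmeas hφbdd ht₁ hlt hw2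
        rw [← hzdef, heq]
        exact uMinus_mem hf hconv hdeg hφmeas hφbdd ht₁ (X t₁)
      rw [huniq, ← heq, hzdef]
      ring_nf
      exact le_refl _
    · have := cross hf hconv hdeg hφmeas hφbdd ht₁ hltz hz
        (uMinus_mem hf hconv hdeg hφmeas hφbdd ht₁ (X t₁))
      rw [hzdef] at this
      linarith
  · -- plus side
    set w2 : ℝ := uPlus f φ (X t₂) t₂ with hw2def
    have hw2 : w2 ∈ maxSet f φ (X t₂) t₂ := uPlus_mem hf hconv hdeg hφmeas hφbdd ht₂ (X t₂)
    set z : ℝ := X t₂ - (t₂ - t₁) * deriv f w2 with hzdef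
    have hz : w2 ∈ maxSet f φ z t₁ := char_maxSet hf hconv hdeg hφmeas hφbdd ht₁ h12 hw2
    have hsand2 := (hXs t₂ ht₀₂).2
    rw [← hw2def] at hsand2
    have hzt0 : x₀ ≤ z - (t₁ - t₀) * deriv f w2 := by
      rw [hzdef]; nlinarith [hsand2]
    have hzle : X t₁ ≤ z := by
      by_contra hcon
      push_neg at hcon
      rcases eq_or_lt_of_le h01 with rfl | h01'
      · rw [hX0] at hcon
        simp only [sub_self, zero_mul, sub_zero] at hzt0
        linarith
      · have hsand1 := (hXs t₁ h01').1
        have hstrict := cross_strict hf hconv hdeg hφmeas hφbdd ht₀ h01' hcon hz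
          (uMinus_mem hf hconv hdeg hφmeas hφbdd ht₁ (X t₁))
        nlinarith [hsand1, hzt0, hstrict]
    rcases eq_or_lt_of_le hzle with heq | hltz
    · have huniq : uPlus f φ (X t₁) t₁ = w2 := by
        apply char_unique hf hconv hdeg hφmeas hφbdd ht₁ hlt hw2
        rw [← hzdef, ← heq]
        exact uPlus_mem hf hconv hdeg hφmeas hφbdd ht₁ (X t₁)
      rw [huniq, heq, hzdef]
      ring_nf
      exact le_refl _
    · have := cross hf hconv hdeg hφmeas hφbdd ht₁ hltz
        (uPlus_mem hf hconv hdeg hφmeas hφbdd ht₁ (X t₁)) hz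
      rw [hzdef] at this
      linarith

end Nest

section Cont

variable (hf : ContDiff ℝ 2 f) (hconv : ∀ u : ℝ, 0 ≤ deriv (deriv f) u)
    (hdeg : volume {u : ℝ | deriv (deriv f) u = 0} = 0)
    (hφmeas : Measurable φ) (hφbdd : ∀ x : ℝ, |φ x| ≤ M)

include hf hconv hdeg hφmeas hφbdd

theorem Xcont {x₀ t₀ : ℝ} (ht₀ : 0 < t₀) (X : ℝ → ℝ) (hX0 : X t₀ = x₀)
    (hXs : ∀ t₁ : ℝ, t₀ < t₁ →
      X t₁ + (t₀ - t₁) * deriv f (uMinus f φ (X t₁) t₁) ≤ x₀ ∧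
      x₀ ≤ X t₁ + (t₀ - t₁) * deriv f (uPlus f φ (X t₁) t₁)) :
    ContinuousOn X (Set.Ici t₀) := by
  have hmono := f'_mono hf hconv
  set C : ℝ := |deriv f (-M)| + |deriv f M| with hC
  have hC0 : 0 ≤ C := by positivity
  have hfw : ∀ t : ℝ, 0 < t → ∀ x : ℝ, ∀ w ∈ maxSet f φ x t,
      -C ≤ deriv f w ∧ deriv f w ≤ C := by
    intro t ht x w hw
    have hmem := maxSet_subset hf hconv hdeg hφmeas hφbdd ht x hw
    have h1 := hmono hmem.1
    have h2 := hmono hmem.2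
    constructor
    · calc -C ≤ -|deriv f (-M)| := by rw [hC]; nlinarith [abs_nonneg (deriv f M)]
        _ ≤ deriv f (-M) := neg_abs_le _
        _ ≤ deriv f w := h1
    · calc deriv f w ≤ deriv f M := h2
        _ ≤ |deriv f M| := le_abs_self _
        _ ≤ C := by rw [hC]; nlinarith [abs_nonneg (deriv f (-M))]
  have hXbound : ∀ t : ℝ, t₀ ≤ t → |X t - x₀| ≤ (t - t₀) * C := by
    intro t ht
    rcases eq_or_lt_of_le ht with rfl | hlt
    · simp [hX0]
    · have htpos : 0 < t := lt_trans ht₀ hlt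
      have h1 := (hXs t hlt).1
      have h2 := (hXs t hlt).2
      have hb1 := hfw t htpos (X t) _ (uMinus_mem hf hconv hdeg hφmeas hφbdd htpos (X t))
      have hb2 := hfw t htpos (X t) _ (uPlus_mem hf hconv hdeg hφmeas hφbdd htpos (X t))
      rw [abs_le]
      constructor <;> nlinarith [hb1.1, hb1.2, hb2.1, hb2.2]
  intro tstar htstar
  rcases eq_or_lt_of_le (show t₀ ≤ tstar from htstar) with rfl | hlt
  · -- continuity at the base point
    rw [Metric.continuousWithinAt_iff]
    intro ε hε
    refine ⟨ε / (C + 1), by positivity, ?_⟩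
    intro t htm hdist
    have ht0t : t₀ ≤ t := htm
    have hd : dist t t₀ = |t - t₀| := Real.dist_eq t t₀
    have habs : |t - t₀| = t - t₀ := abs_of_nonneg (by linarith)
    have hXb := hXbound t ht0t
    have : dist (X t) (X t₀) = |X t - x₀| := by rw [Real.dist_eq, hX0]
    rw [this]
    have h1 : t - t₀ < ε / (C + 1) := by rw [hd, habs] at hdist; exact hdist
    calc |X t - x₀| ≤ (t - t₀) * C := hXb
      _ ≤ (ε / (C + 1)) * C := by nlinarith
      _ < ε := by rw [div_mul_eq_mul_div, div_lt_iff₀ (by linarith)]; nlinarith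
  · -- continuity at interior times
    by_contra hnot
    rw [Metric.continuousWithinAt_iff] at hnot
    push_neg at hnot
    obtain ⟨ε, hε, hall⟩ := hnot
    set δn : ℕ → ℝ := fun n => min (1 / (n + 1)) ((tstar - t₀) / 2) with hδn
    have hδnpos : ∀ n, 0 < δn n := by
      intro n
      apply lt_min (by positivity) (by linarith)
    choose T hTmem hTdist hTfar using fun n => hall (δn n) (hδnpos n)
    have hTgt : ∀ n, t₀ < T n := by
      intro n
      have h1 := hTdist n
      have h2 : dist (T n) tstar < (tstar - t₀) / 2 :=
        lt_of_lt_of_le h1 (min_le_right _ _)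
      rw [Real.dist_eq, abs_lt] at h2
      linarith [h2.1]
    have hTle : ∀ n, T n ≤ tstar + 1 := by
      intro n
      have h1 := hTdist n
      have h2 : dist (T n) tstar < 1 := by
        apply lt_of_lt_of_le h1 (le_trans (min_le_left _ _) ?_)
        rw [div_le_one (by positivity)]
        linarith [Nat.cast_nonneg (α := ℝ) n]
      rw [Real.dist_eq, abs_lt] at h2
      linarith [h2.1, h2.2]
    have hTtend : Tendsto T atTop (nhds tstar) := by
      rw [tendsto_iff_dist_tendsto_zero]
      apply squeeze_zero (fun n => dist_nonneg)
        (fun n => le_of_lt (lt_of_lt_of_le (hTdist n) (min_le_left _ _)))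
      exact tendsto_one_div_add_atTop_nhds_zero_nat
    -- boundedness of X ∘ T
    set K : ℝ := (tstar + 1 - t₀) * C with hK
    have hXTmem : ∀ n, X (T n) ∈ Icc (x₀ - K) (x₀ + K) := by
      intro n
      have hb := hXbound (T n) (hTgt n).le
      have h2 : (T n - t₀) * C ≤ K := by
        rw [hK]
        nlinarith [hTle n, hC0]
      rw [mem_Icc]
      rw [abs_le] at hb
      constructor <;> nlinarith [hb.1, hb.2]
    obtain ⟨xb, _, σ1, hσ1, hX1⟩ :=
      tendsto_subseq_of_bounded (Metric.isBounded_Icc (x₀ - K) (x₀ + K)) hXTmem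
    have hTpos : ∀ n, 0 < T n := fun n => lt_trans ht₀ (hTgt n)
    obtain ⟨wb, _, σ2, hσ2, hW⟩ :=
      tendsto_subseq_of_bounded (Metric.isBounded_Icc (-M) M)
        (x := fun n => uMinus f φ (X (T (σ1 n))) (T (σ1 n)))
        (fun n => maxSet_subset hf hconv hdeg hφmeas hφbdd (hTpos (σ1 n)) _
          (uMinus_mem hf hconv hdeg hφmeas hφbdd (hTpos (σ1 n)) _))
    obtain ⟨vb, _, σ3, hσ3, hV⟩ :=
      tendsto_subseq_of_bounded (Metric.isBounded_Icc (-M) M)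
        (x := fun n => uPlus f φ (X (T (σ1 (σ2 n)))) (T (σ1 (σ2 n))))
        (fun n => maxSet_subset hf hconv hdeg hφmeas hφbdd (hTpos (σ1 (σ2 n))) _
          (uPlus_mem hf hconv hdeg hφmeas hφbdd (hTpos (σ1 (σ2 n))) _))
    set τ : ℕ → ℕ := fun n => σ1 (σ2 (σ3 n)) with hτ
    have hτtend : Tendsto τ atTop atTop :=
      hσ1.tendsto_atTop.comp (hσ2.tendsto_atTop.comp hσ3.tendsto_atTop)
    have hTτ : Tendsto (fun n => T (τ n)) atTop (nhds tstar) := hTtend.comp hτtend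
    have hXτ : Tendsto (fun n => X (T (τ n))) atTop (nhds xb) :=
      hX1.comp ((hσ2.comp hσ3).tendsto_atTop)
    have hWτ : Tendsto (fun n => uMinus f φ (X (T (τ n))) (T (τ n))) atTop (nhds wb) :=
      hW.comp hσ3.tendsto_atTop
    have hVτ : Tendsto (fun n => uPlus f φ (X (T (τ n))) (T (τ n))) atTop (nhds vb) := hV
    have htstarpos : 0 < tstar := lt_trans ht₀ hlt
    have hwbmax : wb ∈ maxSet f φ xb tstar :=
      maxSet_limit hf hconv hdeg hφmeas hφbdd htstarpos hXτ hTτ (fun n => hTpos (τ n))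
        (fun n => uMinus_mem hf hconv hdeg hφmeas hφbdd (hTpos (τ n)) _) hWτ
    have hvbmax : vb ∈ maxSet f φ xb tstar :=
      maxSet_limit hf hconv hdeg hφmeas hφbdd htstarpos hXτ hTτ (fun n => hTpos (τ n))
        (fun n => uPlus_mem hf hconv hdeg hφmeas hφbdd (hTpos (τ n)) _) hVτ
    -- limit sandwich
    have hs1 : xb + (t₀ - tstar) * deriv f wb ≤ x₀ := by
      have hlim : Tendsto (fun n => X (T (τ n)) + (t₀ - T (τ n)) *
          deriv f (uMinus f φ (X (T (τ n))) (T (τ n)))) atTop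
          (nhds (xb + (t₀ - tstar) * deriv f wb)) :=
        hXτ.add ((tendsto_const_nhds.sub hTτ).mul (((cont1 hf).tendsto wb).comp hWτ))
      exact le_of_tendsto_of_tendsto' hlim tendsto_const_nhds
        (fun n => (hXs (T (τ n)) (hTgt (τ n))).1)
    have hs2 : x₀ ≤ xb + (t₀ - tstar) * deriv f vb := by
      have hlim : Tendsto (fun n => X (T (τ n)) + (t₀ - T (τ n)) *
          deriv f (uPlus f φ (X (T (τ n))) (T (τ n)))) atTop
          (nhds (xb + (t₀ - tstar) * deriv f vb)) :=
        hXτ.add ((tendsto_const_nhds.sub hTτ).mul (((cont1 hf).tendsto vb).comp hVτ))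
      exact le_of_tendsto_of_tendsto' tendsto_const_nhds hlim
        (fun n => (hXs (T (τ n)) (hTgt (τ n))).2)
    -- xb satisfies the sandwich at tstar
    have hxbsand : xb + (t₀ - tstar) * deriv f (uMinus f φ xb tstar) ≤ x₀ ∧
        x₀ ≤ xb + (t₀ - tstar) * deriv f (uPlus f φ xb tstar) := by
      constructor
      · have h4 := hmono (le_uMinus hf hconv hdeg hφmeas hφbdd htstarpos hwbmax)
        nlinarith [hs1]
      · have h4 := hmono (uPlus_le hf hconv hdeg hφmeas hφbdd htstarpos hvbmax)
        nlinarith [hs2]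
    have hXtsand := hXs tstar hlt
    have hEU := exists_unique_forward hf hconv hdeg hφmeas hφbdd
      (x₀ := x₀) ht₀ hlt
    have hxbeq : xb = X tstar := by
      rw [hEU.unique hxbsand hXtsand]
    -- contradiction with hTfar
    have hdistlim : Tendsto (fun n => dist (X (T (τ n))) (X tstar)) atTop
        (nhds (dist xb (X tstar))) :=
      hXτ.dist tendsto_const_nhds
    have hge : ε ≤ dist xb (X tstar) :=
      ge_of_tendsto' hdistlim (fun n => hTfar (τ n))
    rw [hxbeq, dist_self] at hge
    linarith
end Cont


end S16

/-- existence, uniqueness and continuity of the forward generalized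
characteristic, with nested backward characteristic triangles. -/
theorem stmt16_forward_generalized_characteristic
    (f φ : ℝ → ℝ) (M : ℝ)
    (hf : ContDiff ℝ 2 f)
    (hconv : ∀ u : ℝ, 0 ≤ deriv (deriv f) u)
    (hdeg : volume {u : ℝ | deriv (deriv f) u = 0} = 0)
    (hφmeas : Measurable φ)
    (hφbdd : ∀ x : ℝ, |φ x| ≤ M)
    (x₀ t₀ : ℝ) (ht₀ : 0 < t₀) :
    (∀ t₁ : ℝ, t₀ < t₁ → ∃! y : ℝ,
      y + (t₀ - t₁) * deriv f (uMinus f φ y t₁) ≤ x₀ ∧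
      x₀ ≤ y + (t₀ - t₁) * deriv f (uPlus f φ y t₁)) ∧
    (∀ X : ℝ → ℝ, X t₀ = x₀ →
      (∀ t₁ : ℝ, t₀ < t₁ →
        X t₁ + (t₀ - t₁) * deriv f (uMinus f φ (X t₁) t₁) ≤ x₀ ∧
        x₀ ≤ X t₁ + (t₀ - t₁) * deriv f (uPlus f φ (X t₁) t₁)) →
      ContinuousOn X (Set.Ici t₀) ∧
      ∀ t₁ t₂ : ℝ, t₀ ≤ t₁ → t₁ ≤ t₂ →
        (X t₂ - t₂ * deriv f (uMinus f φ (X t₂) t₂)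
            ≤ X t₁ - t₁ * deriv f (uMinus f φ (X t₁) t₁)) ∧
        (X t₁ - t₁ * deriv f (uPlus f φ (X t₁) t₁)
            ≤ X t₂ - t₂ * deriv f (uPlus f φ (X t₂) t₂))) := by
  constructor
  · intro t₁ ht₁
    exact S16.exists_unique_forward hf hconv hdeg hφmeas hφbdd ht₀ ht₁
  · intro X hX0 hXs
    constructor
    · exact S16.Xcont hf hconv hdeg hφmeas hφbdd ht₀ X hX0 hXs
    · intro t₁ t₂ h01 h12
      exact S16.nesting hf hconv hdeg hφmeas hφbdd ht₀ X hX0 hXs h01 h12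
end

section
/- (Uniform decay in the sup-norm for uniformly convex flux and Lᵖ perturbations of a constant.) Assume in addition that there is c₀ > 0 with f''(u) ≥ c₀ for all u ∈ ℝ, and let m ∈ ℝ and p ∈ [1,∞) be such that ∫_ℝ |φ(x) − m|ᵖ dx < ∞. Then there exists a constant C > 0 (depending only on f, c₀, p, M, and the Lᵖ-norm of φ − m) such that for every (x,t) ∈ ℝ × (0,∞) and every w ∈ 𝒰(x,t), |w − m| ≤ C·t^{−1/(p+1)}. In particular |u⁺(x,t) − m| ≤ C·t^{−1/(p+1)} and |u⁻(x,t) − m| ≤ C·t^{−1/(p+1)} uniformly in x ∈ ℝ. -/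
open MeasureTheory Filter Set

lemma deriv_facts {f : ℝ → ℝ} (hf : ContDiff ℝ 2 f) :
    Differentiable ℝ (deriv f) ∧ Continuous (deriv (deriv f)) := by
  have h2 : ContDiff ℝ (1 + 1 : WithTop ℕ∞) f := by norm_num at hf ⊢; exact hf
  rw [contDiff_succ_iff_deriv] at h2
  exact contDiff_one_iff_deriv.mp h2.2.2

lemma ii_bdd {f : ℝ → ℝ} (hc : Continuous (deriv (deriv f))) {ψ : ℝ → ℝ} {C : ℝ}
    (hψ : Measurable ψ) (hb : ∀ y, |ψ y| ≤ C) (a b : ℝ) :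
    IntervalIntegrable (fun s => deriv (deriv f) s * ψ s) volume a b := by
  have h1 : IntervalIntegrable ψ volume a b := by
    rw [intervalIntegrable_iff]
    exact Measure.integrableOn_of_bounded measure_Ioc_lt_top.ne hψ.aestronglyMeasurable
      (ae_of_all _ fun y => by simpa [Real.norm_eq_abs] using hb y)
  exact h1.continuousOn_mul hc.continuousOn

lemma ii_main {f φ : ℝ → ℝ} {M : ℝ} (hf : ContDiff ℝ 2 f)
    (hφmeas : Measurable φ) (hφbdd : ∀ x : ℝ, |φ x| ≤ M) (x t a b : ℝ) :
    IntervalIntegrable (fun s => deriv (deriv f) s * (φ (x - t * deriv f s) - s))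
      volume a b := by
  obtain ⟨hd1, hc2⟩ := deriv_facts hf
  have hψ : Measurable fun s => φ (x - t * deriv f s) :=
    hφmeas.comp ((continuous_const.sub (continuous_const.mul hd1.continuous)).measurable)
  have h1 := ii_bdd hc2 hψ (fun y => hφbdd _) a b
  have h2 : IntervalIntegrable (fun s => deriv (deriv f) s * s) volume a b :=
    (hc2.mul continuous_id).intervalIntegrable a b
  simpa [mul_sub] using h1.sub h2

lemma eFun_diff {f φ : ℝ → ℝ} {M : ℝ} (hf : ContDiff ℝ 2 f)
    (hφmeas : Measurable φ) (hφbdd : ∀ x : ℝ, |φ x| ≤ M) (x t v w : ℝ) :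
    eFun f φ w x t - eFun f φ v x t
      = t * ∫ s in v..w, deriv (deriv f) s * (φ (x - t * deriv f s) - s) := by
  unfold eFun
  rw [← mul_sub, intervalIntegral.integral_interval_sub_left
    (ii_main hf hφmeas hφbdd x t 0 w) (ii_main hf hφmeas hφbdd x t 0 v)]

lemma eFun_continuous {f φ : ℝ → ℝ} {M : ℝ} (hf : ContDiff ℝ 2 f)
    (hφmeas : Measurable φ) (hφbdd : ∀ x : ℝ, |φ x| ≤ M) (x t : ℝ) :
    Continuous (fun w => eFun f φ w x t) := by
  unfold eFun
  exact continuous_const.mul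
    (intervalIntegral.continuous_primitive (fun a b => ii_main hf hφmeas hφbdd x t a b) 0)

lemma eFun_lt_right {f φ : ℝ → ℝ} {M : ℝ} (hf : ContDiff ℝ 2 f)
    (hconv : ∀ u : ℝ, 0 ≤ deriv (deriv f) u)
    (hφmeas : Measurable φ) (hφbdd : ∀ x : ℝ, |φ x| ≤ M)
    {c₀ : ℝ} (hc₀ : 0 < c₀) (huc : ∀ u : ℝ, c₀ ≤ deriv (deriv f) u)
    {x t v : ℝ} (ht : 0 < t) (hv : M < v) :
    eFun f φ v x t < eFun f φ M x t := by
  have hdiff := eFun_diff hf hφmeas hφbdd x t M v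
  have hmono : ∫ s in M..v, deriv (deriv f) s * (φ (x - t * deriv f s) - s)
      ≤ ∫ s in M..v, c₀ * (M - s) := by
    apply intervalIntegral.integral_mono_on hv.le (ii_main hf hφmeas hφbdd x t M v)
      ((continuous_const.mul (continuous_const.sub continuous_id)).intervalIntegrable M v)
    intro s hs
    have h1 : φ (x - t * deriv f s) - s ≤ M - s :=
      sub_le_sub_right (le_of_abs_le (hφbdd _)) s
    calc deriv (deriv f) s * (φ (x - t * deriv f s) - s)
        ≤ deriv (deriv f) s * (M - s) := mul_le_mul_of_nonneg_left h1 (hconv s)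
      _ ≤ c₀ * (M - s) := mul_le_mul_of_nonpos_right (huc s) (by linarith [hs.1])
  have hcomp : ∫ s in M..v, c₀ * (M - s) = c₀ * ((v - M) * M - (v ^ 2 - M ^ 2) / 2) := by
    rw [intervalIntegral.integral_const_mul,
      intervalIntegral.integral_sub (f := fun _ => M) (g := fun s => s)
        intervalIntegrable_const (continuous_id.intervalIntegrable M v),
      intervalIntegral.integral_const, integral_id]
    simp [smul_eq_mul]
  have hneg : c₀ * ((v - M) * M - (v ^ 2 - M ^ 2) / 2) < 0 := by
    nlinarith [mul_pos hc₀ (pow_pos (sub_pos.2 hv) 2)]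
  have hI : ∫ s in M..v, deriv (deriv f) s * (φ (x - t * deriv f s) - s) < 0 :=
    hmono.trans_lt (by rw [hcomp]; exact hneg)
  have hlt := mul_neg_of_pos_of_neg ht hI
  linarith [hdiff, hlt]

lemma eFun_lt_left {f φ : ℝ → ℝ} {M : ℝ} (hf : ContDiff ℝ 2 f)
    (hconv : ∀ u : ℝ, 0 ≤ deriv (deriv f) u)
    (hφmeas : Measurable φ) (hφbdd : ∀ x : ℝ, |φ x| ≤ M)
    {c₀ : ℝ} (hc₀ : 0 < c₀) (huc : ∀ u : ℝ, c₀ ≤ deriv (deriv f) u)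
    {x t v : ℝ} (ht : 0 < t) (hv : v < -M) :
    eFun f φ v x t < eFun f φ (-M) x t := by
  have hdiff := eFun_diff hf hφmeas hφbdd x t (-M) v
  rw [intervalIntegral.integral_symm] at hdiff
  have hmono : ∫ s in v..(-M), c₀ * (-M - s)
      ≤ ∫ s in v..(-M), deriv (deriv f) s * (φ (x - t * deriv f s) - s) := by
    apply intervalIntegral.integral_mono_on hv.le
      ((continuous_const.mul (continuous_const.sub continuous_id)).intervalIntegrable v (-M))
      (ii_main hf hφmeas hφbdd x t v (-M))
    intro s hs
    have h1 : -M - s ≤ φ (x - t * deriv f s) - s :=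
      sub_le_sub_right (neg_le_of_abs_le (hφbdd _)) s
    calc c₀ * (-M - s) ≤ deriv (deriv f) s * (-M - s) :=
          mul_le_mul_of_nonneg_right (huc s) (by linarith [hs.2])
      _ ≤ deriv (deriv f) s * (φ (x - t * deriv f s) - s) :=
          mul_le_mul_of_nonneg_left h1 (hconv s)
  have hcomp : ∫ s in v..(-M), c₀ * (-M - s)
      = c₀ * ((-M - v) * (-M) - ((-M) ^ 2 - v ^ 2) / 2) := by
    rw [intervalIntegral.integral_const_mul,
      intervalIntegral.integral_sub (f := fun _ => (-M : ℝ)) (g := fun s => s)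
        intervalIntegrable_const (continuous_id.intervalIntegrable v (-M)),
      intervalIntegral.integral_const, integral_id]
    simp [smul_eq_mul]
  have hpos : 0 < c₀ * ((-M - v) * (-M) - ((-M) ^ 2 - v ^ 2) / 2) := by
    nlinarith [mul_pos hc₀ (pow_pos (sub_pos.2 hv) 2)]
  have hI : 0 < ∫ s in v..(-M), deriv (deriv f) s * (φ (x - t * deriv f s) - s) :=
    lt_of_lt_of_le (by rw [hcomp]; exact hpos) hmono
  have hlt := mul_neg_of_pos_of_neg ht (neg_neg_of_pos hI)
  linarith [hdiff, hlt]

lemma maxSet_subset {f φ : ℝ → ℝ} {M : ℝ} (hf : ContDiff ℝ 2 f)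
    (hconv : ∀ u : ℝ, 0 ≤ deriv (deriv f) u)
    (hφmeas : Measurable φ) (hφbdd : ∀ x : ℝ, |φ x| ≤ M)
    {c₀ : ℝ} (hc₀ : 0 < c₀) (huc : ∀ u : ℝ, c₀ ≤ deriv (deriv f) u)
    {x t : ℝ} (ht : 0 < t) : maxSet f φ x t ⊆ Icc (-M) M := by
  intro w hw
  constructor
  · by_contra hcon
    push_neg at hcon
    exact absurd (hw (-M)) (not_le.mpr (eFun_lt_left hf hconv hφmeas hφbdd hc₀ huc ht hcon))
  · by_contra hcon
    push_neg at hcon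
    exact absurd (hw M) (not_le.mpr (eFun_lt_right hf hconv hφmeas hφbdd hc₀ huc ht hcon))

lemma maxSet_isClosed {f φ : ℝ → ℝ} {M : ℝ} (hf : ContDiff ℝ 2 f)
    (hφmeas : Measurable φ) (hφbdd : ∀ x : ℝ, |φ x| ≤ M) (x t : ℝ) :
    IsClosed (maxSet f φ x t) := by
  have : maxSet f φ x t = ⋂ v, {w : ℝ | eFun f φ v x t ≤ eFun f φ w x t} := by
    ext w; simp [maxSet, mem_iInter]
  rw [this]
  exact isClosed_iInter fun v =>
    isClosed_le continuous_const (eFun_continuous hf hφmeas hφbdd x t)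

lemma maxSet_nonempty {f φ : ℝ → ℝ} {M : ℝ} (hf : ContDiff ℝ 2 f)
    (hconv : ∀ u : ℝ, 0 ≤ deriv (deriv f) u)
    (hφmeas : Measurable φ) (hφbdd : ∀ x : ℝ, |φ x| ≤ M)
    {c₀ : ℝ} (hc₀ : 0 < c₀) (huc : ∀ u : ℝ, c₀ ≤ deriv (deriv f) u)
    {x t : ℝ} (ht : 0 < t) : (maxSet f φ x t).Nonempty := by
  have hM0 : 0 ≤ M := (abs_nonneg _).trans (hφbdd 0)
  obtain ⟨w₀, hw₀mem, hw₀max⟩ := isCompact_Icc.exists_isMaxOn (α := ℝ)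
    (Set.nonempty_Icc.mpr (by linarith : -M ≤ M))
    ((eFun_continuous hf hφmeas hφbdd x t).continuousOn)
  refine ⟨w₀, fun v => ?_⟩
  rcases le_or_gt v M with hvM | hvM
  · rcases le_or_gt (-M) v with hvm | hvm
    · exact hw₀max ⟨hvm, hvM⟩
    · exact (eFun_lt_left hf hconv hφmeas hφbdd hc₀ huc ht hvm).le.trans
        (hw₀max ⟨by linarith, by linarith⟩)
  · exact (eFun_lt_right hf hconv hφmeas hφbdd hc₀ huc ht hvM).le.trans
      (hw₀max ⟨by linarith, by linarith⟩)

lemma self_le_rpow_aux {a ε p : ℝ} (ha : 0 ≤ a) (hε : 0 < ε) (hp : 1 ≤ p) :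
    a ≤ ε + ε ^ (1 - p) * a ^ p := by
  rcases le_or_gt a ε with h | h
  · have h0 : 0 ≤ ε ^ (1 - p) * a ^ p :=
      mul_nonneg (Real.rpow_nonneg hε.le _) (Real.rpow_nonneg ha _)
    linarith
  · have ha' : 0 < a := hε.trans h
    have h1 : a ^ (1 - p) ≤ ε ^ (1 - p) :=
      Real.rpow_le_rpow_of_nonpos hε h.le (by linarith)
    have h2 : a ^ p * a ^ (1 - p) = a := by
      rw [← Real.rpow_add ha']; norm_num
    calc a = a ^ p * a ^ (1 - p) := h2.symm
      _ ≤ a ^ p * ε ^ (1 - p) :=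
        mul_le_mul_of_nonneg_left h1 (Real.rpow_nonneg ha p)
      _ = ε ^ (1 - p) * a ^ p := mul_comm _ _
      _ ≤ ε + ε ^ (1 - p) * a ^ p := by linarith [hε.le]

lemma lower_bound_left {f : ℝ → ℝ} (hf : ContDiff ℝ 2 f)
    {c₀ : ℝ} (huc : ∀ u : ℝ, c₀ ≤ deriv (deriv f) u)
    {a b : ℝ} (hab : a ≤ b) :
    c₀ * ((b - a) ^ 2 / 2) ≤ ∫ s in a..b, deriv (deriv f) s * (s - a) := by
  obtain ⟨hd1, hc2⟩ := deriv_facts hf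
  have hmono : ∫ s in a..b, c₀ * (s - a) ≤ ∫ s in a..b, deriv (deriv f) s * (s - a) := by
    apply intervalIntegral.integral_mono_on hab
      ((by fun_prop : Continuous fun s : ℝ => c₀ * (s - a)).intervalIntegrable a b)
      ((by fun_prop : Continuous fun s : ℝ => deriv (deriv f) s * (s - a)).intervalIntegrable a b)
    intro s hs
    exact mul_le_mul_of_nonneg_right (huc s) (by linarith [hs.1])
  have hcomp : ∫ s in a..b, c₀ * (s - a) = c₀ * ((b - a) ^ 2 / 2) := by
    rw [intervalIntegral.integral_const_mul,
      intervalIntegral.integral_sub (f := fun s => s) (g := fun _ => a)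
        (continuous_id.intervalIntegrable a b) intervalIntegrable_const,
      intervalIntegral.integral_const, integral_id]
    simp only [smul_eq_mul]; ring
  linarith [hcomp ▸ hmono]

lemma lower_bound_right {f : ℝ → ℝ} (hf : ContDiff ℝ 2 f)
    {c₀ : ℝ} (huc : ∀ u : ℝ, c₀ ≤ deriv (deriv f) u)
    {a b : ℝ} (hab : a ≤ b) :
    c₀ * ((b - a) ^ 2 / 2) ≤ ∫ s in a..b, deriv (deriv f) s * (b - s) := by
  obtain ⟨hd1, hc2⟩ := deriv_facts hf
  have hmono : ∫ s in a..b, c₀ * (b - s) ≤ ∫ s in a..b, deriv (deriv f) s * (b - s) := by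
    apply intervalIntegral.integral_mono_on hab
      ((by fun_prop : Continuous fun s : ℝ => c₀ * (b - s)).intervalIntegrable a b)
      ((by fun_prop : Continuous fun s : ℝ => deriv (deriv f) s * (b - s)).intervalIntegrable a b)
    intro s hs
    exact mul_le_mul_of_nonneg_right (huc s) (by linarith [hs.2])
  have hcomp : ∫ s in a..b, c₀ * (b - s) = c₀ * ((b - a) ^ 2 / 2) := by
    rw [intervalIntegral.integral_const_mul,
      intervalIntegral.integral_sub (f := fun _ => b) (g := fun s => s)
        intervalIntegrable_const (continuous_id.intervalIntegrable a b),
      intervalIntegral.integral_const, integral_id]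
    simp only [smul_eq_mul]; ring
  linarith [hcomp ▸ hmono]

lemma upper_bound {f φ : ℝ → ℝ} {M : ℝ} (hf : ContDiff ℝ 2 f)
    (hconv : ∀ u : ℝ, 0 ≤ deriv (deriv f) u)
    (hφmeas : Measurable φ) (hφbdd : ∀ x : ℝ, |φ x| ≤ M)
    {c₀ m p K : ℝ} (hc₀ : 0 < c₀) (huc : ∀ u : ℝ, c₀ ≤ deriv (deriv f) u)
    (hp : 1 ≤ p) (hLp : Integrable (fun x : ℝ => |φ x - m| ^ p))
    {a b x t ε : ℝ} (hab : a ≤ b) (ht : 0 < t) (hε : 0 < ε)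
    (hKab : ∀ s ∈ Icc a b, deriv (deriv f) s ≤ K) :
    ∫ s in a..b, deriv (deriv f) s * |φ (x - t * deriv f s) - m|
      ≤ ε * (K * (b - a)) + ε ^ (1 - p) * ((∫ y : ℝ, |φ y - m| ^ p) / t) := by
  obtain ⟨hd1, hc2⟩ := deriv_facts hf
  have hp0 : (0 : ℝ) ≤ p := le_trans zero_le_one hp
  set g : ℝ → ℝ := fun s => |φ (x - t * deriv f s) - m| with hgdef
  have hgmeas : Measurable g :=
    ((hφmeas.comp ((continuous_const.sub (continuous_const.mul hd1.continuous)).measurable)).sub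
      measurable_const).abs
  have hgb : ∀ s, |g s| ≤ M + |m| := by
    intro s
    rw [abs_abs]
    calc |φ (x - t * deriv f s) - m| ≤ |φ (x - t * deriv f s)| + |m| := abs_sub _ _
      _ ≤ M + |m| := add_le_add_left (hφbdd _) _
  have hgp_meas : Measurable fun s => g s ^ p :=
    (Real.continuous_rpow_const hp0).measurable.comp hgmeas
  have hgpb : ∀ s, |g s ^ p| ≤ (M + |m|) ^ p := by
    intro s
    rw [abs_of_nonneg (Real.rpow_nonneg (abs_nonneg _) p)]
    exact Real.rpow_le_rpow (abs_nonneg _) ((le_abs_self _).trans (hgb s)) hp0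
  have I1 : IntervalIntegrable (fun s => deriv (deriv f) s * g s) volume a b :=
    ii_bdd hc2 hgmeas hgb a b
  have I2 : IntervalIntegrable (fun s => deriv (deriv f) s * g s ^ p) volume a b :=
    ii_bdd hc2 hgp_meas hgpb a b
  have I3 : IntervalIntegrable (deriv (deriv f)) volume a b := hc2.intervalIntegrable a b
  have I4 : IntervalIntegrable
      (fun s => ε * deriv (deriv f) s + ε ^ (1 - p) * (deriv (deriv f) s * g s ^ p))
      volume a b := (I3.const_mul ε).add (I2.const_mul _)
  -- Step A : pointwise bound and monotonicity
  have hA : ∫ s in a..b, deriv (deriv f) s * g s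
      ≤ ∫ s in a..b, (ε * deriv (deriv f) s + ε ^ (1 - p) * (deriv (deriv f) s * g s ^ p)) := by
    apply intervalIntegral.integral_mono_on hab I1 I4
    intro s hs
    have h1 : g s ≤ ε + ε ^ (1 - p) * g s ^ p := self_le_rpow_aux (abs_nonneg _) hε hp
    calc deriv (deriv f) s * g s
        ≤ deriv (deriv f) s * (ε + ε ^ (1 - p) * g s ^ p) :=
          mul_le_mul_of_nonneg_left h1 (hconv s)
      _ = ε * deriv (deriv f) s + ε ^ (1 - p) * (deriv (deriv f) s * g s ^ p) := by ring
  -- Step B : split the integral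
  have hB : ∫ s in a..b, (ε * deriv (deriv f) s + ε ^ (1 - p) * (deriv (deriv f) s * g s ^ p))
      = ε * (∫ s in a..b, deriv (deriv f) s)
        + ε ^ (1 - p) * ∫ s in a..b, deriv (deriv f) s * g s ^ p := by
    rw [intervalIntegral.integral_add (I3.const_mul ε) (I2.const_mul _),
      intervalIntegral.integral_const_mul, intervalIntegral.integral_const_mul]
  -- Step C : bound the f'' integral
  have hC : ∫ s in a..b, deriv (deriv f) s ≤ K * (b - a) := by
    have := intervalIntegral.integral_mono_on hab I3
      (intervalIntegrable_const (c := K)) hKab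
    rwa [intervalIntegral.integral_const, smul_eq_mul, mul_comm] at this
  -- Step D : change of variables
  have hD : ∫ s in a..b, deriv (deriv f) s * g s ^ p ≤ (∫ y : ℝ, |φ y - m| ^ p) / t := by
    set ψ : ℝ → ℝ := fun s => x - t * deriv f s with hψdef
    have hder : ∀ s ∈ Icc a b, HasDerivWithinAt ψ (-(t * deriv (deriv f) s)) (Icc a b) s := by
      intro s hs
      have h0 : HasDerivAt ψ (-(t * deriv (deriv f) s)) s := by
        exact ((hasDerivAt_const s x).sub ((hd1 s).hasDerivAt.const_mul t)).congr_deriv (by ring)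
      exact h0.hasDerivWithinAt
    have hsm : StrictMono (deriv f) := strictMono_of_deriv_pos fun s => lt_of_lt_of_le hc₀ (huc s)
    have hinj : InjOn ψ (Icc a b) := by
      intro u hu v hv huv
      have h1 : t * deriv f u = t * deriv f v := by
        have := sub_right_injective (congrArg (fun z => z) huv)
        simpa [hψdef, sub_right_inj] using huv
      exact hsm.injective (mul_left_cancel₀ ht.ne' h1)
    have him := integral_image_eq_integral_abs_deriv_smul measurableSet_Icc hder hinj
      (fun y => |φ y - m| ^ p)
    have hrw : ∫ s in Icc a b, |(-(t * deriv (deriv f) s))| • (|φ (ψ s) - m| ^ p)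
        = t * ∫ s in a..b, deriv (deriv f) s * g s ^ p := by
      have heq : EqOn (fun s => |(-(t * deriv (deriv f) s))| • (|φ (ψ s) - m| ^ p))
          (fun s => t * (deriv (deriv f) s * g s ^ p)) (Icc a b) := by
        intro s hs
        simp only [smul_eq_mul, abs_neg, hgdef]
        rw [abs_of_nonneg (mul_nonneg ht.le (hconv s)), mul_assoc]
      rw [setIntegral_congr_fun measurableSet_Icc heq, MeasureTheory.integral_const_mul,
        integral_Icc_eq_integral_Ioc, ← intervalIntegral.integral_of_le hab]
    have hle : ∫ y in ψ '' Icc a b, |φ y - m| ^ p ≤ ∫ y : ℝ, |φ y - m| ^ p :=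
      setIntegral_le_integral hLp (ae_of_all _ fun y => Real.rpow_nonneg (abs_nonneg _) p)
    have hkey : t * ∫ s in a..b, deriv (deriv f) s * g s ^ p ≤ ∫ y : ℝ, |φ y - m| ^ p := by
      rw [← hrw, ← him]; exact hle
    rw [le_div_iff₀ ht, mul_comm]
    exact hkey
  have hmul1 : ε * (∫ s in a..b, deriv (deriv f) s) ≤ ε * (K * (b - a)) :=
    mul_le_mul_of_nonneg_left hC hε.le
  have hmul2 : ε ^ (1 - p) * (∫ s in a..b, deriv (deriv f) s * g s ^ p)
      ≤ ε ^ (1 - p) * ((∫ y : ℝ, |φ y - m| ^ p) / t) :=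
    mul_le_mul_of_nonneg_left hD (Real.rpow_nonneg hε.le _)
  calc ∫ s in a..b, deriv (deriv f) s * g s ≤ _ := hA
    _ = _ := hB
    _ ≤ _ := add_le_add hmul1 hmul2

lemma arith_final {c₀ K Ip p t δ : ℝ} (hc₀ : 0 < c₀) (hK : 0 < K) (hIp : 0 ≤ Ip)
    (hp : 1 ≤ p) (ht : 0 < t) (hδ : 0 ≤ δ)
    (h : ∀ ε : ℝ, 0 < ε → c₀ * (δ ^ 2 / 2) ≤ ε * (K * δ) + ε ^ (1 - p) * (Ip / t)) :
    δ ≤ ((4 / c₀) * ((c₀ / (4 * K)) ^ (1 - p) * Ip) + 1) ^ (1 / (p + 1))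
        * t ^ (-(1 / (p + 1))) := by
  set D : ℝ := (c₀ / (4 * K)) ^ (1 - p) with hD
  have hDpos : 0 < D := Real.rpow_pos_of_pos (div_pos hc₀ (by linarith)) _
  set B : ℝ := (4 / c₀) * (D * Ip) + 1 with hB
  have hBnn : 0 ≤ (4 / c₀) * (D * Ip) := by positivity
  have hB1 : 1 ≤ B := by simp [hB]; linarith
  have hBpos : 0 < B := by linarith
  have hp1 : 0 < p + 1 := by linarith
  have hrpos : 0 < 1 / (p + 1) := by positivity
  rcases eq_or_lt_of_le hδ with h0 | hδpos
  · rw [← h0]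
    positivity
  · -- use ε = c₀ * δ / (4 * K)
    have hεpos : 0 < c₀ * δ / (4 * K) := by positivity
    have h1 := h _ hεpos
    have h2 : c₀ * δ / (4 * K) * (K * δ) = c₀ * δ ^ 2 / 4 := by
      field_simp
    have h3 : (c₀ * δ / (4 * K)) ^ (1 - p) = D * δ ^ (1 - p) := by
      rw [hD, ← Real.mul_rpow (by positivity) hδ]
      congr 1
      field_simp
    rw [h2, h3] at h1
    -- multiply by δ ^ (p - 1)
    have h4 : c₀ * δ ^ 2 / 4 * δ ^ (p - 1) ≤ D * δ ^ (1 - p) * (Ip / t) * δ ^ (p - 1) := by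
      have : c₀ * (δ ^ 2 / 2) - c₀ * δ ^ 2 / 4 = c₀ * δ ^ 2 / 4 := by ring
      nlinarith [Real.rpow_pos_of_pos hδpos (p - 1), h1]
    have h5 : δ ^ (1 - p) * δ ^ (p - 1) = 1 := by
      rw [← Real.rpow_add hδpos]; norm_num
    have h6 : (δ ^ 2) * δ ^ (p - 1) = δ ^ (p + 1) := by
      rw [← Real.rpow_two, ← Real.rpow_add hδpos]
      congr 1
      ring
    have h7 : c₀ / 4 * δ ^ (p + 1) ≤ D * Ip / t := by
      calc c₀ / 4 * δ ^ (p + 1) = c₀ * δ ^ 2 / 4 * δ ^ (p - 1) := by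
            rw [← h6]; ring
        _ ≤ D * δ ^ (1 - p) * (Ip / t) * δ ^ (p - 1) := h4
        _ = D * Ip / t * (δ ^ (1 - p) * δ ^ (p - 1)) := by ring
        _ = D * Ip / t := by rw [h5]; ring
    have h8 : δ ^ (p + 1) ≤ B / t := by
      have e0 : δ ^ (p + 1) = 4 / c₀ * (c₀ / 4 * δ ^ (p + 1)) := by
        field_simp
      have e1 : δ ^ (p + 1) ≤ 4 / c₀ * (D * Ip / t) := by
        rw [e0]
        exact mul_le_mul_of_nonneg_left h7 (by positivity)
      have e2 : 4 / c₀ * (D * Ip / t) ≤ B / t := by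
        have e3 : 4 / c₀ * (D * Ip / t) = (4 / c₀ * (D * Ip)) / t := by ring
        rw [e3, hB]
        gcongr
        linarith
      exact e1.trans e2
    have h9 : δ ≤ (B / t) ^ (1 / (p + 1)) := by
      have e2 : δ = (δ ^ (p + 1)) ^ (1 / (p + 1)) := by
        rw [← Real.rpow_mul hδ, mul_one_div_cancel hp1.ne', Real.rpow_one]
      rw [e2]
      exact Real.rpow_le_rpow (Real.rpow_nonneg hδ _) h8 hrpos.le
    calc δ ≤ (B / t) ^ (1 / (p + 1)) := h9
      _ = B ^ (1 / (p + 1)) * t ^ (-(1 / (p + 1))) := by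
        rw [Real.div_rpow hBpos.le ht.le, div_eq_mul_inv, ← Real.rpow_neg ht.le]

/-- uniform sup-norm decay for uniformly convex flux and `Lᵖ`
perturbations of a constant state. -/
theorem stmt19_uniform_decay
    (f φ : ℝ → ℝ) (M : ℝ)
    (hf : ContDiff ℝ 2 f)
    (hconv : ∀ u : ℝ, 0 ≤ deriv (deriv f) u)
    (hdeg : volume {u : ℝ | deriv (deriv f) u = 0} = 0)
    (hφmeas : Measurable φ)
    (hφbdd : ∀ x : ℝ, |φ x| ≤ M)
    (c₀ m p : ℝ) (hc₀ : 0 < c₀)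
    (huc : ∀ u : ℝ, c₀ ≤ deriv (deriv f) u)
    (hp : 1 ≤ p)
    (hLp : Integrable (fun x : ℝ => |φ x - m| ^ p)) :
    ∃ C : ℝ, 0 < C ∧ ∀ x t : ℝ, 0 < t →
      (∀ w ∈ maxSet f φ x t, |w - m| ≤ C * t ^ (-(1 / (p + 1)))) ∧
      |uPlus f φ x t - m| ≤ C * t ^ (-(1 / (p + 1))) ∧
      |uMinus f φ x t - m| ≤ C * t ^ (-(1 / (p + 1))) := by
  obtain ⟨hd1, hc2⟩ := deriv_facts hf
  have hM0 : 0 ≤ M := (abs_nonneg _).trans (hφbdd 0)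
  have hp0 : (0:ℝ) ≤ p := le_trans zero_le_one hp
  -- |m| ≤ M
  have hmM : |m| ≤ M := by
    by_contra hcon
    push_neg at hcon
    have hpos : (0:ℝ) < (|m| - M) ^ p := Real.rpow_pos_of_pos (by linarith) p
    have hle : ∀ y : ℝ, ‖(fun _ : ℝ => (|m| - M) ^ p) y‖ ≤ |φ y - m| ^ p := by
      intro y
      rw [Real.norm_eq_abs, abs_of_nonneg hpos.le]
      apply Real.rpow_le_rpow (by linarith) ?_ hp0
      have h1 := hφbdd y
      have h2 : |m| - |φ y| ≤ |φ y - m| := by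
        rw [abs_sub_comm]
        exact abs_sub_abs_le_abs_sub m (φ y)
      linarith
    have hint : Integrable (fun _ : ℝ => (|m| - M) ^ p) volume :=
      hLp.mono' aestronglyMeasurable_const (ae_of_all _ hle)
    rcases integrable_const_iff.mp hint with h0 | hfin
    · exact hpos.ne' h0
    · exact absurd hfin.measure_univ_lt_top (by simp [Real.volume_univ])
  -- bound on f''
  obtain ⟨K0, hK0⟩ := isCompact_Icc.exists_bound_of_continuousOn
    (s := Icc (-M) M) hc2.continuousOn
  set K : ℝ := max K0 1 with hKdef
  have hKpos : (0:ℝ) < K := lt_of_lt_of_le one_pos (le_max_right _ _)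
  have hK : ∀ s ∈ Icc (-M) M, deriv (deriv f) s ≤ K := by
    intro s hs
    have h1 := hK0 s hs
    rw [Real.norm_eq_abs] at h1
    exact (le_abs_self _).trans (h1.trans (le_max_left _ _))
  have hIpnn : 0 ≤ ∫ y : ℝ, |φ y - m| ^ p :=
    integral_nonneg fun y => Real.rpow_nonneg (abs_nonneg _) _
  refine ⟨((4 / c₀) * ((c₀ / (4 * K)) ^ (1 - p) * ∫ y : ℝ, |φ y - m| ^ p) + 1) ^ (1 / (p + 1)),
    ?_, ?_⟩
  · apply Real.rpow_pos_of_pos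
    have : (0:ℝ) < (c₀ / (4 * K)) ^ (1 - p) := Real.rpow_pos_of_pos (by positivity) _
    nlinarith [mul_nonneg (mul_nonneg (by positivity : (0:ℝ) ≤ 4 / c₀) this.le) hIpnn]
  intro x t ht
  have hsub := maxSet_subset hf hconv hφmeas hφbdd hc₀ huc ht (x := x)
  have key : ∀ w ∈ maxSet f φ x t, |w - m| ≤
      ((4 / c₀) * ((c₀ / (4 * K)) ^ (1 - p) * ∫ y : ℝ, |φ y - m| ^ p) + 1) ^ (1 / (p + 1))
        * t ^ (-(1 / (p + 1))) := by
    intro w hw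
    obtain ⟨hwl, hwr⟩ := hsub hw
    obtain ⟨hml, hmr⟩ := abs_le.mp hmM
    have hEm := hw m
    have hdiff := eFun_diff hf hφmeas hφbdd x t m w
    have hI0 : 0 ≤ ∫ s in m..w, deriv (deriv f) s * (φ (x - t * deriv f s) - s) := by
      by_contra hneg
      push_neg at hneg
      nlinarith [mul_pos ht (neg_pos.mpr hneg)]
    have hφc : Measurable fun s => φ (x - t * deriv f s) :=
      hφmeas.comp ((continuous_const.sub (continuous_const.mul hd1.continuous)).measurable)
    have II1 : ∀ a b : ℝ, IntervalIntegrable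
        (fun s => deriv (deriv f) s * (φ (x - t * deriv f s) - m)) volume a b := by
      intro a b
      apply ii_bdd hc2 (hφc.sub measurable_const) (C := M + |m|) ?_ a b
      intro y
      exact (abs_sub _ _).trans (add_le_add_left (hφbdd _) _)
    have II2 : ∀ a b : ℝ, IntervalIntegrable
        (fun s => deriv (deriv f) s * |φ (x - t * deriv f s) - m|) volume a b := by
      intro a b
      apply ii_bdd hc2 (hφc.sub measurable_const).abs (C := M + |m|) ?_ a b
      intro y
      rw [abs_abs]
      exact (abs_sub _ _).trans (add_le_add_left (hφbdd _) _)
    rcases le_total m w with hmw | hwm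
    · -- case m ≤ w
      have hsplit : (fun s => deriv (deriv f) s * (φ (x - t * deriv f s) - s))
          = fun s => deriv (deriv f) s * (φ (x - t * deriv f s) - m)
              - deriv (deriv f) s * (s - m) := by
        funext s; ring
      rw [hsplit, intervalIntegral.integral_sub (II1 m w)
        ((by fun_prop : Continuous fun s : ℝ =>
          deriv (deriv f) s * (s - m)).intervalIntegrable m w)] at hI0
      have h1 : ∫ s in m..w, deriv (deriv f) s * (φ (x - t * deriv f s) - m)
          ≤ ∫ s in m..w, deriv (deriv f) s * |φ (x - t * deriv f s) - m| := by
        apply intervalIntegral.integral_mono_on hmw (II1 m w) (II2 m w)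
        intro s hs
        exact mul_le_mul_of_nonneg_left (le_abs_self _) (hconv s)
      have hLB := lower_bound_left hf huc hmw
      have harg : ∀ ε : ℝ, 0 < ε → c₀ * ((w - m) ^ 2 / 2)
          ≤ ε * (K * (w - m)) + ε ^ (1 - p) * ((∫ y : ℝ, |φ y - m| ^ p) / t) := by
        intro ε hε
        have hUB := upper_bound (x := x) hf hconv hφmeas hφbdd hc₀ huc hp hLp hmw ht hε
          (fun s hs => hK s ⟨by linarith [hs.1], by linarith [hs.2]⟩)
        linarith
      have hfin := arith_final hc₀ hKpos hIpnn hp ht (by linarith : (0:ℝ) ≤ w - m) harg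
      rwa [abs_of_nonneg (by linarith : (0:ℝ) ≤ w - m)]
    · -- case w ≤ m
      have hIneg : ∫ s in w..m, deriv (deriv f) s * (φ (x - t * deriv f s) - s) ≤ 0 := by
        rw [intervalIntegral.integral_symm] at hI0
        linarith
      have hsplit : (fun s => deriv (deriv f) s * (φ (x - t * deriv f s) - s))
          = fun s => deriv (deriv f) s * (φ (x - t * deriv f s) - m)
              + deriv (deriv f) s * (m - s) := by
        funext s; ring
      rw [hsplit, intervalIntegral.integral_add (II1 w m)
        ((by fun_prop : Continuous fun s : ℝ =>
          deriv (deriv f) s * (m - s)).intervalIntegrable w m)] at hIneg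
      have h1 : ∫ s in w..m, -(deriv (deriv f) s * (φ (x - t * deriv f s) - m))
          ≤ ∫ s in w..m, deriv (deriv f) s * |φ (x - t * deriv f s) - m| := by
        apply intervalIntegral.integral_mono_on hwm ((II1 w m).neg) (II2 w m)
        intro s hs
        calc -(deriv (deriv f) s * (φ (x - t * deriv f s) - m))
            = deriv (deriv f) s * (-(φ (x - t * deriv f s) - m)) := by ring
          _ ≤ deriv (deriv f) s * |φ (x - t * deriv f s) - m| :=
            mul_le_mul_of_nonneg_left (neg_le_abs _) (hconv s)
      rw [intervalIntegral.integral_neg] at h1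
      have hLB := lower_bound_right hf huc hwm
      have harg : ∀ ε : ℝ, 0 < ε → c₀ * ((m - w) ^ 2 / 2)
          ≤ ε * (K * (m - w)) + ε ^ (1 - p) * ((∫ y : ℝ, |φ y - m| ^ p) / t) := by
        intro ε hε
        have hUB := upper_bound (x := x) hf hconv hφmeas hφbdd hc₀ huc hp hLp hwm ht hε
          (fun s hs => hK s ⟨by linarith [hs.1], by linarith [hs.2]⟩)
        linarith
      have hfin := arith_final hc₀ hKpos hIpnn hp ht (by linarith : (0:ℝ) ≤ m - w) harg
      rw [abs_sub_comm, abs_of_nonneg (by linarith : (0:ℝ) ≤ m - w)]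
      exact hfin
  refine ⟨key, ?_, ?_⟩
  · exact key _ ((maxSet_isClosed hf hφmeas hφbdd x t).csInf_mem
      (maxSet_nonempty hf hconv hφmeas hφbdd hc₀ huc ht)
      (BddBelow.mono hsub bddBelow_Icc))
  · exact key _ ((maxSet_isClosed hf hφmeas hφbdd x t).csSup_mem
      (maxSet_nonempty hf hconv hφmeas hφbdd hc₀ huc ht)
      (BddAbove.mono hsub bddAbove_Icc))
end
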